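/- arXiv:0811.3848 — 4 statements merged into one kernel-verified Lean document; each statement's English description precedes it below -/
import Mathlib

section
/- Let 𝔦 be a Calkin space. If α ∈ 𝔦 and β ∈ c₀ is eventually zero (β ∈ c₀₀), then α⊗β ∈ 𝔦. -/
open scoped BigOperators

noncomputable section

/-- The space of complex null sequences `c₀`. -/
def c0 : Set (ℕ → ℂ) := {α | Filter.Tendsto α Filter.atTop (nhds 0)}

/-- `rearrSum α n` is the supremum of `∑_{i ∈ F} |α i|` over finite sets `F ⊆ ℕ` with
`|F| = n`; for a null sequence it equals `α*₁ + ⋯ + α*ₙ` where `α*` is the decreasing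
rearrangement of `(|α_n|)`. -/
def rearrSum (α : ℕ → ℂ) (n : ℕ) : ℝ :=
  sSup ((fun F : Finset ℕ => ∑ i ∈ F, ‖α i‖) '' {F | F.card = n})

/-- The decreasing rearrangement of a null sequence, 0-indexed:
`rearr α n = α*_{n+1}`. -/
def rearr (α : ℕ → ℂ) (n : ℕ) : ℝ := rearrSum α (n + 1) - rearrSum α n

/-- A Calkin space: a linear subspace of `c₀` containing every null sequence whose
decreasing rearrangement is dominated termwise by that of one of its members. -/
def IsCalkinSpace (I : Set (ℕ → ℂ)) : Prop :=
  I ⊆ c0 ∧ (0 : ℕ → ℂ) ∈ I ∧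
  (∀ α ∈ I, ∀ β ∈ I, α + β ∈ I) ∧
  (∀ (c : ℂ), ∀ α ∈ I, c • α ∈ I) ∧
  (∀ α ∈ I, ∀ β ∈ c0, (∀ n, rearr β n ≤ rearr α n) → β ∈ I)

/-- `tensorSum α β n` is the supremum of `∑_{(i,j) ∈ F} |α i| |β j|` over finite
`F ⊆ ℕ × ℕ` with `|F| = n`; it equals `(α⊗β)₁ + ⋯ + (α⊗β)ₙ`. -/
def tensorSum (α β : ℕ → ℂ) (n : ℕ) : ℝ :=
  sSup ((fun F : Finset (ℕ × ℕ) => ∑ p ∈ F, ‖α p.1‖ * ‖β p.2‖) '' {F | F.card = n})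

/-- The tensor sequence `α⊗β`: the decreasing rearrangement of the double sequence
`(|α_m β_n|)_{m,n}`, 0-indexed: `tensorSeq α β n = (α⊗β)_{n+1}`. -/
def tensorSeq (α β : ℕ → ℂ) (n : ℕ) : ℝ := tensorSum α β (n + 1) - tensorSum α β n

/-- Embedding of real sequences into complex sequences. -/
def toC (f : ℕ → ℝ) : ℕ → ℂ := fun n => (f n : ℂ)

/-- The tensor product `𝔦⊗𝔧` of two Calkin spaces: the smallest Calkin space
containing `α⊗β` for all `α ∈ 𝔦`, `β ∈ 𝔧`. -/
def calkinTensor (I J : Set (ℕ → ℂ)) : Set (ℕ → ℂ) :=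
  ⋂₀ {K | IsCalkinSpace K ∧ ∀ α ∈ I, ∀ β ∈ J, toC (tensorSeq α β) ∈ K}

/-- A Calkin space `𝔦` is stable if `𝔦⊗𝔦 = 𝔦`. -/
def IsStableCalkin (I : Set (ℕ → ℂ)) : Prop := IsCalkinSpace I ∧ calkinTensor I I = I

/-- The principal Calkin space `⟨α⟩` generated by `α`: the smallest Calkin space
containing `α`. -/
def principalCalkin (α : ℕ → ℂ) : Set (ℕ → ℂ) := ⋂₀ {K | IsCalkinSpace K ∧ α ∈ K}

/-- `Kw ω α n = #{m : ω^{n+1} < α m ≤ ω^n}` (the sequence `α` being 0-indexed). -/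
def Kw (ω : ℝ) (α : ℕ → ℝ) (n : ℕ) : ℕ :=
  Set.ncard {m : ℕ | ω ^ (n + 1) < α m ∧ α m ≤ ω ^ n}

/-- `K̃ₙ = Σ_{i=0}^n Kᵢ`. -/
def Ktil (ω : ℝ) (α : ℕ → ℝ) (n : ℕ) : ℕ := ∑ i ∈ Finset.range (n + 1), Kw ω α i

/-- `Mₙ = Σ_{i+j=n} Kᵢ Kⱼ`. -/
def Mw (ω : ℝ) (α : ℕ → ℝ) (n : ℕ) : ℕ :=
  ∑ i ∈ Finset.range (n + 1), Kw ω α i * Kw ω α (n - i)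

/-- `M̃ₙ = Σ_{i=0}^n Mᵢ`. -/
def Mtil (ω : ℝ) (α : ℕ → ℝ) (n : ℕ) : ℕ := ∑ i ∈ Finset.range (n + 1), Mw ω α i


section CalkinAux

open Filter Finset

variable {ι κ : Type*}

/-- Sup of sums of `f` over finsets of cardinality `n`. -/
def cardSup (f : ι → ℝ) (n : ℕ) : ℝ :=
  sSup ((fun F : Finset ι => ∑ i ∈ F, f i) '' {F | F.card = n})

lemma rearrSum_eq_cardSup (α : ℕ → ℂ) (n : ℕ) :
    rearrSum α n = cardSup (fun i => ‖α i‖) n := rfl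

lemma tensorSum_eq_cardSup (α β : ℕ → ℂ) (n : ℕ) :
    tensorSum α β n = cardSup (fun p : ℕ × ℕ => ‖α p.1‖ * ‖β p.2‖) n := rfl

lemma bddAbove_cardSupSet (f : ι → ℝ) {C : ℝ} (hC : ∀ i, f i ≤ C) (n : ℕ) :
    BddAbove ((fun F : Finset ι => ∑ i ∈ F, f i) '' {F | F.card = n}) := by
  refine ⟨n * C, ?_⟩
  rintro x ⟨F, hF, rfl⟩
  calc ∑ i ∈ F, f i ≤ ∑ _i ∈ F, C := Finset.sum_le_sum fun i _ => hC i
    _ = F.card * C := by simp [Finset.sum_const, nsmul_eq_mul]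
    _ = n * C := by rw [hF]

lemma le_cardSup (f : ι → ℝ) {C : ℝ} (hC : ∀ i, f i ≤ C) {n : ℕ} {F : Finset ι}
    (hF : F.card = n) : ∑ i ∈ F, f i ≤ cardSup f n :=
  le_csSup (bddAbove_cardSupSet f hC n) ⟨F, hF, rfl⟩

lemma cardSup_le [Infinite ι] (f : ι → ℝ) {n : ℕ} {x : ℝ}
    (h : ∀ F : Finset ι, F.card = n → ∑ i ∈ F, f i ≤ x) : cardSup f n ≤ x := by
  obtain ⟨F0, hF0⟩ := Infinite.exists_subset_card_eq ι n
  exact csSup_le ⟨_, ⟨F0, hF0, rfl⟩⟩ (by rintro y ⟨F, hF, rfl⟩; exact h F hF)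

lemma cardSup_zero (f : ι → ℝ) : cardSup f 0 = 0 := by
  have h : ((fun F : Finset ι => ∑ i ∈ F, f i) '' {F | F.card = 0}) = {0} := by
    ext x
    constructor
    · rintro ⟨F, hF, rfl⟩
      have : F = ∅ := Finset.card_eq_zero.mp hF
      simp [this]
    · intro hx
      rw [Set.mem_singleton_iff] at hx
      exact ⟨∅, by simp [hx.symm]⟩
  rw [cardSup, h, csSup_singleton]

lemma cardSup_mono [Infinite ι] (f : ι → ℝ) (hf : ∀ i, 0 ≤ f i) {C : ℝ} (hC : ∀ i, f i ≤ C)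
    (n : ℕ) : cardSup f n ≤ cardSup f (n + 1) := by
  refine cardSup_le f fun F hF => ?_
  obtain ⟨G, hFG, hG⟩ := Infinite.exists_superset_card_eq F (n + 1) (by omega)
  calc ∑ i ∈ F, f i ≤ ∑ i ∈ G, f i :=
        Finset.sum_le_sum_of_subset_of_nonneg hFG fun i _ _ => hf i
    _ ≤ cardSup f (n + 1) := le_cardSup f hC hG

lemma cardSup_concave [Infinite ι] [DecidableEq ι] (f : ι → ℝ) {C : ℝ} (hC : ∀ i, f i ≤ C)
    (k : ℕ) : cardSup f (k + 2) + cardSup f k ≤ cardSup f (k + 1) + cardSup f (k + 1) := by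
  have h2 : cardSup f (k + 2) ≤ cardSup f (k + 1) + cardSup f (k + 1) - cardSup f k := by
    refine cardSup_le f fun F hF => ?_
    have h3 : cardSup f k ≤ cardSup f (k + 1) + cardSup f (k + 1) - ∑ i ∈ F, f i := by
      refine cardSup_le f fun G hG => ?_
      obtain ⟨x, hxF, hxG⟩ : ∃ x ∈ F, x ∉ G := by
        by_contra h
        push_neg at h
        have := Finset.card_le_card (fun y hy => h y hy)
        omega
      have e1 : ∑ i ∈ F.erase x, f i + f x = ∑ i ∈ F, f i := Finset.sum_erase_add F f hxF
      have e2 : ∑ i ∈ insert x G, f i = f x + ∑ i ∈ G, f i := Finset.sum_insert hxG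
      have c1 : (F.erase x).card = k + 1 := by
        rw [Finset.card_erase_of_mem hxF, hF]
        omega
      have c2 : (insert x G).card = k + 1 := by
        rw [Finset.card_insert_of_notMem hxG, hG]
      have l1 := le_cardSup f hC c1
      have l2 := le_cardSup f hC c2
      linarith
    linarith
  linarith

lemma cardSup_congr [Infinite ι] [Infinite κ] (f : ι → ℝ) (g : κ → ℝ)
    (hf : ∀ i, 0 ≤ f i) {C : ℝ} (hgC : ∀ k, g k ≤ C)
    (e : ι → κ) (he : Function.Injective e) (hge : ∀ i, g (e i) = f i)
    (hg0 : ∀ k, k ∉ Set.range e → g k = 0) (n : ℕ) : cardSup f n = cardSup g n := by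
  classical
  have hfC : ∀ i, f i ≤ C := fun i => (hge i) ▸ hgC (e i)
  apply le_antisymm
  · refine cardSup_le f fun F hF => ?_
    have hs : ∑ i ∈ F, f i = ∑ k ∈ F.image e, g k := by
      rw [Finset.sum_image (fun a _ b _ h => he h)]
      exact (Finset.sum_congr rfl fun i _ => (hge i).symm)
    rw [hs]
    exact le_cardSup g hgC (by rw [Finset.card_image_of_injective F he, hF])
  · refine cardSup_le g fun G hG => ?_
    set F0 := G.preimage e he.injOn with hF0
    have hsum : ∑ i ∈ F0, f i = ∑ k ∈ G, g k := by
      rw [← Finset.sum_preimage e G he.injOn g (fun k _ hk => hg0 k hk)]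
      exact Finset.sum_congr rfl fun i _ => (hge i).symm
    have hcard : F0.card ≤ n := by
      have h1 : (F0.image e).card = F0.card := Finset.card_image_of_injective F0 he
      have h2 : F0.image e ⊆ G := by
        intro k hk
        obtain ⟨i, hi, rfl⟩ := Finset.mem_image.mp hk
        exact Finset.mem_preimage.mp hi
      have := Finset.card_le_card h2
      omega
    obtain ⟨F, hFF, hFc⟩ := Infinite.exists_superset_card_eq F0 n hcard
    calc ∑ k ∈ G, g k = ∑ i ∈ F0, f i := hsum.symm
      _ ≤ ∑ i ∈ F, f i := Finset.sum_le_sum_of_subset_of_nonneg hFF fun i _ _ => hf i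
      _ ≤ cardSup f n := le_cardSup f hfC hFc

lemma sum_le_sum_range_of_antitone {t : ℕ → ℝ} (ht : Antitone t)
    (ht0 : ∀ i, 0 ≤ t i) (F : Finset ℕ) :
    ∑ i ∈ F, t i ≤ ∑ i ∈ Finset.range F.card, t i := by
  induction F using Finset.induction_on_max with
  | empty => simp
  | insert a s ha ih =>
    have hnotmem : a ∉ s := fun h => lt_irrefl a (ha a h)
    have hsub : s ⊆ Finset.range a := fun x hx => Finset.mem_range.mpr (ha x hx)
    have hcard : s.card ≤ a := by
      have := Finset.card_le_card hsub
      simpa using this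
    rw [Finset.sum_insert hnotmem, Finset.card_insert_of_notMem hnotmem,
      Finset.sum_range_succ]
    have h1 := ht hcard
    linarith

lemma exists_c0_bound (α : ℕ → ℂ) (hα : Filter.Tendsto α Filter.atTop (nhds 0)) :
    ∃ C : ℝ, 0 ≤ C ∧ ∀ n, ‖α n‖ ≤ C := by
  have h1 : Filter.Tendsto (fun n => ‖α n‖) Filter.atTop (nhds 0) := by
    simpa using hα.norm
  obtain ⟨M, hM⟩ := Filter.eventually_atTop.mp
    (h1.eventually_le_const (by norm_num : (0 : ℝ) < 1))
  have hsnn : 0 ≤ ∑ i ∈ Finset.range M, ‖α i‖ :=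
    Finset.sum_nonneg fun i _ => norm_nonneg _
  refine ⟨1 + ∑ i ∈ Finset.range M, ‖α i‖, by linarith, fun n => ?_⟩
  by_cases h : M ≤ n
  · have := hM n h
    linarith
  · push_neg at h
    have := Finset.single_le_sum (f := fun i => ‖α i‖) (fun i _ => norm_nonneg _)
      (Finset.mem_range.mpr h)
    linarith

end CalkinAux

/-- Let `𝔦` be a Calkin space.  If `α ∈ 𝔦` and `β ∈ c₀` is eventually
zero, then `α⊗β ∈ 𝔦`. -/
theorem tensor_mem_of_eventually_zero (I : Set (ℕ → ℂ)) (hI : IsCalkinSpace I)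
    (α β : ℕ → ℂ) (hα : α ∈ I) (hβ : β ∈ c0)
    (hβ00 : ∃ N : ℕ, ∀ n, N ≤ n → β n = 0) :
    toC (tensorSeq α β) ∈ I := by
  classical
  obtain ⟨N₀, hN₀⟩ := hβ00
  set N : ℕ := N₀ + 1 with hN
  have hNpos : 0 < N := Nat.succ_pos _
  have hβN : ∀ j, N ≤ j → β j = 0 := fun j hj => hN₀ j (by omega)
  have hαc0 : Filter.Tendsto α Filter.atTop (nhds 0) := hI.1 hα
  have hβc0 : Filter.Tendsto β Filter.atTop (nhds 0) := hβ
  obtain ⟨Cα, hCα0, hCα⟩ := exists_c0_bound α hαc0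
  obtain ⟨Cβ, hCβ0, hCβ⟩ := exists_c0_bound β hβc0
  set γ : ℕ → ℂ := fun m => α (m / N) * β (m % N) with hγdef
  have hγC : ∀ m, ‖γ m‖ ≤ Cα * Cβ := by
    intro m
    calc ‖γ m‖ = ‖α (m / N)‖ * ‖β (m % N)‖ := norm_mul _ _
      _ ≤ Cα * Cβ := mul_le_mul (hCα _) (hCβ _) (norm_nonneg _) hCα0
  have htC : ∀ p : ℕ × ℕ, ‖α p.1‖ * ‖β p.2‖ ≤ Cα * Cβ := fun p =>
    mul_le_mul (hCα _) (hCβ _) (norm_nonneg _) hCα0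
  -- (a) : rearrSum γ = tensorSum α β
  have ha : ∀ n, rearrSum γ n = tensorSum α β n := by
    intro n
    rw [rearrSum_eq_cardSup, tensorSum_eq_cardSup]
    refine cardSup_congr _ _ (fun m => norm_nonneg _) htC
      (fun m => (m / N, m % N)) ?_ ?_ ?_ n
    · intro m₁ m₂ h
      have h1 : m₁ / N = m₂ / N := congrArg Prod.fst h
      have h2 : m₁ % N = m₂ % N := congrArg Prod.snd h
      calc m₁ = N * (m₁ / N) + m₁ % N := (Nat.div_add_mod _ _).symm
        _ = N * (m₂ / N) + m₂ % N := by rw [h1, h2]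
        _ = m₂ := Nat.div_add_mod _ _
    · intro m
      exact (norm_mul _ _).symm
    · rintro ⟨i, j⟩ hp
      have hj : N ≤ j := by
        by_contra hlt
        push_neg at hlt
        refine hp ⟨N * i + j, ?_⟩
        have hd : (N * i + j) / N = i := by
          rw [Nat.mul_add_div hNpos, Nat.div_eq_of_lt hlt, Nat.add_zero]
        have hm : (N * i + j) % N = j := by
          rw [Nat.mul_add_mod, Nat.mod_eq_of_lt hlt]
        simp [hd, hm]
      simp [hβN j hj]
  -- the pieces δ j
  set δ : ℕ → ℕ → ℂ := fun j m => if m % N = j then α (m / N) * β j else 0 with hδdef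
  have hδC : ∀ j m, ‖δ j m‖ ≤ Cα * Cβ := by
    intro j m
    simp only [hδdef]
    split
    · calc ‖α (m / N) * β j‖ = ‖α (m / N)‖ * ‖β j‖ := norm_mul _ _
        _ ≤ Cα * Cβ := mul_le_mul (hCα _) (hCβ _) (norm_nonneg _) hCα0
    · simp only [norm_zero]
      exact mul_nonneg hCα0 hCβ0
  -- (c) : rearrSum (β j • α) = rearrSum (δ j)
  have hc : ∀ j, j < N → ∀ n, rearrSum (β j • α) n = rearrSum (δ j) n := by
    intro j hj n
    rw [rearrSum_eq_cardSup, rearrSum_eq_cardSup]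
    refine cardSup_congr _ _ (fun m => norm_nonneg _) (fun m => hδC j m)
      (fun m => N * m + j) ?_ ?_ ?_ n
    · intro a b h
      have h' : N * a = N * b := Nat.add_right_cancel h
      exact Nat.eq_of_mul_eq_mul_left hNpos h'
    · intro m
      have h1 : (N * m + j) % N = j := by
        rw [Nat.mul_add_mod, Nat.mod_eq_of_lt hj]
      have h2 : (N * m + j) / N = m := by
        rw [Nat.mul_add_div hNpos, Nat.div_eq_of_lt hj, Nat.add_zero]
      simp only [hδdef, h1, h2, eq_self_iff_true, if_true, Pi.smul_apply, smul_eq_mul,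
        norm_mul]
      ring
    · intro k hk
      have hne : k % N ≠ j := by
        intro h
        refine hk ⟨k / N, ?_⟩
        rw [← h]
        exact Nat.div_add_mod k N
      simp [hδdef, hne]
  -- δ j ∈ c0
  have hdiv : Filter.Tendsto (fun m : ℕ => m / N) Filter.atTop Filter.atTop := by
    apply Filter.tendsto_atTop_atTop.mpr
    intro b
    exact ⟨N * b, fun m hm => (Nat.le_div_iff_mul_le hNpos).mpr (by rw [mul_comm]; exact hm)⟩
  have hnormdiv : Filter.Tendsto (fun m : ℕ => ‖α (m / N)‖) Filter.atTop (nhds 0) := by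
    have h2 := (hαc0.norm).comp hdiv
    simpa [Function.comp_def] using h2
  have hδc0 : ∀ j, δ j ∈ c0 := by
    intro j
    have : Filter.Tendsto (δ j) Filter.atTop (nhds 0) := by
      rw [tendsto_zero_iff_norm_tendsto_zero]
      refine squeeze_zero (fun m => norm_nonneg _) (fun m => ?_)
        (g := fun m => Cβ * ‖α (m / N)‖) ?_
      · simp only [hδdef]
        split
        · rw [norm_mul, mul_comm]
          exact mul_le_mul_of_nonneg_right (hCβ j) (norm_nonneg _)
        · simp only [norm_zero]
          exact mul_nonneg hCβ0 (norm_nonneg (α (m / N)))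
      · simpa using hnormdiv.const_mul Cβ
    exact this
  -- δ j ∈ I
  have hδI : ∀ j, j < N → δ j ∈ I := by
    intro j hj
    have hsm : β j • α ∈ I := hI.2.2.2.1 (β j) α hα
    refine hI.2.2.2.2 (β j • α) hsm (δ j) (hδc0 j) (fun n => le_of_eq ?_)
    show rearrSum (δ j) (n + 1) - rearrSum (δ j) n
        = rearrSum (β j • α) (n + 1) - rearrSum (β j • α) n
    rw [hc j hj n, hc j hj (n + 1)]
  -- γ = ∑ δ j
  have hγsum : γ = ∑ j ∈ Finset.range N, δ j := by
    funext m
    rw [Finset.sum_apply]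
    simp only [hδdef]
    rw [Finset.sum_ite_eq (Finset.range N) (m % N) (fun j => α (m / N) * β j)]
    simp [hγdef, Nat.mod_lt m hNpos]
  have hγI : γ ∈ I := by
    rw [hγsum]
    exact Finset.sum_induction δ (· ∈ I) (fun a b hia hib => hI.2.2.1 a hia b hib) hI.2.1
      (fun j hj => hδI j (Finset.mem_range.mp hj))
  -- rearr γ properties
  have hγnn : ∀ m, (0 : ℝ) ≤ ‖γ m‖ := fun m => norm_nonneg _
  have hmono : ∀ n, rearrSum γ n ≤ rearrSum γ (n + 1) := fun n => by
    rw [rearrSum_eq_cardSup, rearrSum_eq_cardSup]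
    exact cardSup_mono _ hγnn hγC n
  have hrnn : ∀ n, 0 ≤ rearr γ n := fun n => sub_nonneg.mpr (hmono n)
  have hanti : ∀ n, rearr γ (n + 1) ≤ rearr γ n := by
    intro n
    have h := cardSup_concave (fun m => ‖γ m‖) hγC n
    show rearrSum γ (n + 2) - rearrSum γ (n + 1) ≤ rearrSum γ (n + 1) - rearrSum γ n
    rw [rearrSum_eq_cardSup, rearrSum_eq_cardSup, rearrSum_eq_cardSup]
    linarith
  set t : ℕ → ℝ := tensorSeq α β with htdef
  have ht_eq : ∀ n, t n = rearr γ n := by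
    intro n
    show tensorSum α β (n + 1) - tensorSum α β n = rearrSum γ (n + 1) - rearrSum γ n
    rw [← ha, ← ha]
  have htnn : ∀ n, 0 ≤ t n := fun n => (ht_eq n) ▸ hrnn n
  have htanti : Antitone t := antitone_nat_of_succ_le fun n => by
    rw [ht_eq, ht_eq]; exact hanti n
  have htoC : (fun i => ‖toC t i‖) = t := by
    funext i
    simp only [toC, Complex.norm_real, Real.norm_eq_abs]
    exact abs_of_nonneg (htnn i)
  have hsum_t : ∀ n, ∑ i ∈ Finset.range n, t i = rearrSum γ n := by
    intro n
    calc ∑ i ∈ Finset.range n, t i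
        = ∑ i ∈ Finset.range n, (rearrSum γ (i + 1) - rearrSum γ i) :=
          Finset.sum_congr rfl fun i _ => ht_eq i
      _ = rearrSum γ n - rearrSum γ 0 := Finset.sum_range_sub (rearrSum γ) n
      _ = rearrSum γ n := by
          have h0 : rearrSum γ 0 = 0 := cardSup_zero (fun i => ‖γ i‖)
          rw [h0, sub_zero]
  have hb : ∀ n, rearrSum (toC t) n = rearrSum γ n := by
    intro n
    rw [rearrSum_eq_cardSup, htoC, rearrSum_eq_cardSup]
    apply le_antisymm
    · refine cardSup_le t fun F hF => ?_
      calc ∑ i ∈ F, t i ≤ ∑ i ∈ Finset.range F.card, t i :=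
            sum_le_sum_range_of_antitone htanti htnn F
        _ = ∑ i ∈ Finset.range n, t i := by rw [hF]
        _ = cardSup (fun m => ‖γ m‖) n := hsum_t n
    · calc cardSup (fun m => ‖γ m‖) n = ∑ i ∈ Finset.range n, t i := (hsum_t n).symm
        _ ≤ cardSup t n :=
            le_cardSup t (C := t 0) (fun i => htanti (Nat.zero_le i)) (Finset.card_range n)
  have hdom : ∀ n, rearr (toC t) n ≤ rearr γ n := by
    intro n
    show rearrSum (toC t) (n + 1) - rearrSum (toC t) n ≤ rearrSum γ (n + 1) - rearrSum γ n
    rw [hb, hb]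
  have hγc0 : Filter.Tendsto γ Filter.atTop (nhds 0) := hI.1 hγI
  have htend : Filter.Tendsto t Filter.atTop (nhds 0) := by
    rw [Metric.tendsto_atTop]
    intro ε hε
    obtain ⟨M, hM⟩ := Metric.tendsto_atTop.mp hγc0 (ε / 2) (by linarith)
    refine ⟨M, fun n hn => ?_⟩
    have hstep : rearrSum γ (n + 1) ≤ rearrSum γ n + ε / 2 := by
      rw [rearrSum_eq_cardSup, rearrSum_eq_cardSup]
      refine cardSup_le _ fun F hF => ?_
      obtain ⟨i₀, hi₀F, hi₀⟩ : ∃ i ∈ F, n ≤ i := by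
        by_contra h
        push_neg at h
        have hsub : F ⊆ Finset.range n := fun x hx => Finset.mem_range.mpr (h x hx)
        have hcc := Finset.card_le_card hsub
        rw [hF, Finset.card_range] at hcc
        omega
      have hval : ‖γ i₀‖ ≤ ε / 2 := by
        have h5 := hM i₀ (le_trans hn hi₀)
        rw [dist_zero_right] at h5
        exact le_of_lt h5
      have he1 : ∑ i ∈ F.erase i₀, ‖γ i‖ + ‖γ i₀‖ = ∑ i ∈ F, ‖γ i‖ :=
        Finset.sum_erase_add F _ hi₀F
      have hle : ∑ i ∈ F.erase i₀, ‖γ i‖ ≤ cardSup (fun m => ‖γ m‖) n :=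
        le_cardSup _ hγC (by rw [Finset.card_erase_of_mem hi₀F, hF]; omega)
      linarith
    have h1 : t n ≤ ε / 2 := by
      rw [ht_eq]
      show rearrSum γ (n + 1) - rearrSum γ n ≤ ε / 2
      linarith
    rw [dist_zero_right, Real.norm_eq_abs, abs_of_nonneg (htnn n)]
    linarith
  have htoCc0 : toC t ∈ c0 := by
    have h6 : Filter.Tendsto (fun n => ((t n : ℝ) : ℂ)) Filter.atTop (nhds ((0 : ℝ) : ℂ)) :=
      (Complex.continuous_ofReal.tendsto 0).comp htend
    have : Filter.Tendsto (toC t) Filter.atTop (nhds 0) := by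
      simpa [Complex.ofReal_zero] using (show Filter.Tendsto (toC t) Filter.atTop (nhds ((0 : ℝ) : ℂ)) from h6)
    exact this
  exact hI.2.2.2.2 γ hγI (toC t) htoCc0 hdom
end
end

section
/- Let ω ∈ (0,1) and let α, β ∈ c₀ be nonincreasing sequences of nonnegative reals with α₁ ≤ 1 and β₁ ≤ 1. Then α ≲ β if and only if there exists a positive integer r such that K̃ₙ^{(ω)}(α) ≤ K̃_{n+r}^{(ω)}(β) for every integer n ≥ 0. -/
open scoped BigOperators

noncomputable section

lemma finite_gt_aux {ω : ℝ} (hω : 0 < ω) {α : ℕ → ℝ}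
    (hαc : Filter.Tendsto α Filter.atTop (nhds 0)) (j : ℕ) :
    {m : ℕ | ω ^ j < α m}.Finite := by
  obtain ⟨N, hN⟩ := Filter.eventually_atTop.1 (hαc.eventually_lt_const (pow_pos hω j))
  apply (Set.finite_Iio N).subset
  intro m hm
  by_contra h
  exact absurd (hN m (not_lt.1 h)) (not_lt.2 (le_of_lt hm))

lemma Ktil_eq {ω : ℝ} (hω : ω ∈ Set.Ioo (0 : ℝ) 1) {α : ℕ → ℝ}
    (hα1 : ∀ m, α m ≤ 1)
    (hαc : Filter.Tendsto α Filter.atTop (nhds 0)) (n : ℕ) :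
    Ktil ω α n = Set.ncard {m : ℕ | ω ^ (n + 1) < α m} := by
  induction n with
  | zero =>
    simp only [Ktil, Finset.sum_range_one, Kw]
    have hset : {m : ℕ | ω < α m ∧ α m ≤ 1} = {m : ℕ | ω < α m} := by
      ext m
      exact ⟨fun h => h.1, fun h => ⟨h, hα1 m⟩⟩
    norm_num [hset]
  | succ n ih =>
    have hsub : {m : ℕ | ω ^ (n + 1) < α m} ⊆ {m : ℕ | ω ^ (n + 2) < α m} := by
      intro m hm
      exact lt_trans (pow_lt_pow_right_of_lt_one₀ hω.1 hω.2 (by omega)) hm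
    have hKw : Kw ω α (n + 1) =
        ({m : ℕ | ω ^ (n + 2) < α m} \ {m : ℕ | ω ^ (n + 1) < α m}).ncard := by
      unfold Kw
      congr 1
      ext m
      simp only [Set.mem_setOf_eq, Set.mem_diff, not_lt]
    rw [Ktil, Finset.sum_range_succ, ← Ktil, ih, hKw, add_comm,
      Set.ncard_diff_add_ncard_of_subset hsub (finite_gt_aux hω.1 hαc (n + 2))]

/-- Let `ω ∈ (0,1)` and `α, β` be nonincreasing null sequences of
nonnegative reals with `α₁ ≤ 1` and `β₁ ≤ 1`.  Then `α ≲ β` iff there is a positive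
integer `r` with `K̃ₙ^{(ω)}(α) ≤ K̃_{n+r}^{(ω)}(β)` for every `n ≥ 0`. -/
theorem lesssim_iff_Ktil (ω : ℝ) (hω : ω ∈ Set.Ioo (0 : ℝ) 1) (α β : ℕ → ℝ)
    (hαa : Antitone α) (hβa : Antitone β)
    (hα0 : ∀ n, 0 ≤ α n) (hβ0 : ∀ n, 0 ≤ β n)
    (hαc : Filter.Tendsto α Filter.atTop (nhds 0))
    (hβc : Filter.Tendsto β Filter.atTop (nhds 0))
    (hα1 : α 0 ≤ 1) (hβ1 : β 0 ≤ 1) :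
    (∃ C : ℝ, 0 < C ∧ ∀ n, α n ≤ C * β n) ↔
      (∃ r : ℕ, 0 < r ∧ ∀ n : ℕ, Ktil ω α n ≤ Ktil ω β (n + r)) := by
  obtain ⟨hω0, hω1⟩ := hω
  have hα1' : ∀ m, α m ≤ 1 := fun m => le_trans (hαa (Nat.zero_le m)) hα1
  have hβ1' : ∀ m, β m ≤ 1 := fun m => le_trans (hβa (Nat.zero_le m)) hβ1
  constructor
  · rintro ⟨C, hC, hCle⟩
    -- find r with C * ω ^ r ≤ 1
    have htend : Filter.Tendsto (fun r : ℕ => ω ^ r) Filter.atTop (nhds 0) :=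
      tendsto_pow_atTop_nhds_zero_of_lt_one (le_of_lt hω0) hω1
    obtain ⟨N, hN⟩ := Filter.eventually_atTop.1
      (htend.eventually_lt_const (by positivity : (0:ℝ) < 1 / C))
    refine ⟨N + 1, Nat.succ_pos N, fun n => ?_⟩
    have hCω : C * ω ^ (N + 1) ≤ 1 := by
      have := hN (N + 1) (by omega)
      rw [lt_div_iff₀ hC, mul_comm] at this
      exact le_of_lt this
    rw [Ktil_eq ⟨hω0, hω1⟩ hα1' hαc, Ktil_eq ⟨hω0, hω1⟩ hβ1' hβc]
    apply Set.ncard_le_ncard _ (finite_gt_aux hω0 hβc _)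
    intro m hm
    simp only [Set.mem_setOf_eq] at hm ⊢
    have h1 : ω ^ (n + 1) < C * β m := lt_of_lt_of_le hm (hCle m)
    have h2 : C * ω ^ (n + (N + 1) + 1) ≤ ω ^ (n + 1) := by
      have : ω ^ (n + (N + 1) + 1) = ω ^ (N + 1) * ω ^ (n + 1) := by ring
      rw [this, ← mul_assoc]
      calc C * ω ^ (N + 1) * ω ^ (n + 1) ≤ 1 * ω ^ (n + 1) := by
            apply mul_le_mul_of_nonneg_right hCω (by positivity)
        _ = ω ^ (n + 1) := one_mul _
    have := lt_of_le_of_lt h2 h1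
    exact lt_of_mul_lt_mul_left this (le_of_lt hC)
  · rintro ⟨r, hr, hK⟩
    refine ⟨(1 / ω) ^ (r + 1), pow_pos (by simp [hω0]) _, fun m => ?_⟩
    rcases eq_or_lt_of_le (hα0 m) with h0 | h0
    · rw [← h0]; exact mul_nonneg (le_of_lt (pow_pos (by simp [hω0]) _)) (hβ0 m)
    -- find n with ω^(n+1) < α m ≤ ω ^ n
    have hex : ∃ n : ℕ, ω ^ (n + 1) < α m := by
      obtain ⟨N, hN⟩ := Filter.eventually_atTop.1
        ((tendsto_pow_atTop_nhds_zero_of_lt_one (le_of_lt hω0)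
          hω1).eventually_lt_const h0)
      exact ⟨N, hN (N + 1) (by omega)⟩
    classical
    set n := Nat.find hex with hn
    have hlt : ω ^ (n + 1) < α m := Nat.find_spec hex
    have hle : α m ≤ ω ^ n := by
      rcases Nat.eq_zero_or_pos n with h | h
      · rw [h, pow_zero]; exact hα1' m
      · have := Nat.find_min hex (m := n - 1) (by omega)
        rw [not_lt] at this
        have h1 : n - 1 + 1 = n := by omega
        rwa [h1] at this
    -- m+1 ≤ Ktil ω α n
    have hA : (↑(Finset.range (m + 1)) : Set ℕ) ⊆ {k : ℕ | ω ^ (n + 1) < α k} := by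
      intro k hk
      simp only [Finset.coe_range, Set.mem_Iio] at hk
      exact lt_of_lt_of_le hlt (hαa (by omega))
    have hcard : m + 1 ≤ Set.ncard {k : ℕ | ω ^ (n + 1) < α k} := by
      have := Set.ncard_le_ncard hA (finite_gt_aux hω0 hαc (n + 1))
      rwa [Set.ncard_coe_finset, Finset.card_range] at this
    have hcard2 : m + 1 ≤ Set.ncard {k : ℕ | ω ^ (n + r + 1) < β k} := by
      calc m + 1 ≤ Ktil ω α n := by rwa [Ktil_eq ⟨hω0, hω1⟩ hα1' hαc]
        _ ≤ Ktil ω β (n + r) := hK n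
        _ = _ := Ktil_eq ⟨hω0, hω1⟩ hβ1' hβc (n + r)
    -- hence β m > ω ^ (n + r + 1)
    have hβm : ω ^ (n + r + 1) < β m := by
      by_contra h
      rw [not_lt] at h
      have hsub : {k : ℕ | ω ^ (n + r + 1) < β k} ⊆ ↑(Finset.range m) := by
        intro k hk
        simp only [Set.mem_setOf_eq] at hk
        simp only [Finset.coe_range, Set.mem_Iio]
        by_contra hkm
        exact absurd (le_trans (hβa (not_lt.1 hkm)) h) (not_le.2 hk)
      have := Set.ncard_le_ncard hsub (Finset.range m).finite_toSet
      rw [Set.ncard_coe_finset, Finset.card_range] at this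
      omega
    calc α m ≤ ω ^ n := hle
      _ = (1 / ω) ^ (r + 1) * ω ^ (n + r + 1) := by
          field_simp
          have hω' : ω ≠ 0 := hω0.ne'
          rw [one_div, inv_pow, show n + r + 1 = n + (r + 1) by ring, pow_add ω n, mul_comm (ω ^ n),
            ← mul_assoc, inv_mul_cancel₀ (pow_ne_zero _ hω'), one_mul]
      _ ≤ (1 / ω) ^ (r + 1) * β m := by
          apply mul_le_mul_of_nonneg_left (le_of_lt hβm) (by positivity)
end
end

section
/- Let α ∈ c₀ be a nonincreasing sequence of nonnegative reals with α₁ ≤ 1 and let ω ∈ (0,1). The following are equivalent: (1) the principal Calkin space ⟨α⟩ is stable; (2) α⊗α ∈ ⟨α⟩; (3) there exist a positive integer r and a constant C > 0 such that M̃ₙ^{(ω)}(α) ≤ C · K̃_{n+r}^{(ω)}(α) for every integer n ≥ 0. -/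
open scoped BigOperators

noncomputable section

/-! ### Infrastructure: sorting of nonnegative null sequences -/

/-- superlevel sets are finite -/
def FinAbove (d : ℕ → ℝ) : Prop := ∀ ε > 0, {k | ε < d k}.Finite

lemma sum_finset_le_antitone {f : ℕ → ℝ} (hf : Antitone f) (h0 : ∀ k, 0 ≤ f k) :
    ∀ (n : ℕ) (J : Finset ℕ), J.card = n → ∑ j ∈ J, f j ≤ ∑ i ∈ Finset.range n, f i := by
  intro n
  induction n with
  | zero => intro J hJ; rw [Finset.card_eq_zero] at hJ; simp [hJ]
  | succ n ih =>
    intro J hJ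
    have hne : J.Nonempty := Finset.card_pos.mp (by omega)
    set M := J.max' hne with hM
    have hMJ : M ∈ J := J.max'_mem hne
    have hsub : J ⊆ Finset.range (M + 1) := by
      intro x hx
      exact Finset.mem_range.mpr (Nat.lt_succ_of_le (J.le_max' x hx))
    have hcard : n + 1 ≤ M + 1 := by
      have := Finset.card_le_card hsub
      rwa [hJ, Finset.card_range] at this
    have hMn : n ≤ M := by omega
    have h1 : ∑ j ∈ J.erase M, f j ≤ ∑ i ∈ Finset.range n, f i := by
      apply ih
      rw [Finset.card_erase_of_mem hMJ, hJ]; omega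
    calc ∑ j ∈ J, f j = f M + ∑ j ∈ J.erase M, f j := (Finset.add_sum_erase J f hMJ).symm
      _ ≤ f n + ∑ i ∈ Finset.range n, f i := add_le_add (hf hMn) h1
      _ = ∑ i ∈ Finset.range (n+1), f i := by
          rw [Finset.sum_range_succ_comm]

/-- the generalized rearrangement sum of a real-valued sequence -/
def rS (d : ℕ → ℝ) (n : ℕ) : ℝ :=
  sSup ((fun F : Finset ℕ => ∑ i ∈ F, d i) '' {F | F.card = n})

lemma rearrSum_eq_rS (α : ℕ → ℂ) (n : ℕ) : rearrSum α n = rS (fun k => ‖α k‖) n := rfl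

lemma rS_eq_of_antitone {f : ℕ → ℝ} (hf : Antitone f) (h0 : ∀ k, 0 ≤ f k) (n : ℕ) :
    rS f n = ∑ i ∈ Finset.range n, f i := by
  apply IsGreatest.csSup_eq
  constructor
  · exact ⟨Finset.range n, by simp, rfl⟩
  · rintro x ⟨F, hF, rfl⟩
    exact sum_finset_le_antitone hf h0 n F hF

lemma rearr_toC_of_antitone {f : ℕ → ℝ} (hf : Antitone f) (h0 : ∀ k, 0 ≤ f k) (n : ℕ) :
    rearr (toC f) n = f n := by
  have hn : ∀ m, rearrSum (toC f) m = ∑ i ∈ Finset.range m, f i := by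
    intro m
    rw [rearrSum_eq_rS]
    have : (fun k => ‖toC f k‖) = f := by
      funext k; simp [toC, Complex.norm_real, abs_of_nonneg (h0 k)]
    rw [this, rS_eq_of_antitone hf h0]
  rw [rearr, hn, hn, Finset.sum_range_succ]
  ring

/-- A sorting of a sequence `d`: an injective enumeration covering the support,
along which `d` is nonincreasing. -/
structure Sorting (d : ℕ → ℝ) where
  π : ℕ → ℕ
  inj : Function.Injective π
  cover : ∀ k, d k ≠ 0 → k ∈ Set.range π
  anti : Antitone (fun n => d (π n))

lemma exists_next {d : ℕ → ℝ} (hd0 : ∀ k, 0 ≤ d k) (hfin : FinAbove d) (U : Finset ℕ) :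
    ∃ k, k ∉ U ∧ ∀ j, j ∉ U → d j ≤ d k := by
  by_cases h : ∃ j, j ∉ U ∧ 0 < d j
  · obtain ⟨j₀, hj₀U, hj₀⟩ := h
    have hB : {k | d j₀ / 2 < d k}.Finite := hfin _ (by linarith)
    have hBU : (hB.toFinset \ U).Nonempty := by
      refine ⟨j₀, ?_⟩
      simp only [Finset.mem_sdiff, Set.Finite.mem_toFinset, Set.mem_setOf_eq]
      exact ⟨by linarith, hj₀U⟩
    obtain ⟨k, hk, hkmax⟩ := Finset.exists_max_image (hB.toFinset \ U) d hBU
    simp only [Finset.mem_sdiff, Set.Finite.mem_toFinset, Set.mem_setOf_eq] at hk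
    refine ⟨k, hk.2, fun j hj => ?_⟩
    by_cases hjB : d j₀ / 2 < d j
    · exact hkmax j (by simp only [Finset.mem_sdiff, Set.Finite.mem_toFinset,
        Set.mem_setOf_eq]; exact ⟨hjB, hj⟩)
    · push_neg at hjB
      have : d j₀ ≤ d k := hkmax j₀ (by simp only [Finset.mem_sdiff,
        Set.Finite.mem_toFinset, Set.mem_setOf_eq]; exact ⟨by linarith, hj₀U⟩)
      linarith
  · push_neg at h
    obtain ⟨k, hk⟩ := U.exists_notMem
    refine ⟨k, hk, fun j hj => ?_⟩
    have h1 : d j ≤ 0 := h j hj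
    have h2 := hd0 k
    linarith

variable {d : ℕ → ℝ}

/-- greedy next choice -/
noncomputable def gnext (hd0 : ∀ k, 0 ≤ d k) (hfin : FinAbove d) (U : Finset ℕ) : ℕ :=
  Classical.choose (exists_next hd0 hfin U)

lemma gnext_spec (hd0 : ∀ k, 0 ≤ d k) (hfin : FinAbove d) (U : Finset ℕ) :
    gnext hd0 hfin U ∉ U ∧ ∀ j, j ∉ U → d j ≤ d (gnext hd0 hfin U) :=
  Classical.choose_spec (exists_next hd0 hfin U)

/-- greedy chain of used indices -/
noncomputable def gchain (hd0 : ∀ k, 0 ≤ d k) (hfin : FinAbove d) : ℕ → Finset ℕ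
  | 0 => ∅
  | n + 1 => insert (gnext hd0 hfin (gchain hd0 hfin n)) (gchain hd0 hfin n)

/-- greedy enumeration -/
noncomputable def gπ (hd0 : ∀ k, 0 ≤ d k) (hfin : FinAbove d) (n : ℕ) : ℕ :=
  gnext hd0 hfin (gchain hd0 hfin n)

lemma gchain_mono (hd0 : ∀ k, 0 ≤ d k) (hfin : FinAbove d) {m n : ℕ} (h : m ≤ n) :
    gchain hd0 hfin m ⊆ gchain hd0 hfin n := by
  induction n with
  | zero => simp_all
  | succ n ih =>
    rcases Nat.lt_or_ge m (n+1) with h'|h'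
    · exact (ih (by omega)).trans (Finset.subset_insert _ _)
    · have : m = n + 1 := by omega
      subst this; rfl

lemma mem_gchain_iff (hd0 : ∀ k, 0 ≤ d k) (hfin : FinAbove d) {k : ℕ} {n : ℕ} :
    k ∈ gchain hd0 hfin n ↔ ∃ m < n, gπ hd0 hfin m = k := by
  induction n with
  | zero => simp [gchain]
  | succ n ih =>
    simp only [gchain, Finset.mem_insert, ih]
    constructor
    · rintro (rfl | ⟨m, hm, rfl⟩)
      · exact ⟨n, by omega, rfl⟩
      · exact ⟨m, by omega, rfl⟩
    · rintro ⟨m, hm, rfl⟩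
      rcases Nat.lt_or_ge m n with h'|h'
      · exact Or.inr ⟨m, h', rfl⟩
      · have : m = n := by omega
        subst this; exact Or.inl rfl

lemma gπ_not_mem (hd0 : ∀ k, 0 ≤ d k) (hfin : FinAbove d) (n : ℕ) :
    gπ hd0 hfin n ∉ gchain hd0 hfin n := (gnext_spec hd0 hfin _).1

lemma gπ_inj (hd0 : ∀ k, 0 ≤ d k) (hfin : FinAbove d) :
    Function.Injective (gπ hd0 hfin) := by
  intro m n hmn
  by_contra hne
  wlog h : m < n generalizing m n
  · exact this hmn.symm (Ne.symm hne) (by omega)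
  · have hmem : gπ hd0 hfin m ∈ gchain hd0 hfin n := by
      rw [mem_gchain_iff]; exact ⟨m, h, rfl⟩
    rw [hmn] at hmem
    exact gπ_not_mem hd0 hfin n hmem

lemma gπ_max (hd0 : ∀ k, 0 ≤ d k) (hfin : FinAbove d) (n : ℕ) {j : ℕ}
    (hj : j ∉ gchain hd0 hfin n) : d j ≤ d (gπ hd0 hfin n) :=
  (gnext_spec hd0 hfin _).2 j hj

lemma gπ_anti (hd0 : ∀ k, 0 ≤ d k) (hfin : FinAbove d) :
    Antitone (fun n => d (gπ hd0 hfin n)) := by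
  apply antitone_nat_of_succ_le
  intro n
  apply gπ_max hd0 hfin n
  intro hmem
  have := gπ_not_mem hd0 hfin (n+1)
  have hsub : gchain hd0 hfin n ⊆ gchain hd0 hfin (n+1) :=
    gchain_mono hd0 hfin (by omega)
  exact this (hsub hmem)

lemma gπ_cover (hd0 : ∀ k, 0 ≤ d k) (hfin : FinAbove d) (k : ℕ) (hk : d k ≠ 0) :
    k ∈ Set.range (gπ hd0 hfin) := by
  by_contra hkr
  have hdk : 0 < d k := lt_of_le_of_ne (hd0 k) (Ne.symm hk)
  have hall : ∀ n, d k ≤ d (gπ hd0 hfin n) := by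
    intro n
    apply gπ_max hd0 hfin n
    intro hmem
    rw [mem_gchain_iff] at hmem
    obtain ⟨m, _, hm⟩ := hmem
    exact hkr ⟨m, hm⟩
  have hfin2 : {j | d k / 2 < d j}.Finite := hfin _ (by linarith)
  have : Set.range (gπ hd0 hfin) ⊆ {j | d k / 2 < d j} := by
    rintro _ ⟨n, rfl⟩
    have := hall n
    simp only [Set.mem_setOf_eq]; linarith
  have hinf : (Set.range (gπ hd0 hfin)).Infinite :=
    Set.infinite_range_of_injective (gπ_inj hd0 hfin)
  exact hinf (hfin2.subset this)

/-- existence of a sorting -/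
noncomputable def Sorting.mk' (hd0 : ∀ k, 0 ≤ d k) (hfin : FinAbove d) : Sorting d :=
  ⟨gπ hd0 hfin, gπ_inj hd0 hfin, gπ_cover hd0 hfin, gπ_anti hd0 hfin⟩

/-- an antitone sequence sorts itself -/
def Sorting.id' (u : ℕ → ℝ) (hu : Antitone u) : Sorting u :=
  ⟨id, fun _ _ h => h, fun k _ => ⟨k, rfl⟩, hu⟩

namespace Sorting

lemma nonneg_comp (S : Sorting d) (hd0 : ∀ k, 0 ≤ d k) (n : ℕ) : 0 ≤ d (S.π n) := hd0 _

/-- the fundamental identity: the rearrangement sums are the partial sums along a sorting -/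
lemma rS_eq (S : Sorting d) (hd0 : ∀ k, 0 ≤ d k) (n : ℕ) :
    rS d n = ∑ i ∈ Finset.range n, d (S.π i) := by
  apply IsGreatest.csSup_eq
  constructor
  · refine ⟨(Finset.range n).image S.π, ?_, ?_⟩
    · simpa [Set.mem_setOf_eq, Finset.card_image_of_injective _ S.inj] using rfl
    · show ∑ i ∈ (Finset.range n).image S.π, d i = _
      rw [Finset.sum_image (fun x _ y _ h => S.inj h)]
  · rintro x ⟨F, hF, rfl⟩
    simp only [Set.mem_setOf_eq] at hF
    have hinj : Set.InjOn S.π (S.π ⁻¹' ↑F) := S.inj.injOn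
    have hsum : ∑ j ∈ F.preimage S.π hinj, d (S.π j) = ∑ k ∈ F, d k := by
      apply Finset.sum_preimage
      intro x hx hxr
      by_contra h
      exact hxr (S.cover x h)
    have hcard : (F.preimage S.π hinj).card ≤ n := by
      have h1 : ((F.preimage S.π hinj).image S.π) ⊆ F := by
        intro x hx
        simp only [Finset.mem_image, Finset.mem_preimage] at hx
        obtain ⟨a, ha, rfl⟩ := hx
        exact ha
      have h2 := Finset.card_le_card h1
      rw [Finset.card_image_of_injective _ S.inj] at h2
      omega
    calc ∑ k ∈ F, d k = ∑ j ∈ F.preimage S.π hinj, d (S.π j) := hsum.symm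
      _ ≤ ∑ i ∈ Finset.range (F.preimage S.π hinj).card, d (S.π i) :=
          sum_finset_le_antitone S.anti (fun k => hd0 _) _ _ rfl
      _ ≤ ∑ i ∈ Finset.range n, d (S.π i) := by
          apply Finset.sum_le_sum_of_subset_of_nonneg
          · exact Finset.range_subset_range.mpr hcard
          · intro i _ _; exact hd0 _

/-- the decreasing rearrangement of `β` is `d ∘ π` -/
lemma rearr_eq {β : ℕ → ℂ} (S : Sorting (fun k => ‖β k‖)) (n : ℕ) :
    rearr β n = ‖β (S.π n)‖ := by
  have h := fun m => S.rS_eq (fun k => norm_nonneg _) m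
  rw [rearr, rearrSum_eq_rS, rearrSum_eq_rS, h, h, Finset.sum_range_succ]
  ring

/-- superlevel sets correspond along a sorting -/
lemma count_eq (S : Sorting d) {s : ℝ} (hs : 0 ≤ s) :
    {k | s < d k} = S.π '' {n | s < d (S.π n)} := by
  ext k
  simp only [Set.mem_setOf_eq, Set.mem_image]
  constructor
  · intro hk
    have : d k ≠ 0 := by intro h; rw [h] at hk; linarith
    obtain ⟨n, rfl⟩ := S.cover k this
    exact ⟨n, hk, rfl⟩
  · rintro ⟨n, hn, rfl⟩; exact hn

lemma ncard_count_eq (S : Sorting d) {s : ℝ} (hs : 0 ≤ s) :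
    {k | s < d k}.ncard = {n | s < d (S.π n)}.ncard := by
  rw [S.count_eq hs, Set.ncard_image_of_injective _ S.inj]

lemma finite_comp (S : Sorting d) {s : ℝ} (h : {k | s < d k}.Finite) :
    {n | s < d (S.π n)}.Finite := by
  have : {n | s < d (S.π n)} = S.π ⁻¹' {k | s < d k} := rfl
  rw [this]
  exact Set.Finite.preimage S.inj.injOn h

end Sorting

/-- For an antitone sequence, superlevel sets are initial segments: a membership bound. -/
lemma antitone_count_le {u : ℕ → ℝ} (hu : Antitone u) {s : ℝ} {n : ℕ} (hs : u n ≤ s) :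
    {m | s < u m} ⊆ Set.Iio n := by
  intro m hm
  simp only [Set.mem_setOf_eq] at hm
  simp only [Set.mem_Iio]
  by_contra h
  push_neg at h
  have := hu h
  linarith

lemma ncard_Iio (n : ℕ) : (Set.Iio n).ncard = n := by
  have : (Set.Iio n) = ((Finset.Iio n : Finset ℕ) : Set ℕ) := by ext x; simp
  rw [this, Set.ncard_coe_finset]
  simp

lemma ncard_Iic_nat (n : ℕ) : (Set.Iic n).ncard = n + 1 := by
  have : (Set.Iic n) = ((Finset.Iic n : Finset ℕ) : Set ℕ) := by ext x; simp
  rw [this, Set.ncard_coe_finset]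
  simp

/-- For an antitone sequence, if `j <` the count of the superlevel set then `u j > s`. -/
lemma antitone_init {u : ℕ → ℝ} (hu : Antitone u) {s : ℝ}
    (hfin : {m | s < u m}.Finite) {j : ℕ} (hj : j < {m | s < u m}.ncard) : s < u j := by
  by_contra h
  push_neg at h
  have hsub := antitone_count_le hu h
  have := Set.ncard_le_ncard hsub (Set.finite_Iio j)
  rw [ncard_Iio] at this
  omega

/-- membership in a lower set bounds below its cardinality -/
lemma antitone_mem_lt_ncard {u : ℕ → ℝ} (hu : Antitone u) {s : ℝ}
    (hfin : {m | s < u m}.Finite) {j : ℕ} (hj : s < u j) : j < {m | s < u m}.ncard := by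
  have hsub : Set.Iic j ⊆ {m | s < u m} := by
    intro m hm
    simp only [Set.mem_Iic] at hm
    exact lt_of_lt_of_le hj (hu hm)
  have h1 := Set.ncard_le_ncard hsub hfin
  have h2 : (Set.Iic j).ncard = j + 1 := by
    have : (Set.Iic j) = ((Finset.Iic j : Finset ℕ) : Set ℕ) := by ext x; simp
    rw [this, Set.ncard_coe_finset]
    simp
  omega

/-- superlevel initial segment equality for antitone sequences -/
lemma antitone_superlevel_eq {u : ℕ → ℝ} (hu : Antitone u) {s : ℝ}
    (hfin : {m | s < u m}.Finite) : {m | s < u m} = Set.Iio ({m | s < u m}.ncard) := by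
  ext j
  simp only [Set.mem_setOf_eq, Set.mem_Iio]
  exact ⟨fun h => antitone_mem_lt_ncard hu hfin h, fun h => antitone_init hu hfin h⟩

/-- sorted comparison from distribution comparison -/
lemma sorted_le_of_count_le {d e : ℕ → ℝ} (Sd : Sorting d) (Se : Sorting e)
    (hd0 : ∀ k, 0 ≤ d k) (he0 : ∀ k, 0 ≤ e k) (hfd : FinAbove d) (hfe : FinAbove e)
    (h : ∀ s > 0, {k | s < d k}.ncard ≤ {k | s < e k}.ncard) (n : ℕ) :
    d (Sd.π n) ≤ e (Se.π n) := by
  by_contra hlt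
  push_neg at hlt
  set s := (e (Se.π n) + d (Sd.π n)) / 2 with hs
  have hs0 : 0 < s := by
    have := he0 (Se.π n)
    rw [hs]; linarith
  have hse : e (Se.π n) < s := by rw [hs]; linarith
  have hsd : s < d (Sd.π n) := by rw [hs]; linarith
  -- count of d above s is at least n+1
  have h1 : n + 1 ≤ {k | s < d k}.ncard := by
    rw [Sd.ncard_count_eq hs0.le]
    exact antitone_mem_lt_ncard Sd.anti (Sd.finite_comp (hfd s hs0)) hsd
  -- count of e above s is at most n
  have h2 : {k | s < e k}.ncard ≤ n := by
    rw [Se.ncard_count_eq hs0.le]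
    have hsub := antitone_count_le Se.anti hse.le
    have := Set.ncard_le_ncard hsub (Set.finite_Iio n)
    rwa [ncard_Iio] at this
  have := h s hs0
  omega

/-- an antitone nonneg sequence with finite superlevel sets tends to zero -/
lemma tendsto_zero_of_finAbove {u : ℕ → ℝ} (hu0 : ∀ k, 0 ≤ u k)
    (hfin : FinAbove u) : Filter.Tendsto u Filter.atTop (nhds 0) := by
  rw [← Nat.cofinite_eq_atTop]
  rw [NormedAddCommGroup.tendsto_nhds_zero]
  intro ε hε
  rw [Filter.eventually_cofinite]
  have h1 : {k | ¬ ‖u k‖ < ε} ⊆ {k | ε/2 < u k} := by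
    intro k hk
    simp only [Set.mem_setOf_eq, not_lt] at hk ⊢
    rw [Real.norm_eq_abs, abs_of_nonneg (hu0 k)] at hk
    linarith
  exact (hfin (ε/2) (by linarith)).subset h1

/-- a c₀-sequence has finite superlevel sets of its norms -/
lemma finAbove_of_c0 {β : ℕ → ℂ} (hβ : β ∈ c0) : FinAbove (fun k => ‖β k‖) := by
  intro ε hε
  have h := hβ
  rw [c0, Set.mem_setOf_eq, ← Nat.cofinite_eq_atTop,
    NormedAddCommGroup.tendsto_nhds_zero] at h
  have h2 := h ε hε
  rw [Filter.eventually_cofinite] at h2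
  apply h2.subset
  intro k hk
  simp only [Set.mem_setOf_eq, not_lt] at hk ⊢
  exact hk.le

namespace Sorting

lemma superlevel_subset (S : Sorting d) {i : ℕ} {s : ℝ} (hs : d (S.π i) ≤ s)
    (hs0 : 0 ≤ s) : {k | s < d k} ⊆ S.π '' Set.Iio i := by
  intro k hk
  simp only [Set.mem_setOf_eq] at hk
  have hne : d k ≠ 0 := by intro h; rw [h] at hk; linarith
  obtain ⟨n, rfl⟩ := S.cover k hne
  refine ⟨n, ?_, rfl⟩
  simp only [Set.mem_Iio]
  by_contra h
  push_neg at h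
  have := S.anti h
  simp only at this
  linarith

lemma superlevel_finite (S : Sorting d) {i : ℕ} {s : ℝ} (hs : d (S.π i) ≤ s)
    (hs0 : 0 ≤ s) : {k | s < d k}.Finite :=
  Set.Finite.subset ((Set.finite_Iio i).image S.π) (S.superlevel_subset hs hs0)

lemma superlevel_ncard_le (S : Sorting d) {i : ℕ} {s : ℝ} (hs : d (S.π i) ≤ s)
    (hs0 : 0 ≤ s) : {k | s < d k}.ncard ≤ i := by
  have h1 := Set.ncard_le_ncard (S.superlevel_subset hs hs0)
    ((Set.finite_Iio i).image S.π)
  rwa [Set.ncard_image_of_injective _ S.inj, ncard_Iio] at h1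

end Sorting

lemma toC_zero : toC (fun _ => (0:ℝ)) = (0 : ℕ → ℂ) := by
  funext k; simp [toC]

lemma rearr_zero (n : ℕ) : rearr (0 : ℕ → ℂ) n = 0 := by
  have h := rearr_toC_of_antitone (f := fun _ => (0:ℝ)) (fun _ _ _ => le_refl 0)
    (fun _ => le_refl 0) n
  rwa [toC_zero] at h

lemma rearr_smul {β : ℕ → ℂ} (hβ : β ∈ c0) (c : ℂ) (n : ℕ) :
    rearr (c • β) n = ‖c‖ * rearr β n := by
  rcases eq_or_ne c 0 with rfl | hc
  · simp [rearr_zero]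
  · obtain S := Sorting.mk' (d := fun k => ‖β k‖) (fun k => norm_nonneg _) (finAbove_of_c0 hβ)
    have hd' : (fun k => ‖(c • β) k‖) = fun k => ‖c‖ * ‖β k‖ := by
      funext k; simp [norm_smul]
    set S' : Sorting (fun k => ‖(c • β) k‖) :=
      ⟨S.π, S.inj, by
        intro k hk
        apply S.cover
        intro h0
        apply hk
        show ‖(c • β) k‖ = 0
        simp [norm_smul, h0], by
        intro a b hab
        show ‖(c • β) (S.π b)‖ ≤ ‖(c • β) (S.π a)‖
        simp only [Pi.smul_apply, norm_smul]
        exact mul_le_mul_of_nonneg_left (S.anti hab) (norm_nonneg c)⟩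
    rw [Sorting.rearr_eq S' n, Sorting.rearr_eq S n]
    simp [norm_smul]
    left; rfl

lemma rearr_nonneg {β : ℕ → ℂ} (hβ : β ∈ c0) (n : ℕ) : 0 ≤ rearr β n := by
  obtain S := Sorting.mk' (d := fun k => ‖β k‖) (fun k => norm_nonneg _) (finAbove_of_c0 hβ)
  rw [Sorting.rearr_eq S n]
  exact norm_nonneg _

/-- subadditivity of the decreasing rearrangement -/
lemma rearr_add_le {β γ : ℕ → ℂ} (hβ : β ∈ c0) (hγ : γ ∈ c0) (i j : ℕ) :
    rearr (β + γ) (i + j) ≤ rearr β i + rearr γ j := by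
  have hβγ : β + γ ∈ c0 := by
    have := Filter.Tendsto.add hβ hγ
    simpa [c0, Pi.add_def] using this
  obtain S := Sorting.mk' (d := fun k => ‖(β+γ) k‖) (fun k => norm_nonneg _)
    (finAbove_of_c0 hβγ)
  obtain Sβ := Sorting.mk' (d := fun k => ‖β k‖) (fun k => norm_nonneg _) (finAbove_of_c0 hβ)
  obtain Sγ := Sorting.mk' (d := fun k => ‖γ k‖) (fun k => norm_nonneg _) (finAbove_of_c0 hγ)
  rw [Sorting.rearr_eq S, Sorting.rearr_eq Sβ, Sorting.rearr_eq Sγ]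
  set b := ‖β (Sβ.π i)‖ with hb
  set c := ‖γ (Sγ.π j)‖ with hc
  by_contra hlt
  push_neg at hlt
  have hb0 : 0 ≤ b := norm_nonneg _
  have hc0 : 0 ≤ c := norm_nonneg _
  have hbc0 : 0 ≤ b + c := by linarith
  have hfinU : ({k | b < ‖β k‖} ∪ {k | c < ‖γ k‖}).Finite :=
    Set.Finite.union (Sβ.superlevel_finite le_rfl hb0) (Sγ.superlevel_finite le_rfl hc0)
  have hsub : {k | b + c < ‖(β+γ) k‖} ⊆ {k | b < ‖β k‖} ∪ {k | c < ‖γ k‖} := by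
    intro k hk
    simp only [Set.mem_setOf_eq, Set.mem_union] at hk ⊢
    have := norm_add_le (β k) (γ k)
    simp only [Pi.add_apply] at hk
    by_contra h
    push_neg at h
    obtain ⟨h1', h2'⟩ := h
    linarith
  have hfinT : {k | b + c < ‖(β+γ) k‖}.Finite := hfinU.subset hsub
  have h1 : i + j < {k | b + c < ‖(β+γ) k‖}.ncard := by
    rw [S.ncard_count_eq hbc0]
    exact antitone_mem_lt_ncard S.anti (S.finite_comp hfinT) hlt
  have h2 : {k | b + c < ‖(β+γ) k‖}.ncard ≤ i + j := by
    calc {k | b + c < ‖(β+γ) k‖}.ncard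
        ≤ ({k | b < ‖β k‖} ∪ {k | c < ‖γ k‖}).ncard := Set.ncard_le_ncard hsub hfinU
      _ ≤ {k | b < ‖β k‖}.ncard + {k | c < ‖γ k‖}.ncard := Set.ncard_union_le _ _
      _ ≤ i + j := add_le_add (Sβ.superlevel_ncard_le le_rfl hb0)
            (Sγ.superlevel_ncard_le le_rfl hc0)
  omega

/-! ### The principal Calkin space as a concrete set -/

/-- concrete description of the principal Calkin space generated by a
nonincreasing nonnegative null sequence `f` -/
def Jset (f : ℕ → ℝ) : Set (ℕ → ℂ) :=
  {β | β ∈ c0 ∧ ∃ C > (0:ℝ), ∃ m > 0, ∀ n : ℕ, rearr β n ≤ C * f (n / m)}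

lemma toC_mem_c0 {f : ℕ → ℝ} (hf : Filter.Tendsto f Filter.atTop (nhds 0)) :
    toC f ∈ c0 := by
  have h := (Complex.continuous_ofReal.tendsto 0).comp hf
  simp only [Function.comp_def, Complex.ofReal_zero] at h; exact h

lemma zero_mem_c0 : (0 : ℕ → ℂ) ∈ c0 := tendsto_const_nhds

lemma Jset_isCalkin {f : ℕ → ℝ} (hfa : Antitone f) (hf0 : ∀ k, 0 ≤ f k) :
    IsCalkinSpace (Jset f) := by
  refine ⟨fun β hβ => hβ.1, ⟨zero_mem_c0, 1, one_pos, 1, one_pos, fun n => ?_⟩, ?_, ?_, ?_⟩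
  · rw [rearr_zero]
    have := hf0 (n / 1)
    linarith
  · rintro β ⟨hβ0, C₁, hC₁, m₁, hm₁, h₁⟩ γ ⟨hγ0, C₂, hC₂, m₂, hm₂, h₂⟩
    refine ⟨by have := Filter.Tendsto.add hβ0 hγ0; simpa [c0, Pi.add_def] using this,
      C₁ + C₂, by linarith, 2 * max m₁ m₂, by positivity, fun n => ?_⟩
    have hij : n = n / 2 + (n - n / 2) := by omega
    have hstep : rearr (β + γ) n ≤ rearr β (n / 2) + rearr γ (n - n / 2) := by
      conv_lhs => rw [hij]
      exact rearr_add_le hβ0 hγ0 _ _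
    have key : ∀ (m' : ℕ), 0 < m' → m' ≤ max m₁ m₂ → ∀ j, n / 2 ≤ j →
        f (j / m') ≤ f (n / (2 * max m₁ m₂)) := by
      intro m' hm' hle j hj
      apply hfa
      calc n / (2 * max m₁ m₂) ≤ n / (2 * m') := by
            apply Nat.div_le_div_left (by omega) (by omega)
        _ = n / 2 / m' := (Nat.div_div_eq_div_mul n 2 m').symm
        _ ≤ j / m' := Nat.div_le_div_right hj
    have e₁ : rearr β (n / 2) ≤ C₁ * f (n / (2 * max m₁ m₂)) := by
      calc rearr β (n / 2) ≤ C₁ * f (n / 2 / m₁) := h₁ _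
        _ ≤ C₁ * f (n / (2 * max m₁ m₂)) := by
            apply mul_le_mul_of_nonneg_left _ hC₁.le
            exact key m₁ hm₁ (le_max_left _ _) _ le_rfl
    have e₂ : rearr γ (n - n / 2) ≤ C₂ * f (n / (2 * max m₁ m₂)) := by
      calc rearr γ (n - n / 2) ≤ C₂ * f ((n - n / 2) / m₂) := h₂ _
        _ ≤ C₂ * f (n / (2 * max m₁ m₂)) := by
            apply mul_le_mul_of_nonneg_left _ hC₂.le
            exact key m₂ hm₂ (le_max_right _ _) _ (by omega)
    calc rearr (β + γ) n ≤ rearr β (n / 2) + rearr γ (n - n / 2) := hstep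
      _ ≤ (C₁ + C₂) * f (n / (2 * max m₁ m₂)) := by linarith
  · rintro c β ⟨hβ0, C, hC, m, hm, h⟩
    refine ⟨by have := Filter.Tendsto.const_smul hβ0 c; simpa [c0, Pi.smul_def] using this,
      (‖c‖ + 1) * C, by positivity, m, hm, fun n => ?_⟩
    rw [rearr_smul hβ0]
    calc ‖c‖ * rearr β n ≤ ‖c‖ * (C * f (n / m)) := by
          apply mul_le_mul_of_nonneg_left (h n) (norm_nonneg _)
      _ ≤ (‖c‖ + 1) * C * f (n / m) := by
          have h1 : 0 ≤ C * f (n / m) := mul_nonneg hC.le (hf0 _)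
          nlinarith [norm_nonneg c]
  · rintro β ⟨hβ0, C, hC, m, hm, h⟩ γ hγ0 hdom
    exact ⟨hγ0, C, hC, m, hm, fun n => le_trans (hdom n) (h n)⟩

lemma tendsto_nat_div_atTop {m : ℕ} (hm : 0 < m) :
    Filter.Tendsto (fun n : ℕ => n / m) Filter.atTop Filter.atTop := by
  apply Filter.tendsto_atTop_atTop.mpr
  intro b
  exact ⟨b * m, fun n hn => (Nat.le_div_iff_mul_le hm).mpr hn⟩

lemma toC_mem_Jset {f : ℕ → ℝ} (hfa : Antitone f) (hf0 : ∀ k, 0 ≤ f k)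
    (hfc : Filter.Tendsto f Filter.atTop (nhds 0)) : toC f ∈ Jset f := by
  refine ⟨toC_mem_c0 hfc, 1, one_pos, 1, one_pos, fun n => ?_⟩
  rw [rearr_toC_of_antitone hfa hf0, Nat.div_one, one_mul]

lemma rearr_of_sort {β : ℕ → ℂ} {d : ℕ → ℝ} (hd : (fun k => ‖β k‖) = d)
    (π : ℕ → ℕ) (hinj : Function.Injective π)
    (hcov : ∀ k, d k ≠ 0 → k ∈ Set.range π)
    (hanti : Antitone fun n => d (π n)) (hd0 : ∀ k, 0 ≤ d k) (n : ℕ) :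
    rearr β n = d (π n) := by
  rw [rearr, rearrSum_eq_rS, rearrSum_eq_rS, hd,
    (Sorting.mk π hinj hcov hanti).rS_eq hd0, (Sorting.mk π hinj hcov hanti).rS_eq hd0,
    Finset.sum_range_succ]
  show (∑ i ∈ Finset.range n, d (π i)) + d (π n) - ∑ i ∈ Finset.range n, d (π i) = d (π n)
  ring

/-- the doubling step: if `toC f ∈ K` then the doubled sequence is in `K` -/
lemma double_mem {K : Set (ℕ → ℂ)} (hK : IsCalkinSpace K) {f : ℕ → ℝ}
    (hfa : Antitone f) (hf0 : ∀ k, 0 ≤ f k)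
    (hfc : Filter.Tendsto f Filter.atTop (nhds 0)) (hfK : toC f ∈ K) :
    toC (fun n => f (n / 2)) ∈ K := by
  set b : ℕ → ℝ := fun k => if Even k then f (k / 2) else 0 with hb
  set c : ℕ → ℝ := fun k => if Even k then 0 else f (k / 2) with hc
  have hb0 : ∀ k, 0 ≤ b k := by intro k; rw [hb]; dsimp; split <;> [exact hf0 _; rfl]
  have hc0 : ∀ k, 0 ≤ c k := by intro k; rw [hc]; dsimp; split <;> [rfl; exact hf0 _]
  have hnormb : (fun k => ‖toC b k‖) = b := by
    funext k; simp [toC, abs_of_nonneg (hb0 k)]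
  have hnormc : (fun k => ‖toC c k‖) = c := by
    funext k; simp [toC, abs_of_nonneg (hc0 k)]
  have hbound : ∀ (u : ℕ → ℝ), (∀ k, u k ≤ f (k / 2)) → (∀ k, 0 ≤ u k) →
      toC u ∈ c0 := by
    intro u hu hu0
    apply toC_mem_c0
    apply squeeze_zero hu0 hu
    exact hfc.comp (tendsto_nat_div_atTop (by norm_num))
  have hbc0 : toC b ∈ c0 := by
    apply hbound; · intro k; rw [hb]; dsimp; split <;> [rfl; exact hf0 _]
    · exact hb0
  have hcc0 : toC c ∈ c0 := by
    apply hbound; · intro k; rw [hc]; dsimp; split <;> [exact hf0 _; rfl]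
    · exact hc0
  -- sorting of b via even numbers
  have hb2 : ∀ n, b (2 * n) = f n := by
    intro n; rw [hb]; dsimp
    rw [if_pos ⟨n, by omega⟩]
    congr 1; omega
  have hc2 : ∀ n, c (2 * n + 1) = f n := by
    intro n; rw [hc]; dsimp
    rw [if_neg (by rintro ⟨j, hj⟩; omega)]
    congr 1; omega
  have hrb : ∀ n, rearr (toC b) n = f n := by
    intro n
    have := rearr_of_sort hnormb (fun n => 2 * n) (fun x y h => by dsimp at h; omega)
      (by
        intro k hk
        rw [hb] at hk; dsimp at hk
        by_cases he : Even k
        · obtain ⟨j, hj⟩ := he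
          exact ⟨j, by dsimp; omega⟩
        · rw [if_neg he] at hk; exact absurd rfl hk)
      (by
        intro x y h
        dsimp
        rw [hb2, hb2]
        exact hfa h) hb0 n
    rw [this, hb2]
  have hrc : ∀ n, rearr (toC c) n = f n := by
    intro n
    have := rearr_of_sort hnormc (fun n => 2 * n + 1) (fun x y h => by dsimp at h; omega)
      (by
        intro k hk
        rw [hc] at hk; dsimp at hk
        by_cases he : Even k
        · rw [if_pos he] at hk; exact absurd rfl hk
        · rw [Nat.not_even_iff] at he
          exact ⟨k / 2, by dsimp; omega⟩)
      (by
        intro x y h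
        dsimp
        rw [hc2, hc2]
        exact hfa h) hc0 n
    rw [this, hc2]
  have hbK : toC b ∈ K := by
    apply hK.2.2.2.2 (toC f) hfK (toC b) hbc0
    intro n
    rw [hrb, rearr_toC_of_antitone hfa hf0]
  have hcK : toC c ∈ K := by
    apply hK.2.2.2.2 (toC f) hfK (toC c) hcc0
    intro n
    rw [hrc, rearr_toC_of_antitone hfa hf0]
  have hsum : toC b + toC c = toC (fun n => f (n / 2)) := by
    funext k
    show ((b k : ℂ) + (c k : ℂ)) = ((f (k / 2) : ℝ) : ℂ)
    rw [← Complex.ofReal_add]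
    congr 1
    rw [hb, hc]; dsimp
    by_cases he : Even k
    · rw [if_pos he, if_pos he, add_zero]
    · rw [if_neg he, if_neg he, zero_add]
  have := hK.2.2.1 (toC b) hbK (toC c) hcK
  rwa [hsum] at this

lemma pow_double_mem {K : Set (ℕ → ℂ)} (hK : IsCalkinSpace K) {f : ℕ → ℝ}
    (hfa : Antitone f) (hf0 : ∀ k, 0 ≤ f k)
    (hfc : Filter.Tendsto f Filter.atTop (nhds 0)) (hfK : toC f ∈ K) (k : ℕ) :
    toC (fun n => f (n / 2 ^ k)) ∈ K := by
  induction k with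
  | zero => simpa using hfK
  | succ k ih =>
    set g : ℕ → ℝ := fun n => f (n / 2 ^ k) with hg
    have hga : Antitone g := fun x y h => hfa (Nat.div_le_div_right h)
    have hg0 : ∀ n, 0 ≤ g n := fun n => hf0 _
    have hgc : Filter.Tendsto g Filter.atTop (nhds 0) :=
      hfc.comp (tendsto_nat_div_atTop (by positivity))
    have h2 := double_mem hK hga hg0 hgc ih
    have : (fun n => g (n / 2)) = fun n => f (n / 2 ^ (k + 1)) := by
      funext n
      show f (n / 2 / 2 ^ k) = f (n / 2 ^ (k + 1))
      congr 1
      rw [Nat.div_div_eq_div_mul]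
      congr 1
      rw [pow_succ]
      ring
    rwa [this] at h2

lemma Jset_subset_calkin {K : Set (ℕ → ℂ)} (hK : IsCalkinSpace K) {f : ℕ → ℝ}
    (hfa : Antitone f) (hf0 : ∀ k, 0 ≤ f k)
    (hfc : Filter.Tendsto f Filter.atTop (nhds 0)) (hfK : toC f ∈ K) :
    Jset f ⊆ K := by
  rintro β ⟨hβ0, C, hC, m, hm, h⟩
  have hk : m ≤ 2 ^ m := (Nat.lt_two_pow_self (n := m)).le
  set g : ℕ → ℝ := fun n => f (n / 2 ^ m) with hg
  have hga : Antitone g := fun x y h' => hfa (Nat.div_le_div_right h')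
  have hg0 : ∀ n, 0 ≤ g n := fun n => hf0 _
  have hgc : Filter.Tendsto g Filter.atTop (nhds 0) :=
    hfc.comp (tendsto_nat_div_atTop (by positivity))
  have hgK : toC g ∈ K := pow_double_mem hK hfa hf0 hfc hfK m
  have heltK : ((C : ℂ)) • toC g ∈ K := hK.2.2.2.1 _ _ hgK
  apply hK.2.2.2.2 _ heltK _ hβ0
  intro n
  rw [rearr_smul (toC_mem_c0 hgc)]
  have h1 : ‖(C:ℂ)‖ = C := by
    rw [Complex.norm_real]
    exact abs_of_pos hC
  rw [h1, rearr_toC_of_antitone hga hg0]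
  calc rearr β n ≤ C * f (n / m) := h n
    _ ≤ C * g n := by
        apply mul_le_mul_of_nonneg_left _ hC.le
        apply hfa
        exact Nat.div_le_div_left hk hm

lemma mem_principalCalkin_self (β : ℕ → ℂ) : β ∈ principalCalkin β :=
  fun _ hK => hK.2

lemma principalCalkin_subset {β : ℕ → ℂ} {K : Set (ℕ → ℂ)} (hK : IsCalkinSpace K)
    (hβ : β ∈ K) : principalCalkin β ⊆ K :=
  Set.sInter_subset_of_mem ⟨hK, hβ⟩

lemma principalCalkin_eq_Jset {f : ℕ → ℝ} (hfa : Antitone f) (hf0 : ∀ k, 0 ≤ f k)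
    (hfc : Filter.Tendsto f Filter.atTop (nhds 0)) :
    principalCalkin (toC f) = Jset f := by
  apply Set.Subset.antisymm
  · exact principalCalkin_subset (Jset_isCalkin hfa hf0) (toC_mem_Jset hfa hf0 hfc)
  · intro β hβ
    intro K hK
    exact Jset_subset_calkin hK.1 hfa hf0 hfc hK.2 hβ

/-! ### Basic Calkin space facts -/

lemma isCalkinSpace_c0 : IsCalkinSpace c0 := by
  refine ⟨le_refl _, zero_mem_c0, ?_, ?_, ?_⟩
  · intro a ha b hb
    have := Filter.Tendsto.add ha hb
    simpa [c0, Pi.add_def] using this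
  · intro c a ha
    have := Filter.Tendsto.const_smul ha c
    simpa [c0, Pi.smul_def] using this
  · intro a _ b hb _
    exact hb

lemma isCalkinSpace_sInter {S : Set (Set (ℕ → ℂ))} (hne : S.Nonempty)
    (h : ∀ K ∈ S, IsCalkinSpace K) : IsCalkinSpace (⋂₀ S) := by
  obtain ⟨K₀, hK₀⟩ := hne
  refine ⟨fun β hβ => (h K₀ hK₀).1 (hβ K₀ hK₀), ?_, ?_, ?_, ?_⟩
  · exact fun K hK => (h K hK).2.1
  · intro a ha b hb K hK
    exact (h K hK).2.2.1 a (ha K hK) b (hb K hK)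
  · intro c a ha K hK
    exact (h K hK).2.2.2.1 c a (ha K hK)
  · intro a ha b hb hba K hK
    exact (h K hK).2.2.2.2 a (ha K hK) b hb hba

lemma isCalkinSpace_principal {f : ℕ → ℝ}
    (hfc : Filter.Tendsto f Filter.atTop (nhds 0)) :
    IsCalkinSpace (principalCalkin (toC f)) := by
  apply isCalkinSpace_sInter
  · exact ⟨c0, isCalkinSpace_c0, toC_mem_c0 hfc⟩
  · exact fun K hK => hK.1

/-! ### Tensor sequence machinery -/

/-- the double sequence of products, encoded on `ℕ` via the pairing bijection -/
def dT (β γ : ℕ → ℂ) : ℕ → ℝ := fun k => ‖β (Nat.unpair k).1‖ * ‖γ (Nat.unpair k).2‖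

lemma dT_nonneg (β γ : ℕ → ℂ) (k : ℕ) : 0 ≤ dT β γ k :=
  mul_nonneg (norm_nonneg _) (norm_nonneg _)

lemma unpair_injective : Function.Injective Nat.unpair := by
  intro a b h
  rw [← Nat.pair_unpair a, h, Nat.pair_unpair]

lemma tensorSum_eq_rS (β γ : ℕ → ℂ) (n : ℕ) : tensorSum β γ n = rS (dT β γ) n := by
  unfold tensorSum rS
  congr 1
  ext x
  simp only [Set.mem_image, Set.mem_setOf_eq]
  constructor
  · rintro ⟨F, hF, rfl⟩
    refine ⟨F.map Nat.pairEquiv.toEmbedding, by simp [hF], ?_⟩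
    rw [Finset.sum_map]
    apply Finset.sum_congr rfl
    intro p _
    simp only [Equiv.coe_toEmbedding]
    show dT β γ (Nat.pairEquiv p) = _
    unfold dT
    have : Nat.unpair (Nat.pairEquiv p) = p := Nat.pairEquiv.symm_apply_apply p
    rw [this]
  · rintro ⟨G, hG, rfl⟩
    refine ⟨G.map Nat.pairEquiv.symm.toEmbedding, by simp [hG], ?_⟩
    rw [Finset.sum_map]
    apply Finset.sum_congr rfl
    intro k _
    simp only [Equiv.coe_toEmbedding]
    show _ = dT β γ k
    unfold dT
    rfl

/-- null sequences are bounded in norm -/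
lemma c0_bound {β : ℕ → ℂ} (hβ : β ∈ c0) : ∃ B > (0:ℝ), ∀ k, ‖β k‖ ≤ B := by
  have hfin := finAbove_of_c0 hβ 1 one_pos
  refine ⟨1 + ∑ k ∈ hfin.toFinset, ‖β k‖, by positivity, fun k => ?_⟩
  by_cases hk : 1 < ‖β k‖
  · have hmem : k ∈ hfin.toFinset := by
      rw [Set.Finite.mem_toFinset]; exact hk
    have := Finset.single_le_sum (f := fun k => ‖β k‖)
      (fun i _ => norm_nonneg _) hmem
    linarith
  · push_neg at hk
    have : 0 ≤ ∑ k ∈ hfin.toFinset, ‖β k‖ :=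
      Finset.sum_nonneg fun i _ => norm_nonneg _
    linarith

lemma finAbove_dT {β γ : ℕ → ℂ} (hβ : β ∈ c0) (hγ : γ ∈ c0) : FinAbove (dT β γ) := by
  intro ε hε
  obtain ⟨Bβ, hBβ, hbβ⟩ := c0_bound hβ
  obtain ⟨Bγ, hBγ, hbγ⟩ := c0_bound hγ
  have hPβ : {p | ε / Bγ < ‖β p‖}.Finite := finAbove_of_c0 hβ _ (by positivity)
  have hQγ : {q | ε / Bβ < ‖γ q‖}.Finite := finAbove_of_c0 hγ _ (by positivity)
  have hsub : {k | ε < dT β γ k} ⊆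
      Nat.unpair ⁻¹' ({p | ε / Bγ < ‖β p‖} ×ˢ {q | ε / Bβ < ‖γ q‖}) := by
    intro k hk
    simp only [Set.mem_setOf_eq] at hk
    unfold dT at hk
    constructor
    · show ε / Bγ < ‖β (Nat.unpair k).1‖
      rw [div_lt_iff₀ hBγ]
      calc ε < ‖β (Nat.unpair k).1‖ * ‖γ (Nat.unpair k).2‖ := hk
        _ ≤ ‖β (Nat.unpair k).1‖ * Bγ := by
            apply mul_le_mul_of_nonneg_left (hbγ _) (norm_nonneg _)
    · show ε / Bβ < ‖γ (Nat.unpair k).2‖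
      rw [div_lt_iff₀ hBβ]
      calc ε < ‖β (Nat.unpair k).1‖ * ‖γ (Nat.unpair k).2‖ := hk
        _ ≤ Bβ * ‖γ (Nat.unpair k).2‖ := by
            apply mul_le_mul_of_nonneg_right (hbβ _) (norm_nonneg _)
        _ = ‖γ (Nat.unpair k).2‖ * Bβ := mul_comm _ _
  exact Set.Finite.subset (Set.Finite.preimage unpair_injective.injOn
    (Set.Finite.prod hPβ hQγ)) hsub

lemma tensorSeq_eq_sort {β γ : ℕ → ℂ} (S : Sorting (dT β γ)) (n : ℕ) :
    tensorSeq β γ n = dT β γ (S.π n) := by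
  rw [tensorSeq, tensorSum_eq_rS, tensorSum_eq_rS, S.rS_eq (dT_nonneg β γ),
    S.rS_eq (dT_nonneg β γ), Finset.sum_range_succ]
  ring

/-- distribution of the tensor sequence on pairs -/
lemma ncard_dT_eq_pairs (β γ : ℕ → ℂ) (s : ℝ) :
    {k | s < dT β γ k}.ncard = {pq : ℕ × ℕ | s < ‖β pq.1‖ * ‖γ pq.2‖}.ncard := by
  have him : {k | s < dT β γ k} =
      (fun pq : ℕ × ℕ => Nat.pairEquiv pq) '' {pq : ℕ × ℕ | s < ‖β pq.1‖ * ‖γ pq.2‖} := by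
    ext k
    simp only [Set.mem_setOf_eq, Set.mem_image]
    constructor
    · intro hk
      exact ⟨Nat.unpair k, hk, Nat.pairEquiv.apply_symm_apply k⟩
    · rintro ⟨pq, hpq, rfl⟩
      unfold dT
      have h2 : Nat.unpair (Nat.pairEquiv pq) = pq := Nat.pairEquiv.symm_apply_apply pq
      rwa [h2]
  rw [him, Set.ncard_image_of_injective _ Nat.pairEquiv.injective]

lemma pairs_finite_of_subset {β γ : ℕ → ℂ} (hβ : β ∈ c0) (hγ : γ ∈ c0) {s : ℝ}
    (hs : 0 < s) : {pq : ℕ × ℕ | s < ‖β pq.1‖ * ‖γ pq.2‖}.Finite := by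
  have h := finAbove_dT hβ hγ s hs
  have : {pq : ℕ × ℕ | s < ‖β pq.1‖ * ‖γ pq.2‖} =
      (fun pq : ℕ × ℕ => Nat.pairEquiv pq) ⁻¹' {k | s < dT β γ k} := by
    ext pq
    simp only [Set.mem_setOf_eq, Set.mem_preimage]
    unfold dT
    have h2 : Nat.unpair (Nat.pairEquiv pq) = pq := Nat.pairEquiv.symm_apply_apply pq
    rw [h2]
  rw [this]
  exact Set.Finite.preimage Nat.pairEquiv.injective.injOn h

lemma tensorSeq_spec {β γ : ℕ → ℂ} (hβ : β ∈ c0) (hγ : γ ∈ c0) :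
    Antitone (tensorSeq β γ) ∧ (∀ n, 0 ≤ tensorSeq β γ n) ∧
    Filter.Tendsto (tensorSeq β γ) Filter.atTop (nhds 0) ∧
    (∀ s : ℝ, 0 ≤ s → {n | s < tensorSeq β γ n}.ncard =
      {pq : ℕ × ℕ | s < ‖β pq.1‖ * ‖γ pq.2‖}.ncard) ∧
    (∀ s : ℝ, 0 < s → {n | s < tensorSeq β γ n}.Finite) ∧
    (∀ s : ℝ, 0 ≤ s → {n | s < tensorSeq β γ n}.Finite →
      {pq : ℕ × ℕ | s < ‖β pq.1‖ * ‖γ pq.2‖}.Finite) := by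
  have hfT := finAbove_dT hβ hγ
  obtain S := Sorting.mk' (dT_nonneg β γ) hfT
  have heq : tensorSeq β γ = fun n => dT β γ (S.π n) := funext (tensorSeq_eq_sort S)
  have hanti : Antitone (tensorSeq β γ) := by rw [heq]; exact S.anti
  have hnn : ∀ n, 0 ≤ tensorSeq β γ n := by
    intro n; rw [heq]; exact dT_nonneg β γ _
  have hfin : FinAbove (tensorSeq β γ) := by
    intro ε hε
    rw [heq]
    exact S.finite_comp (hfT ε hε)
  refine ⟨hanti, hnn, tendsto_zero_of_finAbove hnn hfin, ?_, fun s hs => hfin s hs, ?_⟩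
  · intro s hs
    rw [← ncard_dT_eq_pairs, heq]
    exact (S.ncard_count_eq hs).symm
  · intro s hs hfins
    have h1 : {pq : ℕ × ℕ | s < ‖β pq.1‖ * ‖γ pq.2‖} =
        Nat.unpair '' {k | s < dT β γ k} := by
      ext pq
      simp only [Set.mem_setOf_eq, Set.mem_image]
      constructor
      · intro hpq
        refine ⟨Nat.pairEquiv pq, ?_, Nat.pairEquiv.symm_apply_apply pq⟩
        show s < dT β γ (Nat.pairEquiv pq)
        unfold dT
        have h2 : Nat.unpair (Nat.pairEquiv pq) = pq := Nat.pairEquiv.symm_apply_apply pq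
        rwa [h2]
      · rintro ⟨k, hk, rfl⟩
        exact hk
    rw [h1, S.count_eq hs, ← Set.image_comp]
    apply Set.Finite.image
    have h3 : {n | s < dT β γ (S.π n)} = {n | s < tensorSeq β γ n} := by
      ext n
      rw [heq]
    rw [h3]
    exact hfins

lemma tensorSeq_toC_mem_c0 {β γ : ℕ → ℂ} (hβ : β ∈ c0) (hγ : γ ∈ c0) :
    toC (tensorSeq β γ) ∈ c0 :=
  toC_mem_c0 (tensorSeq_spec hβ hγ).2.2.1

/-- the tensor sequence dominates products with the top term -/
lemma tensorSeq_ge {f : ℕ → ℝ} (hfa : Antitone f) (hf0 : ∀ k, 0 ≤ f k)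
    (hfc : Filter.Tendsto f Filter.atTop (nhds 0)) (n : ℕ) :
    f n * f 0 ≤ tensorSeq (toC f) (toC f) n := by
  obtain ⟨hanti, hnn, _, hcount, hfin, hfintrans⟩ :=
    tensorSeq_spec (toC_mem_c0 hfc) (toC_mem_c0 hfc)
  by_contra hlt
  push_neg at hlt
  set t := tensorSeq (toC f) (toC f) with ht
  set s := t n with hs
  have hs0 : 0 ≤ s := hnn n
  have hnorm : ∀ k, ‖toC f k‖ = f k := fun k => by
    simp [toC, abs_of_nonneg (hf0 k)]
  -- the pairs (i, 0) for i ≤ n all have product > s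
  have hmem : ∀ i ≤ n, s < ‖toC f i‖ * ‖toC f 0‖ := by
    intro i hi
    rw [hnorm, hnorm]
    calc s < f n * f 0 := hlt
      _ ≤ f i * f 0 := mul_le_mul_of_nonneg_right (hfa hi) (hf0 0)
  -- the superlevel set of t at level t n is finite and has at most n elements
  have hsubt := antitone_count_le hanti (le_refl s)
  have hfint : {m | s < t m}.Finite := (Set.finite_Iio n).subset hsubt
  have hfinP : {pq : ℕ × ℕ | s < ‖toC f pq.1‖ * ‖toC f pq.2‖}.Finite :=
    hfintrans s hs0 hfint
  have hinj : Function.Injective (fun i : ℕ => ((i, 0) : ℕ × ℕ)) := by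
    intro a b h; simpa using h
  have h1 : n + 1 ≤ {pq : ℕ × ℕ | s < ‖toC f pq.1‖ * ‖toC f pq.2‖}.ncard := by
    have hsub : (fun i : ℕ => ((i, 0) : ℕ × ℕ)) '' Set.Iic n ⊆
        {pq : ℕ × ℕ | s < ‖toC f pq.1‖ * ‖toC f pq.2‖} := by
      rintro _ ⟨i, hi, rfl⟩
      exact hmem i hi
    have := Set.ncard_le_ncard hsub hfinP
    rwa [Set.ncard_image_of_injective _ hinj, ncard_Iic_nat] at this
  -- but the superlevel set of t at its own value t n has at most n elements
  have h2 : {m | s < t m}.ncard ≤ n := by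
    have := Set.ncard_le_ncard hsubt (Set.finite_Iio n)
    rwa [ncard_Iio] at this
  rw [hcount s hs0] at h2
  omega

/-! ### Counting lemmas for the ω-adic blocks -/

section Counting

variable {ω : ℝ} (hω : ω ∈ Set.Ioo (0:ℝ) 1) {α : ℕ → ℝ}
  (hαa : Antitone α) (hα0 : ∀ n, 0 ≤ α n)
  (hαc : Filter.Tendsto α Filter.atTop (nhds 0)) (hα1 : α 0 ≤ 1)

lemma finAbove_alpha (hα0 : ∀ n, 0 ≤ α n)
    (hαc : Filter.Tendsto α Filter.atTop (nhds 0)) : FinAbove α := by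
  have h := finAbove_of_c0 (toC_mem_c0 hαc)
  intro ε hε
  have : {k | ε < α k} = {k | ε < ‖toC α k‖} := by
    ext k
    simp [toC, abs_of_nonneg (hα0 k)]
  rw [this]
  exact h ε hε

include hω hαa hα0 hαc hα1 in
lemma Ktil_eq_count (n : ℕ) :
    Ktil ω α n = {m | ω ^ (n+1) < α m}.ncard := by
  obtain ⟨hω0, hω1⟩ := hω
  have hfin : ∀ s : ℝ, 0 < s → {m | s < α m}.Finite := fun s hs =>
    finAbove_alpha hα0 hαc s hs
  induction n with
  | zero =>
    show Kw ω α 0 = _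
    unfold Kw
    congr 1
    ext m
    simp only [Set.mem_setOf_eq, pow_one, pow_zero]
    constructor
    · rintro ⟨h1, _⟩; exact h1
    · intro h1; exact ⟨h1, le_trans (hαa (Nat.zero_le m)) hα1⟩
  | succ n ih =>
    have hstep : Ktil ω α (n+1) = Ktil ω α n + Kw ω α (n+1) := by
      unfold Ktil
      rw [Finset.sum_range_succ]
    rw [hstep, ih]
    unfold Kw
    have hdisj : Disjoint {m | ω ^ (n+1) < α m}
        {m | ω ^ (n+2) < α m ∧ α m ≤ ω ^ (n+1)} := by
      rw [Set.disjoint_left]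
      rintro m hm ⟨_, h2⟩
      simp only [Set.mem_setOf_eq] at hm
      linarith
    have hunion : {m | ω ^ (n+1) < α m} ∪ {m | ω ^ (n+2) < α m ∧ α m ≤ ω ^ (n+1)} =
        {m | ω ^ (n+2) < α m} := by
      ext m
      simp only [Set.mem_union, Set.mem_setOf_eq]
      constructor
      · rintro (h | ⟨h, _⟩)
        · calc ω ^ (n+2) < ω ^ (n+1) := pow_lt_pow_right_of_lt_one₀ hω0 hω1 (by omega)
            _ < α m := h
        · exact h
      · intro h
        by_cases h' : ω ^ (n+1) < α m
        · exact Or.inl h'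
        · push_neg at h'
          exact Or.inr ⟨h, h'⟩
    have h1 := Set.ncard_union_eq hdisj (hfin _ (by positivity))
      ((hfin _ (by positivity)).subset (fun m hm => hm.1))
    rw [hunion] at h1
    have : n + 1 + 1 = n + 2 := rfl
    rw [this, ← h1]

include hω hαa hα0 hαc hα1 in
lemma level_exists {x : ℝ} (hx0 : 0 < x) (hx1 : x ≤ 1) :
    ∃ i : ℕ, ω ^ (i+1) < x ∧ x ≤ ω ^ i := by
  obtain ⟨hω0, hω1⟩ := hω
  have hex : ∃ j : ℕ, ω ^ j < x := exists_pow_lt_of_lt_one hx0 hω1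
  have hspec : ω ^ (Nat.find hex) < x := Nat.find_spec hex
  have hj₀0 : Nat.find hex ≠ 0 := by
    intro h
    rw [h, pow_zero] at hspec
    linarith
  refine ⟨Nat.find hex - 1, ?_, ?_⟩
  · have heq : Nat.find hex - 1 + 1 = Nat.find hex := by omega
    rw [heq]
    exact hspec
  · have := Nat.find_min hex (m := Nat.find hex - 1) (by omega)
    push_neg at this
    exact this

/-- pairs superlevel sets are finite -/
lemma pairs_alpha_finite (hα0 : ∀ n, 0 ≤ α n) (hα1 : α 0 ≤ 1) (hαa : Antitone α)
    (hαc : Filter.Tendsto α Filter.atTop (nhds 0)) {s : ℝ} (hs : 0 < s) :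
    {pq : ℕ × ℕ | s < α pq.1 * α pq.2}.Finite := by
  have h := pairs_finite_of_subset (toC_mem_c0 hαc) (toC_mem_c0 hαc) hs
  have : {pq : ℕ × ℕ | s < α pq.1 * α pq.2} =
      {pq : ℕ × ℕ | s < ‖toC α pq.1‖ * ‖toC α pq.2‖} := by
    ext pq
    simp [toC, abs_of_nonneg (hα0 _)]
  rw [this]
  exact h

include hω hαa hα0 hαc hα1 in
lemma Mtil_le_count (n : ℕ) :
    (Mtil ω α n : ℕ) ≤ {pq : ℕ × ℕ | ω ^ (n+2) < α pq.1 * α pq.2}.ncard ∧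
    {pq : ℕ × ℕ | ω ^ n < α pq.1 * α pq.2}.ncard ≤ Mtil ω α n := by
  obtain ⟨hω0, hω1⟩ := id hω
  have hfin : ∀ s : ℝ, 0 < s → {m | s < α m}.Finite := fun s hs =>
    finAbove_alpha hα0 hαc s hs
  have hAfin : ∀ i : ℕ, {m | ω ^ (i+1) < α m ∧ α m ≤ ω ^ i}.Finite := fun i =>
    (hfin _ (by positivity)).subset (fun m hm => hm.1)
  set A : ℕ → Finset ℕ := fun i => (hAfin i).toFinset with hA
  have hKA : ∀ i, Kw ω α i = (A i).card := by
    intro i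
    rw [hA]
    unfold Kw
    rw [Set.ncard_eq_toFinset_card _ (hAfin i)]
  have hmemA : ∀ i m, m ∈ A i ↔ (ω ^ (i+1) < α m ∧ α m ≤ ω ^ i) := by
    intro i m
    rw [hA]
    dsimp
    rw [Set.Finite.mem_toFinset]
    rfl
  have hAdisj : ∀ i i' m, m ∈ A i → m ∈ A i' → i = i' := by
    intro i i' m h1 h2
    rw [hmemA] at h1 h2
    by_contra hne
    rcases Nat.lt_or_ge i i' with h | h
    · have : ω ^ i' ≤ ω ^ (i+1) := pow_le_pow_of_le_one hω0.le hω1.le (by omega)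
      linarith [h1.1, h2.2]
    · have hlt : i' < i := by omega
      have : ω ^ i ≤ ω ^ (i'+1) := pow_le_pow_of_le_one hω0.le hω1.le (by omega)
      linarith [h2.1, h1.2]
  -- the triangle of indices
  set P : Finset (ℕ × ℕ) := (Finset.range (n+1)).biUnion Finset.HasAntidiagonal.antidiagonal with hP
  have hmemP : ∀ p : ℕ × ℕ, p ∈ P ↔ p.1 + p.2 ≤ n := by
    intro p
    rw [hP, Finset.mem_biUnion]
    constructor
    · rintro ⟨l, hl, hp⟩
      rw [Finset.HasAntidiagonal.mem_antidiagonal] at hp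
      rw [Finset.mem_range] at hl
      omega
    · intro h
      exact ⟨p.1 + p.2, Finset.mem_range.mpr (by omega), Finset.HasAntidiagonal.mem_antidiagonal.mpr rfl⟩
  have hMtil : Mtil ω α n = ∑ p ∈ P, Kw ω α p.1 * Kw ω α p.2 := by
    rw [hP]
    rw [Finset.sum_biUnion]
    · unfold Mtil Mw
      apply Finset.sum_congr rfl
      intro l _
      rw [Finset.Nat.sum_antidiagonal_eq_sum_range_succ_mk]
    · intro x _ y _ hxy
      simp only [Finset.disjoint_left]
      intro p hp hp'
      rw [Finset.HasAntidiagonal.mem_antidiagonal] at hp hp'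
      exact hxy (by omega)
  -- Mtil as the cardinality of a big finset of pairs
  set BU : Finset (ℕ × ℕ) := P.biUnion (fun p => A p.1 ×ˢ A p.2) with hBU
  have hcardBU : BU.card = Mtil ω α n := by
    rw [hBU, Finset.card_biUnion, hMtil]
    · apply Finset.sum_congr rfl
      intro p _
      rw [Finset.card_product, hKA, hKA]
    · intro x _ y _ hxy
      simp only [Finset.disjoint_left]
      rintro ⟨a, b⟩ hab hab'
      rw [Finset.mem_product] at hab hab'
      exact hxy (by
        have h1 := hAdisj _ _ _ hab.1 hab'.1
        have h2 := hAdisj _ _ _ hab.2 hab'.2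
        exact Prod.ext h1 h2)
  constructor
  · -- upper bound
    rw [← hcardBU]
    have hsub : ↑BU ⊆ {pq : ℕ × ℕ | ω ^ (n+2) < α pq.1 * α pq.2} := by
      intro pq hpq
      rw [Finset.mem_coe, Finset.mem_biUnion] at hpq
      obtain ⟨p, hp, hpq⟩ := hpq
      rw [Finset.mem_product] at hpq
      rw [hmemP] at hp
      obtain ⟨h1, h2⟩ := hpq
      rw [hmemA] at h1 h2
      simp only [Set.mem_setOf_eq]
      calc ω ^ (n+2) ≤ ω ^ (p.1 + 1 + (p.2 + 1)) :=
            pow_le_pow_of_le_one hω0.le hω1.le (by omega)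
        _ = ω ^ (p.1 + 1) * ω ^ (p.2 + 1) := by rw [← pow_add]
        _ < α pq.1 * α pq.2 := by
            apply mul_lt_mul'' h1.1 h2.1 (by positivity) (by positivity)
    have := Set.ncard_le_ncard hsub (pairs_alpha_finite hα0 hα1 hαa hαc (by positivity))
    rwa [Set.ncard_coe_finset] at this
  · -- lower bound
    rw [← hcardBU]
    have hsub : {pq : ℕ × ℕ | ω ^ n < α pq.1 * α pq.2} ⊆ ↑BU := by
      rintro ⟨a, b⟩ hab
      simp only [Set.mem_setOf_eq] at hab
      have hωn : (0:ℝ) < ω ^ n := by positivity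
      have hb1 : α b ≤ 1 := le_trans (hαa (Nat.zero_le b)) hα1
      have ha1 : α a ≤ 1 := le_trans (hαa (Nat.zero_le a)) hα1
      have ha0 : 0 < α a := by nlinarith [hα0 a, hα0 b]
      have hb0 : 0 < α b := by nlinarith [hα0 a, hα0 b]
      obtain ⟨i, hi1, hi2⟩ := level_exists hω hαa hα0 hαc hα1 ha0 ha1
      obtain ⟨j, hj1, hj2⟩ := level_exists hω hαa hα0 hαc hα1 hb0 hb1
      have hij : i + j ≤ n := by
        by_contra h
        push_neg at h
        have h1 : ω ^ (i + j) ≤ ω ^ n := pow_le_pow_of_le_one hω0.le hω1.le (by omega)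
        have h2 : α a * α b ≤ ω ^ (i+j) := by
          rw [pow_add]
          exact mul_le_mul hi2 hj2 hb0.le (by positivity)
        linarith
      rw [Finset.mem_coe, Finset.mem_biUnion]
      refine ⟨(i, j), (hmemP (i, j)).mpr hij, ?_⟩
      rw [Finset.mem_product]
      constructor
      · rw [hmemA]; exact ⟨hi1, hi2⟩
      · rw [hmemA]; exact ⟨hj1, hj2⟩
    have := Set.ncard_le_ncard hsub (BU.finite_toSet)
    rwa [Set.ncard_coe_finset] at this

end Counting

/-! ### Tensor domination -/

section TensorDom

variable {α : ℕ → ℝ} (hαa : Antitone α) (hα0 : ∀ n, 0 ≤ α n)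
  (hαc : Filter.Tendsto α Filter.atTop (nhds 0)) (hα1 : α 0 ≤ 1)

include hα0 in
lemma norm_toC_alpha : (fun k => ‖toC α k‖) = α := by
  funext k
  simp [toC, abs_of_nonneg (hα0 k)]

include hαa hα0 hαc hα1 in
lemma t_count {s : ℝ} (hs : 0 ≤ s) :
    {n | s < tensorSeq (toC α) (toC α) n}.ncard = {pq : ℕ × ℕ | s < α pq.1 * α pq.2}.ncard := by
  obtain ⟨_, _, _, hcount, _, _⟩ := tensorSeq_spec (toC_mem_c0 hαc) (toC_mem_c0 hαc)
  rw [hcount s hs]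
  congr 1
  ext pq
  simp only [Set.mem_setOf_eq]
  rw [congrFun (norm_toC_alpha hα0) pq.1, congrFun (norm_toC_alpha hα0) pq.2]

include hαa hα0 hαc hα1 in
lemma t_le_one (n : ℕ) : tensorSeq (toC α) (toC α) n ≤ 1 := by
  obtain ⟨hanti, hnn, _, _, hfin, _⟩ := tensorSeq_spec (toC_mem_c0 hαc) (toC_mem_c0 hαc)
  by_contra h
  push_neg at h
  have h1 : 0 < {m | (1:ℝ) < tensorSeq (toC α) (toC α) m}.ncard := by
    have := antitone_mem_lt_ncard hanti (hfin 1 one_pos) h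
    omega
  have h2 : {pq : ℕ × ℕ | (1:ℝ) < α pq.1 * α pq.2} = ∅ := by
    ext pq
    simp only [Set.mem_setOf_eq, Set.mem_empty_iff_false, iff_false, not_lt]
    calc α pq.1 * α pq.2 ≤ 1 * 1 := by
          apply mul_le_mul (le_trans (hαa (Nat.zero_le _)) hα1)
            (le_trans (hαa (Nat.zero_le _)) hα1) (hα0 _) (by linarith [hα0 0])
      _ = 1 := by ring
    
  have h3 := t_count hαa hα0 hαc hα1 (zero_le_one (α := ℝ))
  rw [h2, Set.ncard_empty] at h3
  omega

include hαa hα0 hαc hα1 in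
/-- Key comparison: if `β, γ` are dominated by dilates of `α`, their tensor sequence is
dominated by a dilate of `α ⊗ α`. -/
lemma tensor_dominated {β γ : ℕ → ℂ} (hβ : β ∈ c0) (hγ : γ ∈ c0)
    {C₁ C₂ : ℝ} (hC₁ : 0 < C₁) (hC₂ : 0 < C₂) {m₁ m₂ : ℕ} (hm₁ : 0 < m₁) (hm₂ : 0 < m₂)
    (hdβ : ∀ n, rearr β n ≤ C₁ * α (n / m₁)) (hdγ : ∀ n, rearr γ n ≤ C₂ * α (n / m₂))
    (n : ℕ) :
    tensorSeq β γ n ≤ C₁ * C₂ * tensorSeq (toC α) (toC α) (n / (m₁ * m₂)) := by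
  set t := tensorSeq (toC α) (toC α) with ht
  obtain ⟨hta, htn, _, _, htfin, _⟩ := tensorSeq_spec (toC_mem_c0 hαc) (toC_mem_c0 hαc)
  set u : ℕ → ℝ := fun n => C₁ * C₂ * t (n / (m₁ * m₂)) with hu
  have hM : 0 < m₁ * m₂ := by positivity
  have hua : Antitone u := by
    intro x y hxy
    exact mul_le_mul_of_nonneg_left (hta (Nat.div_le_div_right hxy)) (by positivity)
  have hun : ∀ k, 0 ≤ u k := fun k => by
    have := htn (k / (m₁ * m₂))
    positivity
  -- the superlevel sets of u
  have hulevel : ∀ s : ℝ, 0 < s →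
      {k | s < u k} = Set.Iio ({l | s / (C₁ * C₂) < t l}.ncard * (m₁ * m₂)) := by
    intro s hs
    have hs' : 0 < s / (C₁ * C₂) := by positivity
    have hIio := antitone_superlevel_eq hta (htfin _ hs')
    ext k
    simp only [Set.mem_setOf_eq, Set.mem_Iio]
    rw [hu]
    dsimp only
    rw [← div_lt_iff₀' (by positivity : (0:ℝ) < C₁ * C₂)]
    constructor
    · intro hk
      have h2 : k / (m₁ * m₂) ∈ {l | s / (C₁ * C₂) < t l} := hk
      rw [hIio, Set.mem_Iio] at h2
      exact (Nat.div_lt_iff_lt_mul hM).mp h2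
    · intro hk
      have h2 : k / (m₁ * m₂) ∈ Set.Iio ({l | s / (C₁ * C₂) < t l}.ncard) := by
        rw [Set.mem_Iio]
        exact (Nat.div_lt_iff_lt_mul hM).mpr hk
      rw [← hIio] at h2
      exact h2
  have hufin : FinAbove u := by
    intro ε hε
    rw [hulevel ε hε]
    exact Set.finite_Iio _
  -- sortings
  have hdT0 := dT_nonneg β γ
  have hdTfin := finAbove_dT hβ hγ
  obtain Sd := Sorting.mk' hdT0 hdTfin
  obtain Sβ := Sorting.mk' (d := fun k => ‖β k‖) (fun k => norm_nonneg _) (finAbove_of_c0 hβ)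
  obtain Sγ := Sorting.mk' (d := fun k => ‖γ k‖) (fun k => norm_nonneg _) (finAbove_of_c0 hγ)
  -- the key distribution comparison
  have hcmp : ∀ s, 0 < s → {k | s < dT β γ k}.ncard ≤ {k | s < u k}.ncard := by
    intro s hs
    set s' := s / (C₁ * C₂) with hs'def
    have hs' : 0 < s' := by positivity
    set L := {l | s' < t l}.ncard with hL
    -- RHS is (m₁ m₂) L
    have hRHS : {k | s < u k}.ncard = L * (m₁ * m₂) := by
      rw [hulevel s hs, ncard_Iio]
    -- T = pairs of α above s'
    set T := {pq : ℕ × ℕ | s' < α pq.1 * α pq.2} with hT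
    have hTfin : T.Finite := pairs_alpha_finite hα0 hα1 hαa hαc hs'
    have hTL : T.ncard = L := by
      rw [hL, t_count hαa hα0 hαc hα1 hs'.le]
    -- V = dilated pairs
    set V := {ab : ℕ × ℕ | s' < α (ab.1 / m₁) * α (ab.2 / m₂)} with hV
    -- injection from V into T ×ˢ (range m₁ ×ˢ range m₂)
    set Tg : Finset (ℕ × ℕ) := hTfin.toFinset with hTg
    set W : Finset ((ℕ × ℕ) × ℕ × ℕ) := Tg ×ˢ (Finset.range m₁ ×ˢ Finset.range m₂)
      with hW
    have hVW : V.ncard ≤ W.card := by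
      apply le_trans (Set.ncard_le_ncard_of_injOn
        (fun ab => ((ab.1 / m₁, ab.2 / m₂), (ab.1 % m₁, ab.2 % m₂)))
        ?_ ?_ W.finite_toSet)
      · rw [Set.ncard_coe_finset]
      · rintro ⟨a, b⟩ hab
        rw [hV, Set.mem_setOf_eq] at hab
        rw [hW, Finset.mem_coe, Finset.mem_product]
        constructor
        · rw [hTg, Set.Finite.mem_toFinset]
          exact hab
        · rw [Finset.mem_product, Finset.mem_range, Finset.mem_range]
          exact ⟨Nat.mod_lt _ hm₁, Nat.mod_lt _ hm₂⟩
      · rintro ⟨a, b⟩ _ ⟨a', b'⟩ _ h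
        simp only [Prod.mk.injEq] at h
        obtain ⟨⟨h1, h2⟩, h3, h4⟩ := h
        have ha : a = a' := by
          rw [← Nat.div_add_mod a m₁, ← Nat.div_add_mod a' m₁, h1, h3]
        have hb : b = b' := by
          rw [← Nat.div_add_mod b m₂, ← Nat.div_add_mod b' m₂, h2, h4]
        rw [ha, hb]
    have hWcard : W.card = T.ncard * (m₁ * m₂) := by
      rw [hW, Finset.card_product, Finset.card_product, Finset.card_range,
        Finset.card_range, hTg, ← Set.ncard_eq_toFinset_card _ hTfin]
    -- injection from dT-superlevel pairs into V
    have hLHS : {k | s < dT β γ k}.ncard ≤ V.ncard := by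
      rw [ncard_dT_eq_pairs]
      -- V is finite
      have hαlevel : {i | s' < α i} = Set.Iio ({i | s' < α i}.ncard) :=
        antitone_superlevel_eq hαa (finAbove_alpha hα0 hαc s' hs')
      have hVfin : V.Finite := by
        set c := {i | s' < α i}.ncard with hc
        apply Set.Finite.subset (Set.finite_Iio (c * m₁) |>.prod (Set.finite_Iio (c * m₂)))
        rintro ⟨a, b⟩ hab
        rw [hV, Set.mem_setOf_eq] at hab
        have hb1 : α (b / m₂) ≤ 1 := le_trans (hαa (Nat.zero_le _)) hα1
        have ha1 : α (a / m₁) ≤ 1 := le_trans (hαa (Nat.zero_le _)) hα1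
        have ha' : s' < α (a / m₁) := by nlinarith [hα0 (a / m₁), hα0 (b / m₂)]
        have hb' : s' < α (b / m₂) := by nlinarith [hα0 (a / m₁), hα0 (b / m₂)]
        constructor
        · show a ∈ Set.Iio (c * m₁)
          rw [Set.mem_Iio]
          have h5 : a / m₁ ∈ Set.Iio c := by rw [← hαlevel]; exact ha'
          rw [Set.mem_Iio] at h5
          exact (Nat.div_lt_iff_lt_mul hm₁).mp h5
        · show b ∈ Set.Iio (c * m₂)
          rw [Set.mem_Iio]
          have h5 : b / m₂ ∈ Set.Iio c := by rw [← hαlevel]; exact hb'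
          rw [Set.mem_Iio] at h5
          exact (Nat.div_lt_iff_lt_mul hm₂).mp h5
      refine Set.ncard_le_ncard_of_injOn
        (fun pq => (Function.invFun Sβ.π pq.1, Function.invFun Sγ.π pq.2)) ?_ ?_ hVfin
      · rintro ⟨p, q⟩ hpq
        rw [Set.mem_setOf_eq] at hpq
        have hp0 : ‖β p‖ ≠ 0 := by
          intro h
          rw [h, zero_mul] at hpq
          linarith
        have hq0 : ‖γ q‖ ≠ 0 := by
          intro h
          rw [h, mul_zero] at hpq
          linarith
        obtain ⟨a, ha⟩ := Sβ.cover p hp0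
        obtain ⟨b, hb⟩ := Sγ.cover q hq0
        have hinva : Function.invFun Sβ.π p = a := by
          rw [← ha]
          exact Function.leftInverse_invFun Sβ.inj a
        have hinvb : Function.invFun Sγ.π q = b := by
          rw [← hb]
          exact Function.leftInverse_invFun Sγ.inj b
        rw [hV, Set.mem_setOf_eq]
        dsimp only
        rw [hinva, hinvb]
        have h1 : ‖β p‖ ≤ C₁ * α (a / m₁) := by
          rw [← ha, ← Sorting.rearr_eq Sβ a]
          exact hdβ a
        have h2 : ‖γ q‖ ≤ C₂ * α (b / m₂) := by
          rw [← hb, ← Sorting.rearr_eq Sγ b]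
          exact hdγ b
        rw [hs'def, div_lt_iff₀' (by positivity : (0:ℝ) < C₁ * C₂)]
        calc s < ‖β p‖ * ‖γ q‖ := hpq
          _ ≤ (C₁ * α (a / m₁)) * (C₂ * α (b / m₂)) := by
              apply mul_le_mul h1 h2 (norm_nonneg _)
                (by have := hα0 (a / m₁); positivity)
          _ = C₁ * C₂ * (α (a / m₁) * α (b / m₂)) := by ring
      · rintro ⟨p, q⟩ hpq ⟨p', q'⟩ hpq' h
        rw [Set.mem_setOf_eq] at hpq hpq'
        simp only [Prod.mk.injEq] at h
        obtain ⟨h1, h2⟩ := h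
        have hp0 : ‖β p‖ ≠ 0 := fun hh => by rw [hh, zero_mul] at hpq; linarith
        have hq0 : ‖γ q‖ ≠ 0 := fun hh => by rw [hh, mul_zero] at hpq; linarith
        have hp0' : ‖β p'‖ ≠ 0 := fun hh => by rw [hh, zero_mul] at hpq'; linarith
        have hq0' : ‖γ q'‖ ≠ 0 := fun hh => by rw [hh, mul_zero] at hpq'; linarith
        obtain ⟨a, ha⟩ := Sβ.cover p hp0
        obtain ⟨a', ha'⟩ := Sβ.cover p' hp0'
        obtain ⟨b, hb⟩ := Sγ.cover q hq0
        obtain ⟨b', hb'⟩ := Sγ.cover q' hq0'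
        have e1 : Function.invFun Sβ.π p = a := by
          rw [← ha]; exact Function.leftInverse_invFun Sβ.inj a
        have e2 : Function.invFun Sβ.π p' = a' := by
          rw [← ha']; exact Function.leftInverse_invFun Sβ.inj a'
        have e3 : Function.invFun Sγ.π q = b := by
          rw [← hb]; exact Function.leftInverse_invFun Sγ.inj b
        have e4 : Function.invFun Sγ.π q' = b' := by
          rw [← hb']; exact Function.leftInverse_invFun Sγ.inj b'
        rw [e1, e2] at h1
        rw [e3, e4] at h2
        rw [← ha, ← ha', ← hb, ← hb', h1, h2]
    calc {k | s < dT β γ k}.ncard ≤ V.ncard := hLHS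
      _ ≤ W.card := hVW
      _ = T.ncard * (m₁ * m₂) := hWcard
      _ = L * (m₁ * m₂) := by rw [hTL]
      _ = {k | s < u k}.ncard := hRHS.symm
  -- apply the sorted comparison
  have hfinal := sorted_le_of_count_le Sd (Sorting.id' u hua) hdT0 hun hdTfin hufin
    (fun s hs => hcmp s hs) n
  rw [← tensorSeq_eq_sort Sd n] at hfinal
  exact hfinal

end TensorDom

/-! ### Final assembly -/

section Final

variable {ω : ℝ} (hω : ω ∈ Set.Ioo (0:ℝ) 1) {α : ℕ → ℝ}
  (hαa : Antitone α) (hα0 : ∀ n, 0 ≤ α n)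
  (hαc : Filter.Tendsto α Filter.atTop (nhds 0)) (hα1 : α 0 ≤ 1)

include hω hαa hα0 hαc hα1 in
lemma cond2_iff_cond3 :
    (∃ C > (0:ℝ), ∃ m, 0 < m ∧ ∀ n : ℕ, tensorSeq (toC α) (toC α) n ≤ C * α (n / m)) ↔
    (∃ r : ℕ, 0 < r ∧ ∃ C : ℝ, 0 < C ∧
      ∀ n : ℕ, (Mtil ω α n : ℝ) ≤ C * (Ktil ω α (n + r) : ℝ)) := by
  obtain ⟨hω0, hω1⟩ := id hω
  obtain ⟨hta, htn, htc, _, htfin, _⟩ := tensorSeq_spec (toC_mem_c0 hαc) (toC_mem_c0 hαc)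
  set t := tensorSeq (toC α) (toC α) with htdef
  have hKt : ∀ n : ℕ, Ktil ω α n = {m | ω ^ (n+1) < α m}.ncard := fun n =>
    Ktil_eq_count hω hαa hα0 hαc hα1 n
  have hαfin : ∀ s : ℝ, 0 < s → {m | s < α m}.Finite := fun s hs =>
    finAbove_alpha hα0 hαc s hs
  constructor
  · rintro ⟨C, hC, m, hm, hdt⟩
    have h1C : (0:ℝ) < 1 / C := by positivity
    obtain ⟨r₀, hr₀⟩ := exists_pow_lt_of_lt_one h1C hω1
    refine ⟨r₀ + 1, by omega, (m : ℝ), by exact_mod_cast hm, fun n => ?_⟩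
    -- natural-number estimate
    set q := {k | ω ^ (n+2) < t k}.ncard with hq
    have hMq : Mtil ω α n ≤ q := by
      have h1 := (Mtil_le_count hω hαa hα0 hαc hα1 n).1
      have h2 := t_count hαa hα0 hαc hα1 (s := ω ^ (n+2)) (by positivity)
      rw [hq, h2]
      exact h1
    have hKv : Mtil ω α n ≤ m * Ktil ω α (n + (r₀ + 1)) := by
      rcases Nat.eq_zero_or_pos q with hq0 | hqpos
      · rw [hq0] at hMq
        exact le_trans hMq (Nat.zero_le _)
      · have hfin2 : {k | ω ^ (n+2) < t k}.Finite := htfin _ (by positivity)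
        have htq : ω ^ (n+2) < t (q - 1) := antitone_init hta hfin2 (by omega)
        have hαq : ω ^ (n + r₀ + 2) < α ((q-1) / m) := by
          have h1 : ω ^ (n+2) < C * α ((q-1)/m) := lt_of_lt_of_le htq (hdt _)
          have h2 : ω ^ (r₀ : ℕ) < 1 / C := hr₀
          have h3 : 0 < α ((q-1)/m) := by
            by_contra hcon
            push_neg at hcon
            have : α ((q-1)/m) = 0 := le_antisymm hcon (hα0 _)
            rw [this, mul_zero] at h1
            have : (0:ℝ) < ω ^ (n+2) := by positivity
            linarith
          have h4 : ω ^ (n + r₀ + 2) = ω ^ (n+2) * ω ^ r₀ := by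
            rw [← pow_add]
            congr 1
            omega
          rw [h4]
          calc ω ^ (n+2) * ω ^ r₀ < (C * α ((q-1)/m)) * (1/C) := by
                apply mul_lt_mul'' h1 h2 (by positivity) (by positivity)
            _ = α ((q-1)/m) := by field_simp
        have hmem : (q-1)/m < Ktil ω α (n + (r₀+1)) := by
          have heq : n + (r₀ + 1) + 1 = n + r₀ + 2 := by omega
          rw [hKt, heq]
          exact antitone_mem_lt_ncard hαa (hαfin _ (by positivity)) hαq
        have h5 : q - 1 < Ktil ω α (n + (r₀+1)) * m := (Nat.div_lt_iff_lt_mul hm).mp hmem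
        have h6 : q ≤ Ktil ω α (n + (r₀+1)) * m := Nat.le_of_pred_lt h5
        calc Mtil ω α n ≤ q := hMq
          _ ≤ Ktil ω α (n + (r₀+1)) * m := h6
          _ = m * Ktil ω α (n + (r₀+1)) := mul_comm _ _
    calc (Mtil ω α n : ℝ) ≤ ((m * Ktil ω α (n + (r₀ + 1)) : ℕ) : ℝ) := by
          exact_mod_cast hKv
      _ = (m : ℝ) * (Ktil ω α (n + (r₀+1)) : ℝ) := by push_cast; ring
  · rintro ⟨r, hr, C, hC, h3⟩
    set m := Nat.ceil C + 1 with hm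
    have hmpos : 0 < m := by omega
    have hmC : C ≤ (m : ℝ) := by
      have := Nat.le_ceil C
      have h2 : ((Nat.ceil C : ℕ) : ℝ) ≤ ((m : ℕ) : ℝ) := by
        exact_mod_cast Nat.le_of_lt (by omega)
      linarith
    refine ⟨(ω ^ (r + 2))⁻¹, by positivity, m, hmpos, fun n => ?_⟩
    rcases eq_or_lt_of_le (htn n) with hzero | hpos
    · have hzero' : t n = 0 := hzero.symm
      rw [hzero']
      have := hα0 (n / m)
      positivity
    · have ht1 : t n ≤ 1 := t_le_one hαa hα0 hαc hα1 n
      obtain ⟨l, hl1, hl2⟩ := level_exists hω hαa hα0 hαc hα1 hpos ht1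
      -- n+1 ≤ count of t above ω^(l+1)
      have hfin2 : {k | ω ^ (l+1) < t k}.Finite := htfin _ (by positivity)
      have hsub : Set.Iic n ⊆ {k | ω ^ (l+1) < t k} := by
        intro k hk
        rw [Set.mem_Iic] at hk
        exact lt_of_lt_of_le hl1 (hta hk)
      have hn1 : n + 1 ≤ {k | ω ^ (l+1) < t k}.ncard := by
        have := Set.ncard_le_ncard hsub hfin2
        rwa [ncard_Iic_nat] at this
      -- counts: pairs above ω^(l+1) ≤ Mtil (l+1)
      have hpairs : {k | ω ^ (l+1) < t k}.ncard ≤ Mtil ω α (l+1) := by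
        have h1 := (Mtil_le_count hω hαa hα0 hαc hα1 (l+1)).2
        have h2 := t_count hαa hα0 hαc hα1 (s := ω ^ (l+1)) (by positivity)
        rw [h2]
        exact h1
      have hchain : ((n:ℝ) + 1) ≤ C * (Ktil ω α (l + 1 + r) : ℝ) := by
        have h4 : ((n:ℝ) + 1) ≤ (Mtil ω α (l+1) : ℝ) := by
          have : n + 1 ≤ Mtil ω α (l+1) := le_trans hn1 hpairs
          exact_mod_cast this
        linarith [h3 (l+1)]
      set Kv := Ktil ω α (l + 1 + r) with hKv
      -- α (n/m) is large
      have hKpos : 0 < (Kv : ℝ) := by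
        by_contra hcon
        push_neg at hcon
        have : (Kv : ℝ) = 0 := le_antisymm hcon (by positivity)
        rw [this, mul_zero] at hchain
        have : (0:ℝ) ≤ n := by positivity
        linarith
      have hdivlt : (n / m : ℕ) < Kv := by
        have h5 : ((n / m : ℕ) : ℝ) ≤ (n : ℝ) / (m : ℝ) := Nat.cast_div_le
        have h6 : (n : ℝ) / (m : ℝ) ≤ (n : ℝ) / C := by
          apply div_le_div_of_nonneg_left (by positivity) hC hmC
        have h7 : (n : ℝ) / C < (Kv : ℝ) := by
          rw [div_lt_iff₀ hC]
          have h8 : C * (Kv:ℝ) = (Kv:ℝ) * C := mul_comm _ _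
          nlinarith
        have : ((n / m : ℕ) : ℝ) < (Kv : ℝ) := by linarith
        exact_mod_cast this
      have hαnm : ω ^ (l + 1 + r + 1) < α (n / m) := by
        have := hKt (l + 1 + r)
        rw [hKv] at hdivlt
        rw [this] at hdivlt
        exact antitone_init hαa (hαfin _ (by positivity)) hdivlt
      -- conclude
      have hexp : ω ^ (l + 1 + r + 1) = ω ^ l * ω ^ (r + 2) := by
        rw [← pow_add]
        congr 1
        omega
      rw [hexp] at hαnm
      have h9 : (0:ℝ) < ω ^ (r+2) := by positivity
      have h10 : ω ^ l < (ω ^ (r+2))⁻¹ * α (n / m) := by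
        have h11 := mul_lt_mul_of_pos_left hαnm
          (by positivity : (0:ℝ) < (ω ^ (r+2))⁻¹)
        calc ω ^ l = (ω ^ (r+2))⁻¹ * (ω ^ l * ω ^ (r+2)) := by field_simp
          _ < (ω ^ (r+2))⁻¹ * α (n / m) := h11
      linarith

end Final

/-- Let `α` be a nonincreasing null sequence of nonnegative reals with
`α₁ ≤ 1` and `ω ∈ (0,1)`.  The following are equivalent: (1) the principal Calkin space
`⟨α⟩` is stable; (2) `α⊗α ∈ ⟨α⟩`; (3) there are `r ≥ 1` and `C > 0` with
`M̃ₙ^{(ω)}(α) ≤ C K̃_{n+r}^{(ω)}(α)` for every `n ≥ 0`. -/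
theorem principal_stable_iff (ω : ℝ) (hω : ω ∈ Set.Ioo (0 : ℝ) 1) (α : ℕ → ℝ)
    (hαa : Antitone α) (hα0 : ∀ n, 0 ≤ α n)
    (hαc : Filter.Tendsto α Filter.atTop (nhds 0)) (hα1 : α 0 ≤ 1) :
    (IsStableCalkin (principalCalkin (toC α)) ↔
        toC (tensorSeq (toC α) (toC α)) ∈ principalCalkin (toC α)) ∧
    (IsStableCalkin (principalCalkin (toC α)) ↔
        ∃ r : ℕ, 0 < r ∧ ∃ C : ℝ, 0 < C ∧
          ∀ n : ℕ, (Mtil ω α n : ℝ) ≤ C * (Ktil ω α (n + r) : ℝ)) := by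
  have hc0α : toC α ∈ c0 := toC_mem_c0 hαc
  have hJ : principalCalkin (toC α) = Jset α := principalCalkin_eq_Jset hαa hα0 hαc
  obtain ⟨hta, htn, htc, _, htfin, _⟩ := tensorSeq_spec hc0α hc0α
  set t := tensorSeq (toC α) (toC α) with htdef
  -- (2) unfolded into the concrete domination condition
  have h2iff : (toC t ∈ principalCalkin (toC α)) ↔
      (∃ C > (0:ℝ), ∃ m, 0 < m ∧ ∀ n : ℕ, t n ≤ C * α (n / m)) := by
    rw [hJ]
    constructor
    · rintro ⟨_, C, hC, m, hm, h⟩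
      refine ⟨C, hC, m, hm, fun n => ?_⟩
      have := h n
      rwa [rearr_toC_of_antitone hta htn] at this
    · rintro ⟨C, hC, m, hm, h⟩
      refine ⟨toC_mem_c0 htc, C, hC, m, hm, fun n => ?_⟩
      rw [rearr_toC_of_antitone hta htn]
      exact h n
  -- (1) → (2)
  have h12 : IsStableCalkin (principalCalkin (toC α)) →
      toC t ∈ principalCalkin (toC α) := by
    rintro ⟨_, heq⟩
    rw [← heq]
    intro K hK
    exact hK.2 (toC α) (mem_principalCalkin_self _) (toC α) (mem_principalCalkin_self _)
  -- (2) → (1)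
  have h21 : toC t ∈ principalCalkin (toC α) →
      IsStableCalkin (principalCalkin (toC α)) := by
    intro h2
    refine ⟨isCalkinSpace_principal hαc, ?_⟩
    apply Set.Subset.antisymm
    · -- calkinTensor I I ⊆ I
      apply Set.sInter_subset_of_mem
      refine ⟨isCalkinSpace_principal hαc, ?_⟩
      intro β hβ γ hγ
      rw [hJ] at hβ hγ
      obtain ⟨hβ0, C₁, hC₁, m₁, hm₁, hd₁⟩ := hβ
      obtain ⟨hγ0, C₂, hC₂, m₂, hm₂, hd₂⟩ := hγ
      obtain ⟨Ct, hCt, mt, hmt, hdt⟩ := h2iff.mp h2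
      obtain ⟨hba, hbn, hbc, _, _, _⟩ := tensorSeq_spec hβ0 hγ0
      rw [hJ]
      refine ⟨toC_mem_c0 hbc, C₁ * C₂ * Ct, by positivity, m₁ * m₂ * mt,
        by positivity, fun n => ?_⟩
      rw [rearr_toC_of_antitone hba hbn]
      calc tensorSeq β γ n ≤ C₁ * C₂ * t (n / (m₁ * m₂)) :=
            tensor_dominated hαa hα0 hαc hα1 hβ0 hγ0 hC₁ hC₂ hm₁ hm₂ hd₁ hd₂ n
        _ ≤ C₁ * C₂ * (Ct * α (n / (m₁ * m₂) / mt)) :=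
            mul_le_mul_of_nonneg_left (hdt _) (by positivity)
        _ = C₁ * C₂ * Ct * α (n / (m₁ * m₂ * mt)) := by
            rw [Nat.div_div_eq_div_mul]
            ring
    · -- I ⊆ calkinTensor I I
      intro x hx K hK
      have htK : toC t ∈ K :=
        hK.2 (toC α) (mem_principalCalkin_self _) (toC α) (mem_principalCalkin_self _)
      have hαK : toC α ∈ K := by
        by_cases ha0 : α 0 = 0
        · have hzero : toC α = 0 := by
            funext k
            have hk0 : α k = 0 := le_antisymm (ha0 ▸ hαa (Nat.zero_le k)) (hα0 k)
            simp [toC, hk0]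
          rw [hzero]
          exact hK.1.2.1
        · have ha0' : 0 < α 0 := lt_of_le_of_ne (hα0 0) (Ne.symm ha0)
          have helt : (((α 0)⁻¹ : ℝ) : ℂ) • toC t ∈ K := hK.1.2.2.2.1 _ _ htK
          apply hK.1.2.2.2.2 _ helt _ hc0α
          intro n
          rw [rearr_toC_of_antitone hαa hα0, rearr_smul (toC_mem_c0 htc),
            rearr_toC_of_antitone hta htn]
          have hnorm : ‖(((α 0)⁻¹ : ℝ) : ℂ)‖ = (α 0)⁻¹ := by
            rw [Complex.norm_real]
            exact abs_of_pos (by positivity)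
          rw [hnorm]
          have hge : α n * α 0 ≤ t n := tensorSeq_ge hαa hα0 hαc n
          have hcalc : (α 0)⁻¹ * (α n * α 0) = α n := by field_simp
          calc α n = (α 0)⁻¹ * (α n * α 0) := hcalc.symm
            _ ≤ (α 0)⁻¹ * t n :=
                mul_le_mul_of_nonneg_left hge (by positivity)
      exact principalCalkin_subset hK.1 hαK hx
  have h13 : IsStableCalkin (principalCalkin (toC α)) ↔ toC t ∈ principalCalkin (toC α) :=
    ⟨h12, h21⟩
  refine ⟨h13, h13.trans (h2iff.trans (cond2_iff_cond3 hω hαa hα0 hαc hα1))⟩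
end
end

section
/- Let α ∈ c₀ be a nonincreasing sequence of nonnegative reals with α₁ ≤ 1 and let ω ∈ (0,1). Suppose there is a constant C > 0 such that K_{n+j}^{(ω)}(α) ≥ C · (Σ_{i=0}^n K_i^{(ω)}(α))² for every positive integer j and every integer n ≥ 0. Then the principal Calkin space ⟨α⟩ is stable. -/
open scoped BigOperators

noncomputable section

open Filter

namespace CalkinAux

/-- pick an index outside `G` maximizing `f`. -/
noncomputable def step (f : ℕ → ℝ) (G : Finset ℕ) : ℕ :=
  @dite _ (∃ j, j ∉ G ∧ ∀ i, i ∉ G → f i ≤ f j) (Classical.propDecidable _)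
    (fun h => h.choose) (fun _ => 0)

noncomputable def gset (f : ℕ → ℝ) : ℕ → Finset ℕ
  | 0 => ∅
  | n+1 => insert (step f (gset f n)) (gset f n)

noncomputable def mu (f : ℕ → ℝ) (n : ℕ) : ℝ := f (step f (gset f n))

variable {f : ℕ → ℝ}

lemma exists_step (h0 : ∀ i, 0 ≤ f i) (hc : Tendsto f atTop (nhds 0)) (G : Finset ℕ) :
    ∃ j, j ∉ G ∧ ∀ i, i ∉ G → f i ≤ f j := by
  obtain ⟨j₀, hj₀⟩ := Infinite.exists_notMem_finset G
  by_cases hpos : ∃ i, i ∉ G ∧ 0 < f i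
  · obtain ⟨i₀, hi₀G, hi₀⟩ := hpos
    have hev : ∀ᶠ i in atTop, f i < f i₀ := by
      have := (NormedAddCommGroup.tendsto_nhds_zero.mp hc) (f i₀) hi₀
      filter_upwards [this] with i hi
      calc f i ≤ ‖f i‖ := le_abs_self _
        _ < f i₀ := hi
    obtain ⟨N, hN⟩ := eventually_atTop.mp hev
    set B : Finset ℕ := (Finset.range N).filter (fun i => f i₀ ≤ f i ∧ i ∉ G) with hB
    have hi₀B : i₀ ∈ B := by
      simp only [hB, Finset.mem_filter, Finset.mem_range]
      refine ⟨?_, le_refl _, hi₀G⟩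
      by_contra h
      exact absurd (hN i₀ (le_of_not_gt h)) (lt_irrefl _)
    obtain ⟨j, hjB, hj⟩ := Finset.exists_max_image B f ⟨i₀, hi₀B⟩
    have hjG : j ∉ G := ((Finset.mem_filter.mp hjB).2).2
    refine ⟨j, hjG, fun i hiG => ?_⟩
    by_cases hfi : f i₀ ≤ f i
    · have hiN : i < N := by
        by_contra h
        exact absurd hfi (not_le.mpr (hN i (le_of_not_gt h)))
      exact hj i (Finset.mem_filter.mpr ⟨Finset.mem_range.mpr hiN, hfi, hiG⟩)
    · exact le_trans (le_of_not_ge hfi) (hj i₀ hi₀B)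
  · refine ⟨j₀, hj₀, fun i hiG => ?_⟩
    have h1 : f i ≤ 0 := by
      by_contra h
      exact hpos ⟨i, hiG, lt_of_not_ge h⟩
    exact le_trans h1 (h0 j₀)

lemma step_spec (h0 : ∀ i, 0 ≤ f i) (hc : Tendsto f atTop (nhds 0)) (G : Finset ℕ) :
    step f G ∉ G ∧ ∀ i, i ∉ G → f i ≤ f (step f G) := by
  have h := exists_step h0 hc G
  rw [step]
  rw [dif_pos h]
  exact h.choose_spec

lemma step_not_mem (h0 : ∀ i, 0 ≤ f i) (hc : Tendsto f atTop (nhds 0)) (n : ℕ) :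
    step f (gset f n) ∉ gset f n := (step_spec h0 hc _).1

lemma le_mu (h0 : ∀ i, 0 ≤ f i) (hc : Tendsto f atTop (nhds 0)) {n : ℕ} {i : ℕ}
    (hi : i ∉ gset f n) : f i ≤ mu f n := (step_spec h0 hc _).2 i hi

lemma gset_card (h0 : ∀ i, 0 ≤ f i) (hc : Tendsto f atTop (nhds 0)) (n : ℕ) :
    (gset f n).card = n := by
  induction n with
  | zero => rfl
  | succ n ih =>
    rw [gset, Finset.card_insert_of_notMem (step_not_mem h0 hc n), ih]

lemma gset_mono (h0 : ∀ i, 0 ≤ f i) (hc : Tendsto f atTop (nhds 0)) {m n : ℕ} (h : m ≤ n) :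
    gset f m ⊆ gset f n := by
  induction n with
  | zero => simp_all
  | succ n ih =>
    rcases Nat.lt_or_ge m (n+1) with h' | h'
    · exact (ih (Nat.lt_succ_iff.mp h')).trans (Finset.subset_insert _ _)
    · have : m = n + 1 := le_antisymm h h'
      subst this; rfl

lemma mu_nonneg (h0 : ∀ i, 0 ≤ f i) (n : ℕ) : 0 ≤ mu f n := h0 _

lemma mu_antitone (h0 : ∀ i, 0 ≤ f i) (hc : Tendsto f atTop (nhds 0)) :
    Antitone (mu f) := by
  apply antitone_nat_of_succ_le
  intro n
  apply le_mu h0 hc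
  intro hmem
  exact step_not_mem h0 hc (n+1) (gset_mono h0 hc (Nat.le_succ n) hmem)

lemma mem_gset (h0 : ∀ i, 0 ≤ f i) (hc : Tendsto f atTop (nhds 0)) {n j : ℕ}
    (hj : j ∈ gset f n) : ∃ m, m < n ∧ j = step f (gset f m) := by
  induction n with
  | zero => simp [gset] at hj
  | succ n ih =>
    rw [gset, Finset.mem_insert] at hj
    rcases hj with hj | hj
    · exact ⟨n, Nat.lt_succ_self n, hj⟩
    · obtain ⟨m, hm, hjm⟩ := ih hj
      exact ⟨m, hm.trans (Nat.lt_succ_self n), hjm⟩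

lemma mu_le_of_mem_gset (h0 : ∀ i, 0 ≤ f i) (hc : Tendsto f atTop (nhds 0)) {n j : ℕ}
    (hj : j ∈ gset f n) : mu f n ≤ f j := by
  obtain ⟨m, hm, rfl⟩ := mem_gset h0 hc hj
  exact mu_antitone h0 hc (le_of_lt hm)

lemma sum_le_gsum (h0 : ∀ i, 0 ≤ f i) (hc : Tendsto f atTop (nhds 0)) {n : ℕ}
    {F : Finset ℕ} (hF : F.card ≤ n) :
    ∑ i ∈ F, f i ≤ ∑ i ∈ gset f n, f i := by
  set G := gset f n with hG
  have h1 : ∑ i ∈ F, f i = ∑ i ∈ F ∩ G, f i + ∑ i ∈ F \ G, f i :=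
    (Finset.sum_inter_add_sum_sdiff F G f).symm
  have h2 : ∑ i ∈ G, f i = ∑ i ∈ G ∩ F, f i + ∑ i ∈ G \ F, f i :=
    (Finset.sum_inter_add_sum_sdiff G F f).symm
  have hcard : (F \ G).card ≤ (G \ F).card := by
    have e1 : (F ∩ G).card + (F \ G).card = F.card := Finset.card_inter_add_card_sdiff F G
    have e2 : (G ∩ F).card + (G \ F).card = G.card := Finset.card_inter_add_card_sdiff G F
    have e3 : G.card = n := gset_card h0 hc n
    have e4 : (F ∩ G).card = (G ∩ F).card := by rw [Finset.inter_comm]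
    omega
  have h3 : ∑ i ∈ F \ G, f i ≤ (F \ G).card • mu f n := by
    apply Finset.sum_le_card_nsmul
    intro x hx
    exact le_mu h0 hc (Finset.mem_sdiff.mp hx).2
  have h4 : (G \ F).card • mu f n ≤ ∑ i ∈ G \ F, f i := by
    apply Finset.card_nsmul_le_sum
    intro x hx
    exact mu_le_of_mem_gset h0 hc (Finset.mem_sdiff.mp hx).1
  have h5 : (F \ G).card • mu f n ≤ (G \ F).card • mu f n :=
    nsmul_le_nsmul_left (mu_nonneg h0 n) hcard
  rw [h1, h2, Finset.inter_comm F G]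
  linarith

lemma gsum_eq (h0 : ∀ i, 0 ≤ f i) (hc : Tendsto f atTop (nhds 0)) (n : ℕ) :
    ∑ i ∈ gset f n, f i = ∑ m ∈ Finset.range n, mu f m := by
  induction n with
  | zero => rfl
  | succ n ih =>
    rw [gset, Finset.sum_insert (step_not_mem h0 hc n), Finset.sum_range_succ, ih, mu]
    ring

/-- generic version of `rearrSum`. -/
noncomputable def fSum (f : ℕ → ℝ) (n : ℕ) : ℝ :=
  sSup ((fun F : Finset ℕ => ∑ i ∈ F, f i) '' {F | F.card = n})

lemma fSum_eq (h0 : ∀ i, 0 ≤ f i) (hc : Tendsto f atTop (nhds 0)) (n : ℕ) :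
    fSum f n = ∑ m ∈ Finset.range n, mu f m := by
  rw [← gsum_eq h0 hc n]
  apply IsGreatest.csSup_eq
  constructor
  · exact ⟨gset f n, gset_card h0 hc n, rfl⟩
  · rintro x ⟨F, hF, rfl⟩
    exact sum_le_gsum h0 hc (le_of_eq hF)

/-- counting function. -/
noncomputable def Nf (f : ℕ → ℝ) (t : ℝ) : ℕ := Set.ncard {i | t < f i}

lemma finite_gt (hc : Tendsto f atTop (nhds 0)) {t : ℝ} (ht : 0 < t) :
    {i | t < f i}.Finite := by
  have hev : ∀ᶠ i in atTop, ‖f i‖ < t := (NormedAddCommGroup.tendsto_nhds_zero.mp hc) t ht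
  obtain ⟨N, hN⟩ := eventually_atTop.mp hev
  apply (Set.finite_Iio N).subset
  intro i hi
  simp only [Set.mem_setOf_eq] at hi
  simp only [Set.mem_Iio]
  by_contra h
  exact absurd (lt_of_lt_of_le hi (le_abs_self _)) (not_lt.mpr (le_of_lt (hN i (le_of_not_gt h))))

lemma mu_gt_iff (h0 : ∀ i, 0 ≤ f i) (hc : Tendsto f atTop (nhds 0)) {t : ℝ} (ht : 0 < t)
    (n : ℕ) : t < mu f n ↔ n < Nf f t := by
  constructor
  · intro h
    have hsub : ↑(gset f (n+1)) ⊆ {i | t < f i} := by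
      intro j hj
      simp only [Finset.coe_sort_coe, Set.mem_setOf_eq]
      obtain ⟨m, hm, rfl⟩ := mem_gset h0 hc (by exact_mod_cast hj)
      have h2 : mu f n ≤ mu f m := mu_antitone h0 hc (Nat.lt_succ_iff.mp hm)
      exact lt_of_lt_of_le h (by exact h2)
    have : n + 1 ≤ Nf f t := by
      rw [Nf]
      calc n + 1 = (gset f (n+1)).card := (gset_card h0 hc (n+1)).symm
        _ = (↑(gset f (n+1)) : Set ℕ).ncard := (Set.ncard_coe_finset _).symm
        _ ≤ _ := Set.ncard_le_ncard hsub (finite_gt hc ht)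
    omega
  · intro h
    by_contra hle
    push_neg at hle
    have hsub : {i | t < f i} ⊆ ↑(gset f n) := by
      intro i hi
      simp only [Set.mem_setOf_eq] at hi
      by_contra hmem
      exact absurd (le_trans (le_mu h0 hc (by simpa using hmem)) hle) (not_le.mpr hi)
    have : Nf f t ≤ n := by
      calc Nf f t ≤ (↑(gset f n) : Set ℕ).ncard := Set.ncard_le_ncard hsub (Set.toFinite _)
        _ = n := by rw [Set.ncard_coe_finset, gset_card h0 hc n]
    omega

lemma eq_of_forall_gt_iff {a b : ℝ} (ha : 0 ≤ a) (hb : 0 ≤ b)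
    (h : ∀ t, 0 < t → (t < a ↔ t < b)) : a = b := by
  by_contra hne
  rcases lt_or_gt_of_ne hne with hlt | hlt
  · have h1 : 0 < (a+b)/2 := by linarith
    have := (h _ h1).mpr (by linarith)
    linarith
  · have h1 : 0 < (a+b)/2 := by linarith
    have := (h _ h1).mp (by linarith)
    linarith

lemma mu_le_of_Nf_le {f' : ℕ → ℝ} (h0 : ∀ i, 0 ≤ f i) (hc : Tendsto f atTop (nhds 0))
    (h0' : ∀ i, 0 ≤ f' i) (hc' : Tendsto f' atTop (nhds 0))
    (h : ∀ t, 0 < t → Nf f t ≤ Nf f' t) (n : ℕ) : mu f n ≤ mu f' n := by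
  by_contra hlt
  push_neg at hlt
  have h1 : 0 < (mu f' n + mu f n)/2 := by
    have := mu_nonneg h0' n; linarith
  have h2 : (mu f' n + mu f n)/2 < mu f n := by linarith
  have h3 := (mu_gt_iff h0 hc h1 n).mp h2
  have h4 := (mu_gt_iff h0' hc' h1 n).mpr (lt_of_lt_of_le h3 (h _ h1))
  linarith

lemma mu_tendsto_zero (h0 : ∀ i, 0 ≤ f i) (hc : Tendsto f atTop (nhds 0)) :
    Tendsto (mu f) atTop (nhds 0) := by
  rw [NormedAddCommGroup.tendsto_nhds_zero]
  intro ε hε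
  have hε2 : 0 < ε/2 := by linarith
  filter_upwards [eventually_ge_atTop (Nf f (ε/2))] with n hn
  have : ¬ (ε/2 < mu f n) := by
    rw [mu_gt_iff h0 hc hε2 n]; omega
  rw [Real.norm_eq_abs, abs_of_nonneg (mu_nonneg h0 n)]
  linarith

lemma antitone_gt_iff (ha : Antitone f) (h0 : ∀ i, 0 ≤ f i)
    (hc : Tendsto f atTop (nhds 0)) {t : ℝ} (ht : 0 < t) (n : ℕ) :
    t < f n ↔ n < Nf f t := by
  have hex : ∃ m, f m ≤ t := by
    obtain ⟨N, hN⟩ := eventually_atTop.mp ((NormedAddCommGroup.tendsto_nhds_zero.mp hc) t ht)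
    exact ⟨N, le_of_lt (lt_of_le_of_lt (le_abs_self _) (hN N le_rfl))⟩
  set n₀ := Nat.find hex with hn₀
  have hset : {i | t < f i} = Set.Iio n₀ := by
    ext i
    simp only [Set.mem_setOf_eq, Set.mem_Iio]
    constructor
    · intro hi
      by_contra h
      exact absurd (le_trans (ha (le_of_not_gt h)) (Nat.find_spec hex)) (not_le.mpr hi)
    · intro hi
      exact lt_of_not_ge (Nat.find_min hex hi)
  have : Nf f t = n₀ := by
    rw [Nf, hset,
      show Set.Iio n₀ = (↑(Finset.range n₀) : Set ℕ) by ext i; simp,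
      Set.ncard_coe_finset, Finset.card_range]
  rw [this]
  constructor
  · intro h
    have hmem : n ∈ {i | t < f i} := h
    rw [hset] at hmem
    exact hmem
  · intro h
    have hmem : n ∈ Set.Iio n₀ := h
    rw [← hset] at hmem
    exact hmem


lemma mu_eq_self_of_antitone (ha : Antitone f) (h0 : ∀ i, 0 ≤ f i)
    (hc : Tendsto f atTop (nhds 0)) (n : ℕ) : mu f n = f n := by
  apply eq_of_forall_gt_iff (mu_nonneg h0 n) (h0 n)
  intro t ht
  rw [mu_gt_iff h0 hc ht n, antitone_gt_iff ha h0 hc ht n]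

lemma mu_zero_fn (n : ℕ) : mu (fun _ => (0:ℝ)) n = 0 := rfl

lemma Nf_smul {a : ℝ} (hapos : 0 < a) {t : ℝ} :
    Nf (fun i => a * f i) t = Nf f (t / a) := by
  rw [Nf, Nf]
  congr 1
  ext i
  simp only [Set.mem_setOf_eq]
  rw [div_lt_iff₀ hapos, mul_comm]

lemma mu_smul (h0 : ∀ i, 0 ≤ f i) (hc : Tendsto f atTop (nhds 0)) {a : ℝ} (ha : 0 ≤ a)
    (n : ℕ) : mu (fun i => a * f i) n = a * mu f n := by
  rcases eq_or_lt_of_le ha with h | hapos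
  · simp only [← h, zero_mul]
    exact mu_zero_fn n
  · have h0' : ∀ i, 0 ≤ a * f i := fun i => mul_nonneg (le_of_lt hapos) (h0 i)
    have hc' : Tendsto (fun i => a * f i) atTop (nhds 0) := by
      have := hc.const_mul a
      simpa using this
    apply eq_of_forall_gt_iff (mu_nonneg h0' n) (mul_nonneg (le_of_lt hapos) (mu_nonneg h0 n))
    intro t ht
    rw [mu_gt_iff h0' hc' ht n, Nf_smul hapos,
      ← mu_gt_iff h0 hc (div_pos ht hapos) n, div_lt_iff₀ hapos, mul_comm]

lemma tendsto_of_finite_gt (h0 : ∀ i, 0 ≤ f i)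
    (h : ∀ ε : ℝ, 0 < ε → {i | ε < f i}.Finite) : Tendsto f atTop (nhds 0) := by
  rw [NormedAddCommGroup.tendsto_nhds_zero]
  intro ε hε
  have hfin := h (ε/2) (by linarith)
  obtain ⟨b, hb⟩ := hfin.bddAbove
  filter_upwards [eventually_gt_atTop b] with i hi
  have : i ∉ {i | ε/2 < f i} := fun hmem => absurd (hb hmem) (not_le.mpr hi)
  simp only [Set.mem_setOf_eq, not_lt] at this
  rw [Real.norm_eq_abs, abs_of_nonneg (h0 i)]
  linarith

lemma mu_add_le {x y : ℕ → ℂ} (hx : Tendsto x atTop (nhds 0))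
    (hy : Tendsto y atTop (nhds 0)) (a b : ℕ) :
    mu (fun i => ‖x i + y i‖) (a + b) ≤ mu (fun i => ‖x i‖) a + mu (fun i => ‖y i‖) b := by
  have h0x : ∀ i, 0 ≤ ‖x i‖ := fun i => norm_nonneg _
  have h0y : ∀ i, 0 ≤ ‖y i‖ := fun i => norm_nonneg _
  have h0xy : ∀ i, 0 ≤ ‖x i + y i‖ := fun i => norm_nonneg _
  have hcx : Tendsto (fun i => ‖x i‖) atTop (nhds 0) := by simpa using hx.norm
  have hcy : Tendsto (fun i => ‖y i‖) atTop (nhds 0) := by simpa using hy.norm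
  have hcxy : Tendsto (fun i => ‖x i + y i‖) atTop (nhds 0) := by simpa using (hx.add hy).norm
  by_contra hlt
  push_neg at hlt
  set s := mu (fun i => ‖x i‖) a with hs
  set t := mu (fun i => ‖y i‖) b with ht
  set v := mu (fun i => ‖x i + y i‖) (a + b) with hv
  have hs0 : 0 ≤ s := mu_nonneg h0x a
  have ht0 : 0 ≤ t := mu_nonneg h0y b
  set d := (v - s - t)/3 with hd
  have hd0 : 0 < d := by rw [hd]; linarith
  have hNsub : Nf (fun i => ‖x i + y i‖) ((s+d) + (t+d)) ≤
      Nf (fun i => ‖x i‖) (s+d) + Nf (fun i => ‖y i‖) (t+d) := by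
    have hsub : {i | (s+d)+(t+d) < ‖x i + y i‖} ⊆
        {i | s+d < ‖x i‖} ∪ {i | t+d < ‖y i‖} := by
      intro i hi
      simp only [Set.mem_setOf_eq, Set.mem_union] at *
      by_contra h
      push_neg at h
      have := norm_add_le (x i) (y i)
      linarith [h.1, h.2]
    calc Nf (fun i => ‖x i + y i‖) ((s+d) + (t+d))
        ≤ ({i | s+d < ‖x i‖} ∪ {i | t+d < ‖y i‖}).ncard :=
          Set.ncard_le_ncard hsub ((finite_gt hcx (by linarith)).union (finite_gt hcy (by linarith)))
      _ ≤ _ := Set.ncard_union_le _ _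
  have hvgt : (s+d)+(t+d) < v := by linarith
  have h1 : a + b < Nf (fun i => ‖x i + y i‖) ((s+d)+(t+d)) :=
    (mu_gt_iff h0xy hcxy (by linarith) (a+b)).mp hvgt
  have h2 : Nf (fun i => ‖x i‖) (s+d) ≤ a := by
    by_contra h
    push_neg at h
    have := (mu_gt_iff h0x hcx (by linarith : (0:ℝ) < s+d) a).mpr h
    linarith
  have h3 : Nf (fun i => ‖y i‖) (t+d) ≤ b := by
    by_contra h
    push_neg at h
    have := (mu_gt_iff h0y hcy (by linarith : (0:ℝ) < t+d) b).mpr h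
    linarith
  omega

lemma exists_level {ω : ℝ} (hω0 : 0 < ω) (hω1 : ω < 1) {x : ℝ} (hx : 0 < x) (hx1 : x ≤ 1) :
    ∃ n : ℕ, ω ^ (n+1) < x ∧ x ≤ ω ^ n := by
  have hex : ∃ N : ℕ, ω ^ N < x := exists_pow_lt_of_lt_one hx hω1
  have hN0 : Nat.find hex ≠ 0 := by
    intro h
    have := Nat.find_spec hex
    rw [h, pow_zero] at this
    linarith
  obtain ⟨n, hn⟩ := Nat.exists_eq_succ_of_ne_zero hN0
  refine ⟨n, ?_, ?_⟩
  · have := Nat.find_spec hex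
    rw [hn] at this
    exact this
  · have := Nat.find_min hex (m := n) (by omega)
    linarith [le_of_not_gt this]


lemma ncard_prod_eq {A B : Type} {s : Set A} {t : Set B} (hs : s.Finite) (ht : t.Finite) :
    (s ×ˢ t).ncard = s.ncard * t.ncard := by
  have h1 : (hs.prod ht).toFinset = hs.toFinset ×ˢ ht.toFinset := by
    ext p; simp
  rw [Set.ncard_eq_toFinset_card _ (hs.prod ht), Set.ncard_eq_toFinset_card _ hs,
    Set.ncard_eq_toFinset_card _ ht, h1, Finset.card_product]

section Bridge

variable {β γ : ℕ → ℂ}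

lemma norm_c0 (hβ : β ∈ c0) : Tendsto (fun i => ‖β i‖) atTop (nhds 0) := by
  simpa using (hβ : Tendsto β atTop (nhds 0)).norm

lemma rearrSum_eq_fSum (β : ℕ → ℂ) (n : ℕ) : rearrSum β n = fSum (fun i => ‖β i‖) n := rfl

lemma rearr_eq_mu (hβ : β ∈ c0) (n : ℕ) : rearr β n = mu (fun i => ‖β i‖) n := by
  have h0 : ∀ i, 0 ≤ ‖β i‖ := fun i => norm_nonneg _
  have hc := norm_c0 hβ
  rw [rearr, rearrSum_eq_fSum, rearrSum_eq_fSum, fSum_eq h0 hc, fSum_eq h0 hc,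
    Finset.sum_range_succ]
  ring

/-- the tensor double sequence, pulled back to `ℕ`. -/
noncomputable def tseq (β γ : ℕ → ℂ) : ℕ → ℝ :=
  fun m => ‖β (Nat.pairEquiv.symm m).1‖ * ‖γ (Nat.pairEquiv.symm m).2‖

lemma tseq_nonneg (β γ : ℕ → ℂ) : ∀ m, 0 ≤ tseq β γ m :=
  fun m => mul_nonneg (norm_nonneg _) (norm_nonneg _)

lemma norm_le_mu_zero (hβ : β ∈ c0) (i : ℕ) : ‖β i‖ ≤ mu (fun i => ‖β i‖) 0 :=
  le_mu (fun i => norm_nonneg _) (norm_c0 hβ) (by simp [gset])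

lemma tseq_set_eq (β γ : ℕ → ℂ) (t : ℝ) :
    {m | t < tseq β γ m} = Nat.pairEquiv '' {p : ℕ × ℕ | t < ‖β p.1‖ * ‖γ p.2‖} := by
  ext m
  simp only [Set.mem_setOf_eq, Set.mem_image]
  constructor
  · intro h
    exact ⟨Nat.pairEquiv.symm m, h, Nat.pairEquiv.apply_symm_apply m⟩
  · rintro ⟨p, hp, rfl⟩
    simpa [tseq, Nat.pairEquiv, Nat.unpair_pair, Function.uncurry] using hp

lemma tseq_pairs_finite (hβ : β ∈ c0) (hγ : γ ∈ c0) {t : ℝ} (ht : 0 < t) :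
    {p : ℕ × ℕ | t < ‖β p.1‖ * ‖γ p.2‖}.Finite := by
  set bβ := mu (fun i => ‖β i‖) 0 with hbβ
  set bγ := mu (fun i => ‖γ i‖) 0 with hbγ
  by_cases hβ0 : bβ ≤ 0
  · convert Set.finite_empty
    ext p
    simp only [Set.mem_setOf_eq, Set.mem_empty_iff_false, iff_false, not_lt]
    have h1 : ‖β p.1‖ ≤ 0 := le_trans (norm_le_mu_zero hβ p.1) hβ0
    have := mul_nonneg (norm_nonneg (β p.1)) (norm_nonneg (γ p.2))
    nlinarith [norm_nonneg (β p.1), norm_nonneg (γ p.2),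
      mul_le_mul_of_nonneg_right (le_antisymm h1 (norm_nonneg _)).le (norm_nonneg (γ p.2))]
  by_cases hγ0 : bγ ≤ 0
  · convert Set.finite_empty
    ext p
    simp only [Set.mem_setOf_eq, Set.mem_empty_iff_false, iff_false, not_lt]
    have h1 : ‖γ p.2‖ ≤ 0 := le_trans (norm_le_mu_zero hγ p.2) hγ0
    have h2 : ‖γ p.2‖ = 0 := le_antisymm h1 (norm_nonneg _)
    rw [h2, mul_zero]
    exact le_of_lt ht
  push_neg at hβ0 hγ0
  have hsub : {p : ℕ × ℕ | t < ‖β p.1‖ * ‖γ p.2‖} ⊆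
      {i | t/bγ < ‖β i‖} ×ˢ {j | t/bβ < ‖γ j‖} := by
    rintro ⟨i, j⟩ hp
    simp only [Set.mem_setOf_eq] at hp
    constructor
    · simp only [Set.mem_setOf_eq]
      rw [div_lt_iff₀ hγ0]
      calc t < ‖β i‖ * ‖γ j‖ := hp
        _ ≤ ‖β i‖ * bγ := by
            apply mul_le_mul_of_nonneg_left (norm_le_mu_zero hγ j) (norm_nonneg _)
    · simp only [Set.mem_setOf_eq]
      rw [div_lt_iff₀ hβ0, mul_comm]
      calc t < ‖β i‖ * ‖γ j‖ := hp
        _ ≤ bβ * ‖γ j‖ := by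
            apply mul_le_mul_of_nonneg_right (norm_le_mu_zero hβ i) (norm_nonneg _)
  exact ((finite_gt (norm_c0 hβ) (div_pos ht hγ0)).prod
    (finite_gt (norm_c0 hγ) (div_pos ht hβ0))).subset hsub

lemma tseq_tendsto (hβ : β ∈ c0) (hγ : γ ∈ c0) :
    Tendsto (tseq β γ) atTop (nhds 0) := by
  apply tendsto_of_finite_gt (tseq_nonneg β γ)
  intro ε hε
  rw [tseq_set_eq]
  exact (tseq_pairs_finite hβ hγ hε).image _

lemma Nf_tseq (β γ : ℕ → ℂ) (t : ℝ) :
    Nf (tseq β γ) t = Set.ncard {p : ℕ × ℕ | t < ‖β p.1‖ * ‖γ p.2‖} := by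
  rw [Nf, tseq_set_eq, Set.ncard_image_of_injective _ Nat.pairEquiv.injective]

lemma tensorSum_eq_fSum (β γ : ℕ → ℂ) (n : ℕ) :
    tensorSum β γ n = fSum (tseq β γ) n := by
  rw [tensorSum, fSum]
  congr 1
  ext x
  simp only [Set.mem_image, Set.mem_setOf_eq]
  constructor
  · rintro ⟨F, hF, rfl⟩
    refine ⟨F.image Nat.pairEquiv, ?_, ?_⟩
    · rw [Finset.card_image_of_injective _ Nat.pairEquiv.injective, hF]
    · rw [Finset.sum_image (fun x _ y _ h => Nat.pairEquiv.injective h)]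
      apply Finset.sum_congr rfl
      intro p _
      simp [tseq, Nat.pairEquiv, Nat.unpair_pair, Function.uncurry]
  · rintro ⟨F, hF, rfl⟩
    refine ⟨F.image Nat.pairEquiv.symm, ?_, ?_⟩
    · rw [Finset.card_image_of_injective _ Nat.pairEquiv.symm.injective, hF]
    · rw [Finset.sum_image (fun x _ y _ h => Nat.pairEquiv.symm.injective h)]
      apply Finset.sum_congr rfl
      intro m _
      simp [tseq, Nat.pairEquiv.apply_symm_apply]

lemma tensorSeq_eq_mu (hβ : β ∈ c0) (hγ : γ ∈ c0) (n : ℕ) :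
    tensorSeq β γ n = mu (tseq β γ) n := by
  rw [tensorSeq, tensorSum_eq_fSum, tensorSum_eq_fSum,
    fSum_eq (tseq_nonneg β γ) (tseq_tendsto hβ hγ),
    fSum_eq (tseq_nonneg β γ) (tseq_tendsto hβ hγ), Finset.sum_range_succ]
  ring

lemma toC_c0 {h : ℕ → ℝ} (hh : Tendsto h atTop (nhds 0)) : toC h ∈ c0 := by
  have : Tendsto (fun n => ((h n : ℝ) : ℂ)) atTop (nhds ((0:ℝ):ℂ)) :=
    (Complex.continuous_ofReal.tendsto 0).comp hh
  simp only [Complex.ofReal_zero] at this; exact this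

lemma norm_toC {h : ℕ → ℝ} (h0 : ∀ n, 0 ≤ h n) : (fun i => ‖toC h i‖) = h := by
  funext i
  rw [toC, Complex.norm_real, Real.norm_eq_abs, abs_of_nonneg (h0 i)]

lemma rearr_toC_antitone {h : ℕ → ℝ} (ha : Antitone h) (h0 : ∀ n, 0 ≤ h n)
    (hc : Tendsto h atTop (nhds 0)) (n : ℕ) : rearr (toC h) n = h n := by
  rw [rearr_eq_mu (toC_c0 hc), norm_toC h0, mu_eq_self_of_antitone ha h0 hc]

end Bridge


section Main

variable {ω : ℝ} {α : ℕ → ℝ}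

/-- The candidate description of the principal Calkin space. -/
def Sset (α : ℕ → ℝ) : Set (ℕ → ℂ) :=
  {β | β ∈ c0 ∧ ∃ c : ℝ, 0 ≤ c ∧ ∃ k : ℕ, 0 < k ∧
    ∀ n, mu (fun i => ‖β i‖) n ≤ c * α (n / k)}

variable (hω0 : 0 < ω) (hω1 : ω < 1) (hαa : Antitone α) (hα0 : ∀ n, 0 ≤ α n)
  (hαc : Filter.Tendsto α atTop (nhds 0)) (hα1 : α 0 ≤ 1)

include hω0 hω1 hαa hα0 hαc hα1 in
lemma Nf_alpha_pow (n : ℕ) : Nf α (ω ^ (n+1)) = Ktil ω α n := by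
  have key : ∀ i : ℕ, Nf α (ω ^ (i+1)) = Nf α (ω ^ i) + Kw ω α i := by
    intro i
    have hdisj : Disjoint {m | ω ^ i < α m} {m : ℕ | ω ^ (i+1) < α m ∧ α m ≤ ω ^ i} := by
      rw [Set.disjoint_left]
      intro m hm1 hm2
      exact absurd hm2.2 (not_le.mpr hm1)
    have hunion : {m | ω ^ (i+1) < α m} =
        {m | ω ^ i < α m} ∪ {m : ℕ | ω ^ (i+1) < α m ∧ α m ≤ ω ^ i} := by
      ext m
      simp only [Set.mem_setOf_eq, Set.mem_union]
      constructor
      · intro h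
        rcases le_or_gt (α m) (ω ^ i) with h' | h'
        · exact Or.inr ⟨h, h'⟩
        · exact Or.inl h'
      · rintro (h | h)
        · exact lt_of_lt_of_le (pow_lt_pow_right_of_lt_one₀ hω0 hω1 (Nat.lt_succ_self i)) (le_of_lt h)
        · exact h.1
    have hf1 : {m | ω ^ i < α m}.Finite := finite_gt hαc (pow_pos hω0 i)
    have hf2 : {m : ℕ | ω ^ (i+1) < α m ∧ α m ≤ ω ^ i}.Finite := by
      apply (finite_gt hαc (pow_pos hω0 (i+1))).subset
      intro m hm; exact hm.1
    rw [Nf, hunion, Set.ncard_union_eq hdisj hf1 hf2]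
    rfl
  have base : Nf α (ω ^ 0) = 0 := by
    rw [pow_zero, Nf]
    convert Set.ncard_empty ℕ
    ext m
    simp only [Set.mem_setOf_eq, Set.mem_empty_iff_false, iff_false, not_lt]
    exact le_trans (hαa (Nat.zero_le m)) hα1
  induction n with
  | zero => rw [key 0, base, Ktil]; simp
  | succ n ih =>
    rw [key (n+1), ih]
    simp only [Ktil, Finset.sum_range_succ]

include hω0 hω1 hαa hα0 hαc hα1 in
lemma Nf_le_of_mu_bound {β : ℕ → ℂ} (hβ : β ∈ c0) {c : ℝ} (hc0 : 0 < c) {k : ℕ} (hk : 0 < k)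
    (hb : ∀ n, mu (fun i => ‖β i‖) n ≤ c * α (n / k)) (n : ℕ) :
    Nf (fun i => ‖β i‖) (c * ω ^ (n+1)) ≤ k * Ktil ω α n := by
  by_contra h
  push_neg at h
  set T := Ktil ω α n with hT
  have h0 : ∀ i, 0 ≤ ‖β i‖ := fun i => norm_nonneg _
  have ht : 0 < c * ω ^ (n+1) := mul_pos hc0 (pow_pos hω0 _)
  have h1 : c * ω ^ (n+1) < mu (fun i => ‖β i‖) (k * T) :=
    (mu_gt_iff h0 (norm_c0 hβ) ht _).mpr h
  have h2 : mu (fun i => ‖β i‖) (k * T) ≤ c * α ((k * T) / k) := hb _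
  rw [Nat.mul_div_cancel_left T hk] at h2
  have h3 : ω ^ (n+1) < α T := by
    have h5 := lt_of_lt_of_le h1 h2
    exact (mul_lt_mul_iff_right₀ hc0).mp h5
  have h4 : T < Nf α (ω ^ (n+1)) :=
    (antitone_gt_iff hαa hα0 hαc (pow_pos hω0 _) T).mp h3
  rw [Nf_alpha_pow hω0 hω1 hαa hα0 hαc hα1 n, ← hT] at h4
  omega

end Main


section Main2

variable {ω : ℝ} {α : ℕ → ℝ}
variable (hω0 : 0 < ω) (hω1 : ω < 1) (hαa : Antitone α) (hα0 : ∀ n, 0 ≤ α n)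
  (hαc : Filter.Tendsto α atTop (nhds 0)) (hα1 : α 0 ≤ 1)

include hαa hα0 hαc in
lemma Sset_isCalkin : IsCalkinSpace (Sset α) := by
  refine ⟨fun β hβ => hβ.1, ?_, ?_, ?_, ?_⟩
  · -- zero
    refine ⟨tendsto_const_nhds, 0, le_refl _, 1, Nat.one_pos, fun n => ?_⟩
    have : (fun i => ‖(0 : ℕ → ℂ) i‖) = (fun _ => (0:ℝ)) := by
      funext i; simp
    rw [this, mu_zero_fn, zero_mul]
  · -- add
    rintro x ⟨hxc, c, hc, k, hk, hx⟩ y ⟨hyc, c', hc', k', hk', hy⟩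
    refine ⟨(by show Filter.Tendsto (x + y) atTop (nhds 0); have h := (hxc.add hyc : Filter.Tendsto _ _ _); simp only [add_zero] at h; exact h), c + c', by linarith,
      2 * k * k', by positivity, fun n => ?_⟩
    have hsum : (fun i => ‖(x + y) i‖) = (fun i => ‖x i + y i‖) := rfl
    rw [hsum]
    have h1 : mu (fun i => ‖x i + y i‖) n ≤
        mu (fun i => ‖x i‖) (n/2) + mu (fun i => ‖y i‖) (n/2) := by
      have hmono := mu_antitone (f := fun i => ‖x i + y i‖) (fun i => norm_nonneg _)
        (by simpa using ((hxc.add hyc : Filter.Tendsto _ _ _).norm))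
      calc mu (fun i => ‖x i + y i‖) n ≤ mu (fun i => ‖x i + y i‖) (n/2 + n/2) :=
            hmono (by omega)
        _ ≤ _ := mu_add_le hxc hyc (n/2) (n/2)
    have h2 : mu (fun i => ‖x i‖) (n/2) ≤ c * α (n / (2*k*k')) := by
      calc mu (fun i => ‖x i‖) (n/2) ≤ c * α ((n/2) / k) := hx _
        _ ≤ c * α (n / (2*k*k')) := by
            apply mul_le_mul_of_nonneg_left _ hc
            apply hαa
            rw [Nat.div_div_eq_div_mul]
            apply Nat.div_le_div_left _ (by positivity)
            nlinarith [hk', hk]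
    have h3 : mu (fun i => ‖y i‖) (n/2) ≤ c' * α (n / (2*k*k')) := by
      calc mu (fun i => ‖y i‖) (n/2) ≤ c' * α ((n/2) / k') := hy _
        _ ≤ c' * α (n / (2*k*k')) := by
            apply mul_le_mul_of_nonneg_left _ hc'
            apply hαa
            rw [Nat.div_div_eq_div_mul]
            apply Nat.div_le_div_left _ (by positivity)
            nlinarith [hk', hk]
    calc mu (fun i => ‖(x+y) i‖) n ≤ _ := h1
      _ ≤ (c + c') * α (n / (2*k*k')) := by linarith [h2, h3]
  · -- smul
    rintro e x ⟨hxc, c, hc, k, hk, hx⟩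
    refine ⟨(by show Filter.Tendsto (e • x) atTop (nhds 0); have h := (hxc : Filter.Tendsto _ _ _).const_smul e; simp only [smul_zero] at h; exact h), ‖e‖ * c,
      mul_nonneg (norm_nonneg _) hc, k, hk, fun n => ?_⟩
    have hsm : (fun i => ‖(e • x) i‖) = (fun i => ‖e‖ * ‖x i‖) := by
      funext i
      simp [norm_smul]
    rw [hsm, mu_smul (fun i => norm_nonneg _) (norm_c0 hxc) (norm_nonneg e) n, mul_assoc]
    exact mul_le_mul_of_nonneg_left (hx n) (norm_nonneg e)
  · -- domination
    rintro x ⟨hxc, c, hc, k, hk, hx⟩ y hyc hdom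
    refine ⟨hyc, c, hc, k, hk, fun n => ?_⟩
    have := hdom n
    rw [rearr_eq_mu hyc, rearr_eq_mu hxc] at this
    exact le_trans this (hx n)

include hαa hα0 hαc hα1 in
lemma alpha_mem_Sset : toC α ∈ Sset α := by
  refine ⟨toC_c0 hαc, 1, zero_le_one, 1, Nat.one_pos, fun n => ?_⟩
  rw [norm_toC hα0, mu_eq_self_of_antitone hαa hα0 hαc, one_mul, Nat.div_one]

include hαa hα0 hαc in
lemma Sset_min {K : Set (ℕ → ℂ)} (hK : IsCalkinSpace K) (hαK : toC α ∈ K) :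
    Sset α ⊆ K := by
  obtain ⟨hKc0, hK0, hKadd, hKsmul, hKdom⟩ := hK
  -- the `i`-th of `k` disjoint copies of `α`
  intro β hβ
  obtain ⟨hβc, c, hc, k, hk, hβb⟩ := hβ
  set copy : ℕ → (ℕ → ℂ) := fun i => fun n => if n % k = i then ((α (n / k) : ℝ) : ℂ) else 0
    with hcopy
  have hdiv_tendsto : Filter.Tendsto (fun n : ℕ => α (n / k)) atTop (nhds 0) := by
    apply hαc.comp
    rw [tendsto_atTop_atTop]
    intro b
    exact ⟨k * b, fun n hn => (Nat.le_div_iff_mul_le hk).mpr (by linarith [hn])⟩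
  have hcopy_norm : ∀ i, (fun m => ‖copy i m‖) =
      (fun m => if m % k = i then α (m / k) else 0) := by
    intro i
    funext m
    by_cases h : m % k = i
    · simp [hcopy, h, Complex.norm_real, abs_of_nonneg (hα0 _)]
    · simp [hcopy, h]
  have hcopy_c0 : ∀ i, copy i ∈ c0 := by
    intro i
    apply squeeze_zero_norm (a := fun n : ℕ => α (n / k)) _ hdiv_tendsto
    intro n
    by_cases h : n % k = i
    · simp [hcopy, h, Complex.norm_real, abs_of_nonneg (hα0 _)]
    · simp [hcopy, h, hα0]
  have hcopy_fin0 : ∀ i, ∀ m, 0 ≤ (fun m => if m % k = i then α (m / k) else 0) m := by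
    intro i m
    by_cases h : m % k = i <;> simp [h, hα0]
  have hcopy_mem : ∀ i, copy i ∈ K := by
    intro i
    apply hKdom (toC α) hαK (copy i) (hcopy_c0 i)
    intro n
    rw [rearr_toC_antitone hαa hα0 hαc, rearr_eq_mu (hcopy_c0 i), hcopy_norm i]
    have hNle : ∀ t : ℝ, 0 < t →
        Nf (fun m => if m % k = i then α (m / k) else 0) t ≤ Nf α t := by
      intro t ht
      rw [Nf, Nf]
      set A := {m | t < (if m % k = i then α (m / k) else 0)} with hA
      have hmem : ∀ m ∈ A, m % k = i ∧ t < α (m / k) := by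
        intro m hm
        simp only [hA, Set.mem_setOf_eq] at hm
        by_cases h : m % k = i
        · exact ⟨h, by rwa [if_pos h] at hm⟩
        · rw [if_neg h] at hm; linarith
      have hinj : Set.InjOn (fun m => m / k) A := by
        intro m1 h1 m2 h2 he
        have e1 := (hmem m1 h1).1
        have e2 := (hmem m2 h2).1
        have d1 := Nat.div_add_mod m1 k
        have d2 := Nat.div_add_mod m2 k
        simp only at he
        rw [he] at d1
        omega
      calc A.ncard = ((fun m => m / k) '' A).ncard := (Set.ncard_image_of_injOn hinj).symm
        _ ≤ {j | t < α j}.ncard := by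
            apply Set.ncard_le_ncard _ (finite_gt hαc ht)
            rintro j ⟨m, hm, rfl⟩
            exact (hmem m hm).2
    have hcopy_tend : Filter.Tendsto (fun m => if m % k = i then α (m / k) else 0)
        atTop (nhds 0) := by
      apply squeeze_zero (hcopy_fin0 i) _ hdiv_tendsto
      intro m
      by_cases h : m % k = i
      · simp [h]
      · simp [h, hα0]
    calc mu (fun m => if m % k = i then α (m / k) else 0) n
        ≤ mu α n := mu_le_of_Nf_le (hcopy_fin0 i) hcopy_tend hα0 hαc hNle n
      _ = α n := mu_eq_self_of_antitone hαa hα0 hαc n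
  -- partial sums of the copies are in K
  have hsum_mem : ∀ j : ℕ, (fun n => ∑ i ∈ Finset.range j, copy i n) ∈ K := by
    intro j
    induction j with
    | zero =>
      have : (fun n : ℕ => ∑ i ∈ Finset.range 0, copy i n) = (0 : ℕ → ℂ) := by
        funext n; simp
      rw [this]; exact hK0
    | succ j ih =>
      have : (fun n : ℕ => ∑ i ∈ Finset.range (j+1), copy i n) =
          (fun n => ∑ i ∈ Finset.range j, copy i n) + copy j := by
        funext n
        exact Finset.sum_range_succ (fun i => copy i n) j
      rw [this]
      exact hKadd _ ih _ (hcopy_mem j)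
  have hDk_eq : (fun n => ∑ i ∈ Finset.range k, copy i n) =
      toC (fun n => α (n / k)) := by
    funext n
    rw [toC]
    calc ∑ i ∈ Finset.range k, copy i n
        = ∑ i ∈ Finset.range k, if n % k = i then ((α (n / k) : ℝ) : ℂ) else 0 := rfl
      _ = if n % k ∈ Finset.range k then ((α (n / k) : ℝ) : ℂ) else 0 :=
          Finset.sum_ite_eq (Finset.range k) (n % k) _
      _ = ((α (n / k) : ℝ) : ℂ) := if_pos (Finset.mem_range.mpr (Nat.mod_lt n hk))
  have hDk_mem : toC (fun n => α (n / k)) ∈ K := hDk_eq ▸ hsum_mem k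
  have hcDk_mem : toC (fun n => c * α (n / k)) ∈ K := by
    have : toC (fun n => c * α (n / k)) = ((c : ℂ)) • toC (fun n => α (n / k)) := by
      funext n
      simp [toC]
    rw [this]
    exact hKsmul _ _ hDk_mem
  -- domination
  apply hKdom _ hcDk_mem β hβc
  intro n
  have hanti : Antitone (fun n : ℕ => c * α (n / k)) := by
    intro a b hab
    exact mul_le_mul_of_nonneg_left (hαa (Nat.div_le_div_right hab)) hc
  have hnn : ∀ n : ℕ, 0 ≤ c * α (n / k) := fun n => mul_nonneg hc (hα0 _)
  have htend : Filter.Tendsto (fun n : ℕ => c * α (n / k)) atTop (nhds 0) := by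
    simpa using hdiv_tendsto.const_mul c
  rw [rearr_eq_mu hβc, rearr_toC_antitone hanti hnn htend]
  exact hβb n

end Main2


section Main3

variable {ω : ℝ} {α : ℕ → ℝ} {C : ℝ}
variable (hω0 : 0 < ω) (hω1 : ω < 1) (hαa : Antitone α) (hα0 : ∀ n, 0 ≤ α n)
  (hαc : Filter.Tendsto α atTop (nhds 0)) (hα1 : α 0 ≤ 1) (hC : 0 < C)
  (hgrowth : ∀ j : ℕ, 0 < j → ∀ n : ℕ,
      C * ((Ktil ω α n : ℝ)) ^ 2 ≤ (Kw ω α (n + j) : ℝ))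

set_option maxHeartbeats 1600000 in
include hω0 hω1 hαa hα0 hαc hα1 hC hgrowth in
lemma tensor_mem_Sset {β γ : ℕ → ℂ} (hβ : β ∈ Sset α) (hγ : γ ∈ Sset α) :
    toC (tensorSeq β γ) ∈ Sset α := by
  obtain ⟨hβc, c, hc, k, hk, hβb⟩ := hβ
  obtain ⟨hγc, c', hc', k', hk', hγb⟩ := hγ
  set c1 := c + 1 with hc1
  set c1' := c' + 1 with hc1'
  have hc1p : 0 < c1 := by linarith
  have hc1p' : 0 < c1' := by linarith
  have hβ1 : ∀ n, mu (fun i => ‖β i‖) n ≤ c1 * α (n / k) :=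
    fun n => le_trans (hβb n) (mul_le_mul_of_nonneg_right (by linarith) (hα0 _))
  have hγ1 : ∀ n, mu (fun i => ‖γ i‖) n ≤ c1' * α (n / k') :=
    fun n => le_trans (hγb n) (mul_le_mul_of_nonneg_right (by linarith) (hα0 _))
  set D : ℕ := ⌈C⁻¹⌉₊ + 1 with hD
  have hDpos : 0 < D := by omega
  have hDC : C⁻¹ ≤ (D : ℝ) := le_trans (Nat.le_ceil _) (by rw [hD]; push_cast; linarith)
  set k'' : ℕ := k * k' * D with hk''
  have hk''pos : 0 < k'' := by positivity
  set c'' : ℝ := c1 * c1' / ω ^ 2 with hc''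
  have hc''0 : 0 ≤ c'' := by positivity
  set g := tseq β γ with hg
  have h0g : ∀ m, 0 ≤ g m := tseq_nonneg β γ
  have hcg : Filter.Tendsto g atTop (nhds 0) := tseq_tendsto hβc hγc
  -- uniform bounds
  have hβbd : ∀ i, ‖β i‖ ≤ c1 := fun i => by
    calc ‖β i‖ ≤ mu (fun i => ‖β i‖) 0 := norm_le_mu_zero hβc i
      _ ≤ c1 * α (0 / k) := hβ1 0
      _ ≤ c1 * 1 := by
          apply mul_le_mul_of_nonneg_left _ (le_of_lt hc1p)
          calc α (0 / k) ≤ α 0 := hαa (Nat.zero_le _)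
            _ ≤ 1 := hα1
      _ = c1 := mul_one c1
  have hγbd : ∀ j, ‖γ j‖ ≤ c1' := fun j => by
    calc ‖γ j‖ ≤ mu (fun i => ‖γ i‖) 0 := norm_le_mu_zero hγc j
      _ ≤ c1' * α (0 / k') := hγ1 0
      _ ≤ c1' * 1 := by
          apply mul_le_mul_of_nonneg_left _ (le_of_lt hc1p')
          calc α (0 / k') ≤ α 0 := hαa (Nat.zero_le _)
            _ ≤ 1 := hα1
      _ = c1' := mul_one c1'
  have hgbd : ∀ p, g p ≤ c1 * c1' := by
    intro p
    exact mul_le_mul (hβbd _) (hγbd _) (norm_nonneg _) (le_of_lt hc1p)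
  -- the central estimate
  have hmain : ∀ m, mu g m ≤ c'' * α (m / k'') := by
    intro m
    rcases le_or_gt (mu g m) 0 with hv | hv
    · exact le_trans hv (mul_nonneg hc''0 (hα0 _))
    · set v := mu g m with hvdef
      have hvle : v ≤ c1 * c1' := hgbd _
      have hx1 : v / (c1 * c1') ≤ 1 := by
        rw [div_le_one (by positivity)]
        exact hvle
      have hx0 : 0 < v / (c1 * c1') := div_pos hv (by positivity)
      obtain ⟨n, hn1, hn2⟩ := exists_level hω0 hω1 hx0 hx1
      have ht : c1 * c1' * ω ^ (n+1) < v := by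
        have h := (lt_div_iff₀ (by positivity : (0:ℝ) < c1 * c1')).mp hn1
        nlinarith [h]
      have htpos : 0 < c1 * c1' * ω ^ (n+1) := by positivity
      have hm : m < Nf g (c1 * c1' * ω ^ (n+1)) :=
        (mu_gt_iff h0g hcg htpos m).mp ht
      -- counting estimate
      have hsub : {p : ℕ × ℕ | c1 * c1' * ω ^ (n+1) < ‖β p.1‖ * ‖γ p.2‖} ⊆
          {i | c1 * ω ^ (n+1) < ‖β i‖} ×ˢ {j | c1' * ω ^ (n+1) < ‖γ j‖} := by
        rintro ⟨i, j⟩ hp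
        simp only [Set.mem_setOf_eq] at hp
        have hωp : (0:ℝ) < ω ^ (n+1) := pow_pos hω0 _
        constructor
        · simp only [Set.mem_setOf_eq]
          by_contra hcon
          push_neg at hcon
          have : ‖β i‖ * ‖γ j‖ ≤ (c1 * ω ^ (n+1)) * c1' :=
            mul_le_mul hcon (hγbd j) (norm_nonneg _) (by positivity)
          nlinarith
        · simp only [Set.mem_setOf_eq]
          by_contra hcon
          push_neg at hcon
          have : ‖β i‖ * ‖γ j‖ ≤ c1 * (c1' * ω ^ (n+1)) :=
            mul_le_mul (hβbd i) hcon (norm_nonneg _) (by positivity)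
          nlinarith
      have hfinA : {i | c1 * ω ^ (n+1) < ‖β i‖}.Finite :=
        finite_gt (norm_c0 hβc) (by positivity)
      have hfinB : {j | c1' * ω ^ (n+1) < ‖γ j‖}.Finite :=
        finite_gt (norm_c0 hγc) (by positivity)
      set T := Ktil ω α n with hT
      have hcount : Nf g (c1 * c1' * ω ^ (n+1)) ≤ (k * T) * (k' * T) := by
        rw [hg, Nf_tseq]
        calc {p : ℕ × ℕ | c1 * c1' * ω ^ (n+1) < ‖β p.1‖ * ‖γ p.2‖}.ncard
            ≤ ({i | c1 * ω ^ (n+1) < ‖β i‖} ×ˢ {j | c1' * ω ^ (n+1) < ‖γ j‖}).ncard :=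
              Set.ncard_le_ncard hsub (hfinA.prod hfinB)
          _ = {i | c1 * ω ^ (n+1) < ‖β i‖}.ncard * {j | c1' * ω ^ (n+1) < ‖γ j‖}.ncard :=
              ncard_prod_eq hfinA hfinB
          _ ≤ (k * T) * (k' * T) := by
              apply Nat.mul_le_mul
              · exact Nf_le_of_mu_bound hω0 hω1 hαa hα0 hαc hα1 hβc hc1p hk hβ1 n
              · exact Nf_le_of_mu_bound hω0 hω1 hαa hα0 hαc hα1 hγc hc1p' hk' hγ1 n
      have hTD : T * T ≤ D * Kw ω α (n+1) := by
        have h1 : C * (T:ℝ)^2 ≤ (Kw ω α (n+1) : ℝ) := by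
          have := hgrowth 1 Nat.one_pos n
          simpa using this
        have h2 : ((T * T : ℕ) : ℝ) ≤ ((D * Kw ω α (n+1) : ℕ) : ℝ) := by
          push_cast
          have h3 : (T:ℝ)^2 ≤ (Kw ω α (n+1) : ℝ) / C := (le_div_iff₀' hC).mpr h1
          have h4 : (Kw ω α (n+1) : ℝ) / C ≤ (D:ℝ) * (Kw ω α (n+1) : ℝ) := by
            rw [div_eq_mul_inv, mul_comm ((Kw ω α (n+1) : ℝ)) C⁻¹]
            exact mul_le_mul_of_nonneg_right hDC (Nat.cast_nonneg _)
          have hTT : (T:ℝ) * (T:ℝ) = (T:ℝ)^2 := by ring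
          have hDcast : ((D:ℕ):ℝ) = ((⌈C⁻¹⌉₊ : ℕ):ℝ) + 1 := by rw [hD]; push_cast; ring
          nlinarith [h3, h4, hTT, hDcast]
        exact_mod_cast h2
      have hKwKtil : Kw ω α (n+1) ≤ Ktil ω α (n+1) := by
        rw [Ktil]
        exact Finset.single_le_sum (f := fun i => Kw ω α i) (fun i _ => Nat.zero_le _)
          (Finset.self_mem_range_succ (n+1))
      have hchain : m < k'' * Ktil ω α (n+1) := by
        calc m < Nf g (c1 * c1' * ω ^ (n+1)) := hm
          _ ≤ (k * T) * (k' * T) := hcount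
          _ = k * k' * (T * T) := by ring
          _ ≤ k * k' * (D * Kw ω α (n+1)) := Nat.mul_le_mul_left _ hTD
          _ = k'' * Kw ω α (n+1) := by rw [hk'']; ring
          _ ≤ k'' * Ktil ω α (n+1) := Nat.mul_le_mul_left _ hKwKtil
      have hdiv : m / k'' < Ktil ω α (n+1) := by
        rw [Nat.div_lt_iff_lt_mul hk''pos]
        calc m < k'' * Ktil ω α (n+1) := hchain
          _ = Ktil ω α (n+1) * k'' := Nat.mul_comm _ _
      have hα_gt : ω ^ (n+2) < α (m / k'') := by
        rw [← Nf_alpha_pow hω0 hω1 hαa hα0 hαc hα1 (n+1)] at hdiv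
        exact (antitone_gt_iff hαa hα0 hαc (pow_pos hω0 _) _).mpr hdiv
      calc v ≤ c1 * c1' * ω ^ n := by
            have h := (div_le_iff₀ (by positivity : (0:ℝ) < c1 * c1')).mp hn2
            nlinarith [h]
        _ = c'' * ω ^ (n+2) := by
            rw [hc'']
            have hωne : ω ≠ 0 := ne_of_gt hω0
            field_simp
            ring
        _ ≤ c'' * α (m / k'') := mul_le_mul_of_nonneg_left (le_of_lt hα_gt) hc''0
  -- assemble membership
  have hts : tensorSeq β γ = mu g := funext (fun m => tensorSeq_eq_mu hβc hγc m)
  have hmu0 : ∀ m, 0 ≤ mu g m := mu_nonneg h0g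
  have hmut : Filter.Tendsto (mu g) atTop (nhds 0) := mu_tendsto_zero h0g hcg
  have hmua : Antitone (mu g) := mu_antitone h0g hcg
  refine ⟨?_, c'', hc''0, k'', hk''pos, fun n => ?_⟩
  · rw [hts]
    exact toC_c0 hmut
  · rw [hts, norm_toC hmu0, mu_eq_self_of_antitone hmua hmu0 hmut]
    exact hmain n

end Main3


section Main4

variable {ω : ℝ} {α : ℕ → ℝ}
variable (hω0 : 0 < ω) (hω1 : ω < 1) (hαa : Antitone α) (hα0 : ∀ n, 0 ≤ α n)
  (hαc : Filter.Tendsto α atTop (nhds 0)) (hα1 : α 0 ≤ 1)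

include hαa hα0 hαc in
lemma mu_tseq_alpha_ge (n : ℕ) :
    α 0 * α n ≤ mu (tseq (toC α) (toC α)) n := by
  set g0 := tseq (toC α) (toC α) with hg0
  have h0g : ∀ m, 0 ≤ g0 m := tseq_nonneg _ _
  have hcg : Filter.Tendsto g0 atTop (nhds 0) := tseq_tendsto (toC_c0 hαc) (toC_c0 hαc)
  have hval : ∀ p : ℕ × ℕ, g0 (Nat.pairEquiv p) = α p.1 * α p.2 := by
    intro p
    simp [hg0, tseq, Nat.pairEquiv, Nat.unpair_pair, Function.uncurry, toC,
      Complex.norm_real, abs_of_nonneg (hα0 _)]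
  rcases le_or_gt (α 0 * α n) 0 with h | h
  · exact le_trans h (mu_nonneg h0g n)
  by_contra hcon
  push_neg at hcon
  set t := (mu g0 n + α 0 * α n) / 2 with htdef
  have ht0 : 0 < t := by
    have := mu_nonneg h0g n
    rw [htdef]; linarith
  have ht1 : t < α 0 * α n := by rw [htdef]; linarith
  have ht2 : mu g0 n < t := by rw [htdef]; linarith
  have hinj : Function.Injective (fun j : ℕ => Nat.pairEquiv (0, j)) := by
    intro a b hab
    have := Nat.pairEquiv.injective hab
    exact (Prod.mk.injEq _ _ _ _).mp this |>.2
  set F := (Finset.range (n+1)).image (fun j : ℕ => Nat.pairEquiv (0, j)) with hF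
  have hFcard : F.card = n + 1 := by
    rw [hF, Finset.card_image_of_injective _ hinj, Finset.card_range]
  have hFsub : (↑F : Set ℕ) ⊆ {m | t < g0 m} := by
    intro m hm
    simp only [hF, Finset.coe_image, Set.mem_image, Finset.mem_coe,
      Finset.mem_range] at hm
    obtain ⟨j, hj, rfl⟩ := hm
    simp only [Set.mem_setOf_eq]
    have : α 0 * α n ≤ α 0 * α j :=
      mul_le_mul_of_nonneg_left (hαa (Nat.lt_succ_iff.mp hj))
        (hα0 0)
    rw [hval (0, j)]
    exact lt_of_lt_of_le ht1 this
  have hNt : n < Nf g0 t := by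
    have : n + 1 ≤ Nf g0 t := by
      calc n + 1 = F.card := hFcard.symm
        _ = (↑F : Set ℕ).ncard := (Set.ncard_coe_finset F).symm
        _ ≤ Nf g0 t := Set.ncard_le_ncard hFsub (finite_gt hcg ht0)
    omega
  exact absurd ((mu_gt_iff h0g hcg ht0 n).mpr hNt) (not_lt.mpr (le_of_lt ht2))

end Main4

end CalkinAux

/-- Let `α` be a nonincreasing null sequence of nonnegative reals with
`α₁ ≤ 1` and `ω ∈ (0,1)`.  If there is `C > 0` with
`K_{n+j}^{(ω)}(α) ≥ C (Σ_{i=0}^n K_i^{(ω)}(α))²` for every `j ≥ 1` and `n ≥ 0`, then the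
principal Calkin space `⟨α⟩` is stable. -/
theorem principal_stable_of_Kw_growth (ω : ℝ) (hω : ω ∈ Set.Ioo (0 : ℝ) 1) (α : ℕ → ℝ)
    (hαa : Antitone α) (hα0 : ∀ n, 0 ≤ α n)
    (hαc : Filter.Tendsto α Filter.atTop (nhds 0)) (hα1 : α 0 ≤ 1)
    (C : ℝ) (hC : 0 < C)
    (hgrowth : ∀ j : ℕ, 0 < j → ∀ n : ℕ,
      C * ((Ktil ω α n : ℝ)) ^ 2 ≤ (Kw ω α (n + j) : ℝ)) :
    IsStableCalkin (principalCalkin (toC α)) := by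
  obtain ⟨hω0, hω1⟩ := hω
  have hSc : IsCalkinSpace (CalkinAux.Sset α) := CalkinAux.Sset_isCalkin hαa hα0 hαc
  have hαS : toC α ∈ CalkinAux.Sset α := CalkinAux.alpha_mem_Sset hαa hα0 hαc hα1
  have hprin : principalCalkin (toC α) = CalkinAux.Sset α := by
    apply subset_antisymm
    · exact Set.sInter_subset_of_mem ⟨hSc, hαS⟩
    · exact Set.subset_sInter (fun K hK => CalkinAux.Sset_min hαa hα0 hαc hK.1 hK.2)
  have hαI : toC α ∈ principalCalkin (toC α) := Set.mem_sInter.mpr (fun K hK => hK.2)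
  constructor
  · rw [hprin]; exact hSc
  · apply subset_antisymm
    · have hmem : CalkinAux.Sset α ∈ {K | IsCalkinSpace K ∧
          ∀ β ∈ principalCalkin (toC α), ∀ γ ∈ principalCalkin (toC α),
            toC (tensorSeq β γ) ∈ K} := by
        refine ⟨hSc, fun β hβ γ hγ => ?_⟩
        rw [hprin] at hβ hγ
        exact CalkinAux.tensor_mem_Sset hω0 hω1 hαa hα0 hαc hα1 hC hgrowth hβ hγ
      intro x hx
      rw [hprin]
      exact hx _ hmem
    · apply Set.subset_sInter
      rintro K ⟨hKcal, hKten⟩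
      have htt : toC (tensorSeq (toC α) (toC α)) ∈ K := hKten _ hαI _ hαI
      have hαK : toC α ∈ K := by
        by_cases hα00 : α 0 = 0
        · have hzero : toC α = 0 := by
            funext i
            have hzi : α i = 0 := le_antisymm (hα00 ▸ hαa (Nat.zero_le i)) (hα0 i)
            simp [toC, hzi]
          rw [hzero]
          exact hKcal.2.1
        · have hα0pos : 0 < α 0 := lt_of_le_of_ne (hα0 0) (Ne.symm hα00)
          obtain ⟨hKc0, hK0, hKadd, hKsmul, hKdom⟩ := hKcal
          set g0 := CalkinAux.tseq (toC α) (toC α) with hg0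
          have h0g : ∀ m, 0 ≤ g0 m := CalkinAux.tseq_nonneg _ _
          have hcg : Filter.Tendsto g0 Filter.atTop (nhds 0) :=
            CalkinAux.tseq_tendsto (CalkinAux.toC_c0 hαc) (CalkinAux.toC_c0 hαc)
          have hts : tensorSeq (toC α) (toC α) = CalkinAux.mu g0 :=
            funext (fun m =>
              CalkinAux.tensorSeq_eq_mu (CalkinAux.toC_c0 hαc) (CalkinAux.toC_c0 hαc) m)
          set member := (((α 0)⁻¹ : ℝ) : ℂ) • toC (tensorSeq (toC α) (toC α)) with hmemdef
          have hmemK : member ∈ K := hKsmul _ _ htt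
          have hbase_c0 : toC (tensorSeq (toC α) (toC α)) ∈ c0 := by
            rw [hts]
            exact CalkinAux.toC_c0 (CalkinAux.mu_tendsto_zero h0g hcg)
          have hnormmem : (fun i => ‖member i‖) =
              (fun i => (α 0)⁻¹ * CalkinAux.mu g0 i) := by
            funext i
            rw [hmemdef]
            have : ((((α 0)⁻¹ : ℝ) : ℂ) • toC (tensorSeq (toC α) (toC α))) i =
                (((α 0)⁻¹ : ℝ) : ℂ) * toC (tensorSeq (toC α) (toC α)) i := rfl
            rw [this, norm_mul, Complex.norm_real, Real.norm_eq_abs,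
              abs_of_nonneg (inv_nonneg.mpr (hα0 0)), hts, toC, Complex.norm_real,
              Real.norm_eq_abs, abs_of_nonneg (CalkinAux.mu_nonneg h0g i)]
          have hfun0 : ∀ i, 0 ≤ (α 0)⁻¹ * CalkinAux.mu g0 i :=
            fun i => mul_nonneg (inv_nonneg.mpr (hα0 0)) (CalkinAux.mu_nonneg h0g i)
          have hfuna : Antitone (fun i => (α 0)⁻¹ * CalkinAux.mu g0 i) := by
            intro a b hab
            exact mul_le_mul_of_nonneg_left (CalkinAux.mu_antitone h0g hcg hab)
              (inv_nonneg.mpr (hα0 0))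
          have hfunt : Filter.Tendsto (fun i => (α 0)⁻¹ * CalkinAux.mu g0 i)
              Filter.atTop (nhds 0) := by
            simpa using (CalkinAux.mu_tendsto_zero h0g hcg).const_mul ((α 0)⁻¹)
          have hmember_c0 : member ∈ c0 := by
            rw [hmemdef]
            show Filter.Tendsto ((((α 0)⁻¹ : ℝ) : ℂ) • toC (tensorSeq (toC α) (toC α))) Filter.atTop (nhds 0)
            have h := (hbase_c0 : Filter.Tendsto _ _ _).const_smul (((α 0)⁻¹ : ℝ) : ℂ); simp only [smul_zero] at h; exact h
          apply hKdom member hmemK (toC α) (CalkinAux.toC_c0 hαc)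
          intro n
          rw [CalkinAux.rearr_toC_antitone hαa hα0 hαc,
            CalkinAux.rearr_eq_mu hmember_c0, hnormmem,
            CalkinAux.mu_eq_self_of_antitone hfuna hfun0 hfunt]
          have hlow : α 0 * α n ≤ CalkinAux.mu g0 n :=
            CalkinAux.mu_tseq_alpha_ge hαa hα0 hαc n
          calc α n = (α 0)⁻¹ * (α 0 * α n) := by
                field_simp
            _ ≤ (α 0)⁻¹ * CalkinAux.mu g0 n :=
                mul_le_mul_of_nonneg_left hlow (inv_nonneg.mpr (hα0 0))
      rw [hprin]
      exact CalkinAux.Sset_min hαa hα0 hαc hKcal hαK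
end
end
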